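/- arXiv:2301.07434 — 8 statements merged into one kernel-verified Lean document; each statement's English description precedes it below -/
import Mathlib

section
/- Let a > 1. Then there exists a constant C ≥ 0 such that for every z ∈ ℂ and every r ∈ ℂ satisfying r² = z² − 2iaz − 1 and 0 ≤ Arg(r) < π (i.e., r lies in the branch of the square root with argument in [0, π)), one has |r + az − i| ≤ C · min{|z|, |z|²}. -/
open Complex

lemma aux_sqrt (d b m : ℝ) (hd : 0 ≤ d) (hb : 0 ≤ b) (h : m ≤ d^2 + 2*b*d) :
    Real.sqrt (b^2 + m) - b ≤ d := by
  have h1 : Real.sqrt (b^2 + m) ≤ d + b := by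
    have h2 := Real.sqrt_le_sqrt (show b^2 + m ≤ (d+b)^2 by nlinarith)
    rwa [Real.sqrt_sq (by linarith)] at h2
  linarith

lemma aux_div (s d e C Q : ℝ) (hd : 0 < d) (hde : d ≤ e) (hsδ : s * e ≤ C * d * Q)
    (hs : 0 ≤ s) : s ≤ C * Q := by
  nlinarith [mul_le_mul_of_nonneg_left hde hs]

/-- Lemma 3.1 of the paper. For `a > 1` there is `C ≥ 0` such
that whenever `r² = z² - 2iaz - 1` and `r` lies in the branch of the square root
with argument in `[0, π)`, one has `|r + az - i| ≤ C · min{|z|, |z|²}`. -/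
theorem statement3 (a : ℝ) (ha : 1 < a) :
    ∃ C : ℝ, 0 ≤ C ∧ ∀ z r : ℂ,
      r ^ 2 = z ^ 2 - 2 * Complex.I * (a : ℂ) * z - 1 →
      0 ≤ r.arg → r.arg < Real.pi →
      ‖r + (a : ℂ) * z - Complex.I‖ ≤
        C * min ‖z‖ (‖z‖ ^ 2) := by
  have ha0 : (0:ℝ) < a := by linarith
  have ha2 : (0:ℝ) < a^2 - 1 := by nlinarith
  set c1 : ℝ := Real.sqrt ((a+1)^2 + (a^2-1)) - (a+1) with hc1def
  set c2 : ℝ := min (1/2) (Real.sqrt ((a+1)^2 + (a^2-1)/(4*a^2)) - (a+1)) with hc2def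
  have hc1 : 0 < c1 := by
    have : (a+1) < Real.sqrt ((a+1)^2 + (a^2-1)) :=
      (Real.lt_sqrt (by positivity)).mpr (by nlinarith)
    simp only [hc1def]; linarith
  have hc2 : 0 < c2 := by
    have hpos : 0 < (a^2-1)/(4*a^2) := by positivity
    have h2 : (a+1) < Real.sqrt ((a+1)^2 + (a^2-1)/(4*a^2)) :=
      (Real.lt_sqrt (by positivity)).mpr (by linarith)
    simp only [hc2def, lt_min_iff]
    exact ⟨by norm_num, by linarith⟩
  refine ⟨max ((a^2-1)/c1) ((a^2-1)/c2), le_trans (by positivity) (le_max_left _ _), ?_⟩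
  set C : ℝ := max ((a^2-1)/c1) ((a^2-1)/c2) with hCdef
  have hCc1 : a^2 - 1 ≤ C * c1 := by
    have h := le_max_left ((a^2-1)/c1) ((a^2-1)/c2)
    calc a^2 - 1 = (a^2-1)/c1 * c1 := by field_simp
    _ ≤ C * c1 := mul_le_mul_of_nonneg_right h hc1.le
  have hCc2 : a^2 - 1 ≤ C * c2 := by
    have h := le_max_right ((a^2-1)/c1) ((a^2-1)/c2)
    calc a^2 - 1 = (a^2-1)/c2 * c2 := by field_simp
    _ ≤ C * c2 := mul_le_mul_of_nonneg_right h hc2.le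
  have hC0 : 0 ≤ C := le_trans (by positivity) (le_max_left _ _)
  intro z r hr harg1 _
  have him : 0 ≤ r.im := Complex.arg_nonneg_iff.mp harg1
  set M : ℝ := ‖z‖ with hMdef
  have hM0 : 0 ≤ M := norm_nonneg z
  set s : ℝ := ‖r + (a:ℂ)*z - I‖ with hsdef
  set d : ℝ := ‖r - (a:ℂ)*z + I‖ with hddef
  have hs0 : 0 ≤ s := norm_nonneg _
  have hd0 : 0 ≤ d := norm_nonneg _
  have key : (r + (a:ℂ)*z - I) * (r - (a:ℂ)*z + I) = ((a^2 - 1 : ℝ) : ℂ) * (-(z^2)) := by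
    push_cast
    linear_combination hr - Complex.I_sq
  have habs : s * d = (a^2-1) * M^2 := by
    have h := congrArg (‖·‖) key
    rw [norm_mul, norm_mul, norm_neg, norm_pow, Complex.norm_real, Real.norm_eq_abs,
      _root_.abs_of_nonneg ha2.le] at h
    exact h
  have hsub : ‖2*(a:ℂ)*z - 2*I‖ ≤ 2*a*M + 2 := by
    rw [sub_eq_add_neg]
    refine le_trans (norm_add_le _ _) ?_
    rw [norm_neg]
    have h1 : ‖2*(a:ℂ)*z‖ = 2*a*M := by
      rw [show (2*(a:ℂ)*z) = ((2*a : ℝ):ℂ) * z by push_cast; ring, norm_mul,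
        Complex.norm_real, Real.norm_eq_abs, _root_.abs_of_nonneg (by linarith)]
    have h2 : ‖2*I‖ = 2 := by simp
    rw [h1, h2]
  have htri : s ≤ d + (2*a*M + 2) := by
    have h : r + (a:ℂ)*z - I = (r - (a:ℂ)*z + I) + (2*(a:ℂ)*z - 2*I) := by ring
    calc s = ‖(r - (a:ℂ)*z + I) + (2*(a:ℂ)*z - 2*I)‖ := by rw [hsdef, h]
    _ ≤ d + ‖2*(a:ℂ)*z - 2*I‖ := norm_add_le _ _
    _ ≤ d + (2*a*M + 2) := by linarith
  by_cases hz : M ≤ 1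
  · -- small z : min = M^2
    have hmin : min M (M^2) = M^2 := min_eq_right (by nlinarith)
    rw [hmin]
    have hdc2 : c2 ≤ d := by
      by_cases hzim : z.im ≤ 1/(2*a)
      · have him2 : (r - (a:ℂ)*z + I).im ≤ d := Complex.im_le_norm _
        have heq : (r - (a:ℂ)*z + I).im = r.im - a*z.im + 1 := by simp
        have hhalf : a * (1/(2*a)) = 1/2 := by field_simp
        have hmul : a * z.im ≤ a * (1/(2*a)) := mul_le_mul_of_nonneg_left hzim ha0.le
        have : (1:ℝ)/2 ≤ d := by rw [heq] at him2; linarith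
        exact le_trans (min_le_left _ _) this
      · push_neg at hzim
        have hMz : 1/(2*a) ≤ M := le_trans hzim.le (Complex.im_le_norm z)
        have hm : (a^2-1)/(4*a^2) ≤ (a^2-1)*M^2 := by
          rw [div_le_iff₀ (by positivity)]
          have h3 : 1/(2*a) * (1/(2*a)) ≤ M * M :=
            mul_le_mul hMz hMz (by positivity) hM0
          have h4 : 1/(2*a) * (1/(2*a)) = 1/(4*a^2) := by field_simp; ring
          rw [h4] at h3
          have h5 : (a^2-1) * (1/(4*a^2)) ≤ (a^2-1) * (M*M) :=
            mul_le_mul_of_nonneg_left h3 ha2.le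
          calc a^2-1 = (a^2-1) * (1/(4*a^2)) * (4*a^2) := by field_simp
          _ ≤ (a^2-1)*(M*M) * (4*a^2) := mul_le_mul_of_nonneg_right h5 (by positivity)
          _ = (a^2-1)*M^2 * (4*a^2) := by ring
        have hq : (a^2-1)/(4*a^2) ≤ d^2 + 2*(a+1)*d := by
          have h2 : s * d ≤ (d + (2*a*M+2)) * d := mul_le_mul_of_nonneg_right htri hd0
          have e2 : (2*a*d)*M ≤ (2*a*d)*1 :=
            mul_le_mul_of_nonneg_left hz (by positivity)
          have e3 : (2*d)*M ≤ (2*d)*1 :=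
            mul_le_mul_of_nonneg_left hz (by positivity)
          calc (a^2-1)/(4*a^2) ≤ (a^2-1)*M^2 := hm
          _ = s*d := habs.symm
          _ ≤ (d + (2*a*M+2))*d := h2
          _ = d^2 + (2*a*d)*M + 2*d := by ring
          _ ≤ d^2 + (2*a*d)*1 + 2*d := by linarith
          _ ≤ d^2 + 2*(a+1)*d := by ring_nf; linarith
        have h6 := aux_sqrt d (a+1) ((a^2-1)/(4*a^2)) hd0 (by linarith) hq
        exact le_trans (min_le_right _ _) h6
    refine aux_div s c2 d C (M^2) hc2 hdc2 ?_ hs0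
    rw [habs, show C*c2*(M^2) = (C*c2)*M^2 from by ring]
    exact mul_le_mul_of_nonneg_right hCc2 (sq_nonneg M)
  · push_neg at hz
    have hmin : min M (M^2) = M := min_eq_left (by nlinarith)
    rw [hmin]
    have hq : (a^2-1)*M^2 ≤ d^2 + 2*((a+1)*M)*d := by
      have h2 : s * d ≤ (d + (2*a*M+2)) * d := mul_le_mul_of_nonneg_right htri hd0
      have e2 : 1*(2*d) ≤ M*(2*d) := mul_le_mul_of_nonneg_right hz.le (by linarith)
      calc (a^2-1)*M^2 = s*d := habs.symm
      _ ≤ (d + (2*a*M+2))*d := h2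
      _ = d^2 + 2*a*M*d + 1*(2*d) := by ring
      _ ≤ d^2 + 2*a*M*d + M*(2*d) := by linarith
      _ = d^2 + 2*((a+1)*M)*d := by ring
    have hdc1 : c1 * M ≤ d := by
      have h := aux_sqrt d ((a+1)*M) ((a^2-1)*M^2) hd0 (by positivity) hq
      have hsq : Real.sqrt (((a+1)*M)^2 + (a^2-1)*M^2)
          = Real.sqrt ((a+1)^2 + (a^2-1)) * M := by
        rw [show ((a+1)*M)^2 + (a^2-1)*M^2 = ((a+1)^2 + (a^2-1)) * M^2 by ring,
          Real.sqrt_mul (by positivity), Real.sqrt_sq hM0]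
      rw [hsq] at h
      calc c1 * M = Real.sqrt ((a+1)^2 + (a^2-1)) * M - (a+1)*M := by rw [hc1def]; ring
      _ ≤ d := by linarith
    refine aux_div s (c1*M) d C M (by positivity) hdc1 ?_ hs0
    rw [habs, show C*(c1*M)*M = (C*c1)*M^2 from by ring]
    exact mul_le_mul_of_nonneg_right hCc1 (sq_nonneg M)
end

section
/- Let a > 1 and define f(z) = √(z² − 2iaz − 1) − az + i for z ∈ ℂ, where the square root is the branch with argument in [0, π). Then f has no zeros in ℂ, |f(z)| → ∞ as |z| → ∞, and consequently there exists a constant c > 0 such that |f(z)| ≥ c for all z ∈ ℂ. -/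
open Complex

/-- The branch `√w` of the complex square root with `Arg(√w) ∈ [0, π)`:
writing `w = |w| e^{iθ}` with `θ ∈ [0, 2π)`, set `√w = |w|^{1/2} e^{iθ/2}`. -/
noncomputable def cSqrt (w : ℂ) : ℂ :=
  (Real.sqrt ‖w‖ : ℂ) *
    Complex.exp (Complex.I *
      (((if 0 ≤ w.arg then w.arg else w.arg + 2 * Real.pi : ℝ) : ℂ) / 2))

lemma cSqrt_sq (w : ℂ) : (cSqrt w) ^ 2 = w := by
  unfold cSqrt
  set θ : ℝ := if 0 ≤ w.arg then w.arg else w.arg + 2 * Real.pi with hθ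
  have h1 : ((Real.sqrt (‖w‖) : ℂ) *
      Complex.exp (Complex.I * ((θ : ℂ) / 2))) ^ 2
      = ((‖w‖ : ℝ) : ℂ) * Complex.exp ((θ : ℂ) * Complex.I) := by
    have hs : ((Real.sqrt (‖w‖) : ℂ)) ^ 2 = ((‖w‖ : ℝ) : ℂ) := by
      rw [← Complex.ofReal_pow, Real.sq_sqrt (norm_nonneg w)]
    rw [mul_pow, hs, sq, ← Complex.exp_add]
    ring_nf
  rw [h1]
  have h2 : Complex.exp ((θ : ℂ) * Complex.I) = Complex.exp ((w.arg : ℂ) * Complex.I) := by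
    rw [hθ]
    split
    · rfl
    · push_cast
      rw [add_mul, Complex.exp_add]
      simp [Complex.exp_two_pi_mul_I]
  rw [h2, Complex.norm_mul_exp_arg_mul_I]

lemma cSqrt_im_nonneg (w : ℂ) : 0 ≤ (cSqrt w).im := by
  unfold cSqrt
  set θ : ℝ := if 0 ≤ w.arg then w.arg else w.arg + 2 * Real.pi with hθ
  have hθ0 : 0 ≤ θ := by
    rw [hθ]; split
    · assumption
    · nlinarith [Complex.neg_pi_lt_arg w, Real.pi_pos]
  have hθ2 : θ ≤ 2 * Real.pi := by
    rw [hθ]; split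
    · nlinarith [Complex.arg_le_pi w, Real.pi_pos]
    · nlinarith [Complex.arg_le_pi w]
  have he : Complex.I * ((θ : ℂ) / 2) = ((θ / 2 : ℝ) : ℂ) * Complex.I := by
    push_cast; ring
  rw [he]
  simp only [Complex.mul_im, Complex.ofReal_re, Complex.ofReal_im,
    Complex.exp_ofReal_mul_I_im, Complex.exp_ofReal_mul_I_re]
  have h1 : 0 ≤ Real.sin (θ / 2) := Real.sin_nonneg_of_nonneg_of_le_pi (by linarith) (by linarith)
  have h2 : 0 ≤ Real.sqrt (‖w‖) := Real.sqrt_nonneg _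
  nlinarith

lemma abs_cSqrt (w : ℂ) : ‖cSqrt w‖ = Real.sqrt (‖w‖) := by
  unfold cSqrt
  rw [norm_mul, Complex.norm_real, Complex.norm_exp]
  simp [Real.sqrt_nonneg, abs_of_nonneg]

/-- from the proof of Lemma 3.1. -/
theorem statement4 (a : ℝ) (ha : 1 < a) (f : ℂ → ℂ)
    (hf : ∀ z : ℂ, f z =
      cSqrt (z ^ 2 - 2 * Complex.I * (a : ℂ) * z - 1) - (a : ℂ) * z + Complex.I) :
    (∀ z : ℂ, f z ≠ 0) ∧
    (∀ M : ℝ, ∃ R : ℝ, ∀ z : ℂ, R ≤ ‖z‖ → M ≤ ‖f z‖) ∧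
    (∃ c : ℝ, 0 < c ∧ ∀ z : ℂ, c ≤ ‖f z‖) := by
  have ha0 : (0:ℝ) < a := by linarith
  -- bound on |w|
  have habsw : ∀ z : ℂ, ‖z ^ 2 - 2 * Complex.I * (a : ℂ) * z - 1‖
      ≤ (‖z‖ + a) ^ 2 := by
    intro z
    have h1 : ‖z ^ 2 - 2 * Complex.I * (a : ℂ) * z - 1‖
        ≤ ‖z ^ 2‖ + ‖2 * Complex.I * (a : ℂ) * z‖ + 1 := by
      calc ‖z ^ 2 - 2 * Complex.I * (a : ℂ) * z - 1‖
          ≤ ‖z ^ 2 - 2 * Complex.I * (a : ℂ) * z‖ + ‖(1 : ℂ)‖ := by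
            exact norm_sub_le _ _
        _ ≤ ‖z ^ 2‖ + ‖2 * Complex.I * (a : ℂ) * z‖ + 1 := by
            have := norm_sub_le (z ^ 2) (2 * Complex.I * (a : ℂ) * z)
            simp at this ⊢
            linarith
    have h2 : ‖z ^ 2‖ = ‖z‖ ^ 2 := by simp [sq]
    have h3 : ‖2 * Complex.I * (a : ℂ) * z‖ = 2 * a * ‖z‖ := by
      simp [map_mul, abs_of_pos ha0]
    nlinarith [norm_nonneg z, ha]
  -- bound on |cSqrt w|
  have hsq : ∀ z : ℂ, ‖cSqrt (z ^ 2 - 2 * Complex.I * (a : ℂ) * z - 1)‖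
      ≤ ‖z‖ + a := by
    intro z
    rw [abs_cSqrt]
    have h := Real.sqrt_le_sqrt (habsw z)
    rwa [Real.sqrt_sq (by positivity)] at h
  -- no zeros
  have hnz : ∀ z : ℂ, f z ≠ 0 := by
    intro z h
    have hez : cSqrt (z ^ 2 - 2 * Complex.I * (a : ℂ) * z - 1) = (a : ℂ) * z - Complex.I := by
      have := hf z
      rw [h] at this
      linear_combination -this
    have hw : z ^ 2 - 2 * Complex.I * (a : ℂ) * z - 1 = ((a : ℂ) * z - Complex.I) ^ 2 := by
      rw [← cSqrt_sq (z ^ 2 - 2 * Complex.I * (a : ℂ) * z - 1), hez]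
    have hz2 : ((a : ℂ) ^ 2 - 1) * z ^ 2 = 0 := by
      linear_combination -hw - Complex.I_sq
    have ha' : ((a : ℂ) ^ 2 - 1) ≠ 0 := by
      have : ((a : ℂ) ^ 2 - 1) = ((a ^ 2 - 1 : ℝ) : ℂ) := by push_cast; ring
      rw [this, Complex.ofReal_ne_zero]
      nlinarith
    have hz0 : z = 0 := by
      have := (mul_eq_zero.mp hz2).resolve_left ha'
      exact pow_eq_zero_iff (by norm_num) |>.mp this
    rw [hz0] at hez
    norm_num at hez
    have him := cSqrt_im_nonneg (-1 : ℂ)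
    rw [hez] at him
    simp at him
    linarith
  refine ⟨hnz, ?_, ?_⟩
  · -- growth at infinity
    intro M
    refine ⟨(M + a + 1) / (a - 1), fun z hz => ?_⟩
    have hfz : ‖f z‖ ≥ ‖(a : ℂ) * z - Complex.I‖
        - ‖cSqrt (z ^ 2 - 2 * Complex.I * (a : ℂ) * z - 1)‖ := by
      have h1 : (a : ℂ) * z - Complex.I
          - cSqrt (z ^ 2 - 2 * Complex.I * (a : ℂ) * z - 1) = -(f z) := by
        rw [hf z]; ring
      have h2 := norm_add_le ((a : ℂ) * z - Complex.I
          - cSqrt (z ^ 2 - 2 * Complex.I * (a : ℂ) * z - 1))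
          (cSqrt (z ^ 2 - 2 * Complex.I * (a : ℂ) * z - 1))
      rw [sub_add_cancel, h1, norm_neg] at h2
      linarith
    have h3 : a * ‖z‖ - 1 ≤ ‖(a : ℂ) * z - Complex.I‖ := by
      have h4 : ‖(a : ℂ) * z‖ ≤ ‖(a : ℂ) * z - Complex.I‖
          + ‖Complex.I‖ := by
        simpa using norm_add_le ((a : ℂ) * z - Complex.I) Complex.I
      simp [map_mul, abs_of_pos ha0] at h4
      simp [map_mul, abs_of_pos ha0]
      linarith
    have h5 := hsq z
    have h6 : (M + a + 1) / (a - 1) * (a - 1) ≤ ‖z‖ * (a - 1) := by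
      apply mul_le_mul_of_nonneg_right hz (by linarith)
    rw [div_mul_cancel₀ _ (by linarith : a - 1 ≠ 0)] at h6
    nlinarith
  · -- uniform lower bound
    refine ⟨min (1/2) ((a - 1) / (2 * a * (2 * a + 1))),
      lt_min (by norm_num) (div_pos (by linarith) (by positivity)), fun z => ?_⟩
    set c := min (1/2) ((a - 1) / (2 * a * (2 * a + 1))) with hc
    set t := ‖z‖ with ht
    rcases le_or_gt t (1 / (2 * a)) with hsmall | hbig
    · -- small |z|: use the imaginary part
      have him : (f z).im = (cSqrt (z ^ 2 - 2 * Complex.I * (a : ℂ) * z - 1)).im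
          - a * z.im + 1 := by
        rw [hf z]
        simp [Complex.sub_im, Complex.add_im, Complex.mul_im]
      have h1 := cSqrt_im_nonneg (z ^ 2 - 2 * Complex.I * (a : ℂ) * z - 1)
      have h2 : z.im ≤ t := le_trans (le_abs_self _) (Complex.abs_im_le_norm z)
      have h3 : a * z.im ≤ a * (1 / (2 * a)) :=
        mul_le_mul_of_nonneg_left (le_trans h2 hsmall) (le_of_lt ha0)
      have h4 : a * (1 / (2 * a)) = 1 / 2 := by
        field_simp
      have h5 : (1:ℝ)/2 ≤ (f z).im := by rw [him]; linarith [h3, h4]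
      have h6 : (f z).im ≤ ‖f z‖ :=
        le_trans (le_abs_self _) (Complex.abs_im_le_norm (f z))
      have h7 : c ≤ 1/2 := min_le_left _ _
      linarith
    · -- large |z|: use the conjugate factor identity
      have hid : f z * (cSqrt (z ^ 2 - 2 * Complex.I * (a : ℂ) * z - 1)
          + (a : ℂ) * z - Complex.I) = (1 - (a : ℂ) ^ 2) * z ^ 2 := by
        rw [hf z]
        linear_combination cSqrt_sq (z ^ 2 - 2 * Complex.I * (a : ℂ) * z - 1) - Complex.I_sq
      have habs : ‖f z‖ *
          ‖cSqrt (z ^ 2 - 2 * Complex.I * (a : ℂ) * z - 1)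
          + (a : ℂ) * z - Complex.I‖ = (a ^ 2 - 1) * t ^ 2 := by
        have := congrArg (‖·‖) hid
        rw [norm_mul, norm_mul] at this
        have h1 : ‖(1 : ℂ) - (a : ℂ) ^ 2‖ = a ^ 2 - 1 := by
          have : ((1 : ℂ) - (a : ℂ) ^ 2) = ((1 - a ^ 2 : ℝ) : ℂ) := by push_cast; ring
          rw [this, Complex.norm_real, Real.norm_eq_abs, abs_of_neg (by nlinarith)]
          ring
        rw [h1] at this
        rw [this, ht]
        simp [sq]
      have hD : ‖cSqrt (z ^ 2 - 2 * Complex.I * (a : ℂ) * z - 1)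
          + (a : ℂ) * z - Complex.I‖ ≤ (a + 1) * (t + 1) := by
        calc ‖cSqrt (z ^ 2 - 2 * Complex.I * (a : ℂ) * z - 1)
            + (a : ℂ) * z - Complex.I‖
            ≤ ‖cSqrt (z ^ 2 - 2 * Complex.I * (a : ℂ) * z - 1)
              + (a : ℂ) * z‖ + ‖Complex.I‖ := by
              simpa using norm_sub_le
                (cSqrt (z ^ 2 - 2 * Complex.I * (a : ℂ) * z - 1) + (a : ℂ) * z) Complex.I
          _ ≤ ‖cSqrt (z ^ 2 - 2 * Complex.I * (a : ℂ) * z - 1)‖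
              + ‖(a : ℂ) * z‖ + 1 := by
              have := norm_add_le
                (cSqrt (z ^ 2 - 2 * Complex.I * (a : ℂ) * z - 1)) ((a : ℂ) * z)
              simp at this ⊢
              linarith
          _ ≤ (t + a) + a * t + 1 := by
              have := hsq z
              simp [map_mul, abs_of_pos ha0, ← ht] at this ⊢
              linarith
          _ = (a + 1) * (t + 1) := by ring
      have hfnn : 0 ≤ ‖f z‖ := norm_nonneg _
      have hkey : (a ^ 2 - 1) * t ^ 2 ≤ ‖f z‖ * ((a + 1) * (t + 1)) := by
        rw [← habs]
        exact mul_le_mul_of_nonneg_left hD hfnn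
      have hc2 : c ≤ (a - 1) / (2 * a * (2 * a + 1)) := min_le_right _ _
      have hc0 : 0 ≤ c := le_of_lt (lt_min (by norm_num) (div_pos (by linarith) (by positivity)))
      have hc3 : c * (2 * a * (2 * a + 1)) ≤ a - 1 := by
        have h := mul_le_mul_of_nonneg_right hc2
          (le_of_lt (show (0:ℝ) < 2 * a * (2 * a + 1) by positivity))
        rwa [div_mul_cancel₀ _ (by positivity : (2 * a * (2 * a + 1) : ℝ) ≠ 0)] at h
      have ht0 : (0:ℝ) < t := lt_trans (by positivity) hbig
      have h2at : (0:ℝ) ≤ 2 * a * t - 1 := by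
        have := (div_lt_iff₀ (by positivity : (0:ℝ) < 2 * a)).mp hbig
        nlinarith
      have hQ : t + 1 ≤ 2 * a * (2 * a + 1) * t ^ 2 := by
        nlinarith [mul_nonneg h2at (mul_nonneg (by linarith : (0:ℝ) ≤ 2 * a + 1) ht0.le)]
      have h6 : c * (t + 1) ≤ (a - 1) * t ^ 2 := by
        calc c * (t + 1) ≤ c * (2 * a * (2 * a + 1) * t ^ 2) :=
              mul_le_mul_of_nonneg_left hQ hc0
          _ = (c * (2 * a * (2 * a + 1))) * t ^ 2 := by ring
          _ ≤ (a - 1) * t ^ 2 := mul_le_mul_of_nonneg_right hc3 (sq_nonneg t)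
      have h5 : c * ((a + 1) * (t + 1)) ≤ (a ^ 2 - 1) * t ^ 2 := by
        nlinarith [mul_le_mul_of_nonneg_left h6 (by linarith : (0:ℝ) ≤ a + 1)]
      have hpos : (0:ℝ) < (a + 1) * (t + 1) := by positivity
      have := le_trans h5 hkey
      exact le_of_mul_le_mul_right this hpos
end

section
/- Let a > 1 and for δ > 0 define G_δ(z) = (2/δ) e^{−1/δ} sinc(i/δ − az), where sinc(w) = sin(w)/w for w ≠ 0 and sinc(0) = 1. Then for every z ∈ ℂ one has |G_δ(z) − e^{iaz}| ≤ (e^{−2/δ} + aδ) e^{(a+1)|z|}. In particular G_δ converges to z ↦ e^{iaz} in 𝒜₁(ℂ) as δ → 0⁺. -/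
/-- Membership in the space `𝒜₁(ℂ)` of exponentially bounded entire functions. -/
def MemA1 (F : ℂ → ℂ) : Prop :=
  Differentiable ℂ F ∧ ∃ A B : ℝ, 0 ≤ A ∧ 0 ≤ B ∧
    ∀ z : ℂ, ‖F z‖ ≤ A * Real.exp (B * ‖z‖)

/-- Convergence `F n → G` in `𝒜₁(ℂ)` as `n → ∞`: for some `B ≥ 0`,
`sup_z |F n z - G z| e^{-B|z|} → 0`. -/
def TendstoA1 (F : ℕ → ℂ → ℂ) (G : ℂ → ℂ) : Prop :=
  ∃ B : ℝ, 0 ≤ B ∧ ∀ ε : ℝ, 0 < ε → ∃ N : ℕ, ∀ n ≥ N, ∀ z : ℂ,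
    ‖F n z - G z‖ ≤ ε * Real.exp (B * ‖z‖)

/-- Convergence `F δ → G` in `𝒜₁(ℂ)` as `δ → 0⁺`: for some `B ≥ 0`,
`sup_z |F δ z - G z| e^{-B|z|} → 0` as `δ → 0⁺`. -/
def TendstoA1Zero (F : ℝ → ℂ → ℂ) (G : ℂ → ℂ) : Prop :=
  ∃ B : ℝ, 0 ≤ B ∧ ∀ ε : ℝ, 0 < ε → ∃ δ₀ : ℝ, 0 < δ₀ ∧ ∀ δ : ℝ, 0 < δ → δ < δ₀ →
    ∀ z : ℂ, ‖F δ z - G z‖ ≤ ε * Real.exp (B * ‖z‖)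

/-- The sinus cardinalis: `sinc w = sin w / w` for `w ≠ 0` and `sinc 0 = 1`. -/
noncomputable def csinc (w : ℂ) : ℂ := if w = 0 then 1 else Complex.sin w / w


lemma exp_diff_bound (u v : ℂ) :
    ‖Complex.exp u - Complex.exp v‖ ≤
      ‖u - v‖ * Real.exp (max (‖u‖) (‖v‖)) := by
  set R := max (‖u‖) (‖v‖) with hR
  have hs : Convex ℝ (Metric.closedBall (0:ℂ) R) := convex_closedBall _ _
  have h := hs.norm_image_sub_le_of_norm_hasDerivWithin_le
    (f := Complex.exp) (f' := Complex.exp) (x := v) (y := u)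
    (fun x _ => (Complex.hasDerivAt_exp x).hasDerivWithinAt)
    (fun x hx => by
      simp only [Metric.mem_closedBall, dist_zero_right] at hx
      rw [Complex.norm_exp]
      exact Real.exp_le_exp.2 (((Complex.abs_re_le_norm x).trans' (le_abs_self _)).trans hx))
    (by simp only [Metric.mem_closedBall, Complex.dist_eq, sub_zero, hR]; exact le_max_right _ _)
    (by simp only [Metric.mem_closedBall, Complex.dist_eq, sub_zero, hR]; exact le_max_left _ _)
  simpa [mul_comm] using h



open intervalIntegral in
lemma rep (a δ : ℝ) (hδ : 0 < δ) (z : ℂ) :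
    (2 / (δ : ℂ)) * Complex.exp (-(1 / (δ : ℂ))) * csinc (Complex.I / (δ : ℂ) - (a : ℂ) * z)
      = ((2/δ : ℝ) : ℂ) * ∫ t in (0:ℝ)..1,
          Complex.exp (-(((2/δ : ℝ)) : ℂ) * t) * Complex.exp (Complex.I * a * z * (1 - 2 * t)) := by
  have hδC : (δ:ℂ) ≠ 0 := by exact_mod_cast hδ.ne'
  set c : ℝ := 2/δ with hc
  have hcC : ((c:ℝ) : ℂ) = 2 / (δ:ℂ) := by push_cast [hc]; ring
  set γ : ℂ := -((c:ℂ) + 2 * Complex.I * a * z) with hγdef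
  set w : ℂ := Complex.I / (δ:ℂ) - (a:ℂ) * z with hwdef
  have hint : (∫ t in (0:ℝ)..1,
      Complex.exp (-((c:ℝ) : ℂ) * t) * Complex.exp (Complex.I * a * z * (1 - 2 * t)))
      = Complex.exp (Complex.I * a * z) * ∫ t in (0:ℝ)..1, Complex.exp (γ * t) := by
    rw [← intervalIntegral.integral_const_mul]
    congr 1; funext t
    rw [← Complex.exp_add, ← Complex.exp_add]
    congr 1
    rw [hγdef]; ring
  have h2Iw : 2 * Complex.I * w = γ := by
    rw [hγdef, hwdef, hcC]
    field_simp
    linear_combination Complex.I_mul_I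
  rw [hint]
  by_cases hγ : γ = 0
  · have h2I : (2 * Complex.I : ℂ) ≠ 0 := by simp [Complex.I_ne_zero]
    have hw : w = 0 := by
      have h := h2Iw; rw [hγ] at h
      exact (mul_eq_zero.mp h).resolve_left h2I
    have h0 : ((c:ℝ):ℂ) + 2 * Complex.I * a * z = 0 := by linear_combination hγdef - hγ
    rw [hcC] at h0
    have hiaz : Complex.I * (a:ℂ) * z = -(1 / (δ:ℂ)) := by
      field_simp at h0 ⊢
      linear_combination h0 / 2
    rw [hw, hγ]
    simp [csinc, hiaz, hcC]
  · have hw : w ≠ 0 := by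
      intro h0
      apply hγ
      rw [← h2Iw, h0, mul_zero]
    rw [integral_exp_mul_complex hγ]
    simp only [csinc, hw, if_false, mul_one, Complex.ofReal_zero, mul_zero, Complex.exp_zero]
    rw [show Complex.sin w = (Complex.exp (-w * Complex.I) - Complex.exp (w * Complex.I)) * Complex.I / 2 from rfl]
    rw [← h2Iw]
    have e1 : Complex.exp (-(1/(δ:ℂ))) * Complex.exp (-w * Complex.I)
        = Complex.exp (Complex.I * a * z) := by
      rw [← Complex.exp_add]; congr 1
      rw [hwdef]
      linear_combination (-(1/(δ:ℂ))) * Complex.I_mul_I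
    have e2 : Complex.exp (-(1/(δ:ℂ))) * Complex.exp (w * Complex.I)
        = Complex.exp (Complex.I * a * z) * Complex.exp (2 * Complex.I * w) := by
      rw [← Complex.exp_add, ← Complex.exp_add]; congr 1
      rw [hwdef]
      linear_combination (-(1/(δ:ℂ))) * Complex.I_mul_I
    have h2I : (2 * Complex.I * w : ℂ) ≠ 0 := by
      simp [Complex.I_ne_zero, hw]
    rw [hcC]
    field_simp
    rw [show (2*w*Complex.I*((1:ℝ):ℂ)) = 2*Complex.I*w by push_cast; ring, show (-(w*Complex.I)) = -w*Complex.I by ring]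
    linear_combination (Complex.exp (-(1/(δ:ℂ)))*(Complex.exp (-w*Complex.I) - Complex.exp (w*Complex.I))) * Complex.I_mul_I - e1 + e2


lemma texp_int (c : ℝ) (hc : 0 < c) :
    ∫ t in (0:ℝ)..1, t * Real.exp (-c*t) ≤ 1/c^2 := by
  have hF : ∀ t:ℝ, HasDerivAt (fun s : ℝ => -((s/c + 1/c^2) * Real.exp (-c*s)))
      (t * Real.exp (-c*t)) t := by
    intro t
    have h1 : HasDerivAt (fun s:ℝ => s/c + 1/c^2) (1/c) t :=
      ((hasDerivAt_id t).div_const c).add_const _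
    have h2 : HasDerivAt (fun s:ℝ => Real.exp (-c*s)) (Real.exp (-c*t) * (-c)) t := by
      simpa using ((hasDerivAt_id t).const_mul (-c)).exp
    have h3 : HasDerivAt (fun s:ℝ => -((s/c + 1/c^2) * Real.exp (-c*s))) _ t := (h1.mul h2).neg
    convert h3 using 1
    field_simp
    ring
  have hInt : ∫ t in (0:ℝ)..1, t * Real.exp (-c*t)
      = (1/c^2) - (1/c + 1/c^2)*Real.exp (-c) := by
    rw [intervalIntegral.integral_eq_sub_of_hasDerivAt (fun t _ => hF t)
      (((continuous_id.mul ((Real.continuous_exp.comp (continuous_const.mul continuous_id)))).intervalIntegrable _ _))]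
    simp
    ring
  rw [hInt]
  have h4 : 0 < (1/c + 1/c^2)*Real.exp (-c) := by positivity
  linarith

lemma key (a : ℝ) (ha : 0 < a) (δ : ℝ) (hδ : 0 < δ) (z : ℂ) :
    ‖(2 / (δ : ℂ)) * Complex.exp (-(1 / (δ : ℂ))) *
        csinc (Complex.I / (δ : ℂ) - (a : ℂ) * z) - Complex.exp (Complex.I * (a : ℂ) * z)‖ ≤
      (Real.exp (-2 / δ) + a * δ) * Real.exp ((a + 1) * ‖z‖) := by
  have hrep := rep a δ hδ z
  obtain ⟨c, hcdef⟩ : ∃ c:ℝ, c = 2/δ := ⟨_, rfl⟩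
  rw [← hcdef] at hrep
  have hcpos : 0 < c := by rw [hcdef]; positivity
  have hr0 : 0 ≤ ‖z‖ := norm_nonneg z
  set E : ℂ := Complex.exp (Complex.I * (a:ℂ) * z) with hE
  have hEabs : ‖E‖ ≤ Real.exp (a * ‖z‖) := by
    rw [hE, Complex.norm_exp]
    apply Real.exp_le_exp.2
    have h1 : (Complex.I * (a:ℂ) * z).re = -(a * z.im) := by
      simp [Complex.mul_re, Complex.mul_im]
    rw [h1]
    have := Complex.abs_im_le_norm z
    have := neg_abs_le z.im
    nlinarith
  have contX : Continuous (fun t : ℝ => Complex.exp (Complex.I * a * z * (1 - 2 * (t:ℂ)))) := by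
    apply Complex.continuous_exp.comp
    fun_prop
  have contE : Continuous (fun t : ℝ => Complex.exp (-((c:ℝ):ℂ) * (t:ℂ))) := by
    apply Complex.continuous_exp.comp
    fun_prop
  have cont1 : Continuous (fun t : ℝ =>
      Complex.exp (-((c:ℝ):ℂ) * (t:ℂ)) * (Complex.exp (Complex.I * a * z * (1 - 2 * (t:ℂ))) - E)) :=
    contE.mul (contX.sub continuous_const)
  have hcne : ((c:ℝ):ℂ) ≠ 0 := by exact_mod_cast hcpos.ne'
  have hI2 : (∫ t in (0:ℝ)..1, Complex.exp (-((c:ℝ):ℂ) * (t:ℂ)) * E)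
      = ((1 - Complex.exp (-((c:ℝ):ℂ))) / ((c:ℝ):ℂ)) * E := by
    rw [intervalIntegral.integral_mul_const, integral_exp_mul_complex (neg_ne_zero.2 hcne)]
    simp only [Complex.ofReal_one, Complex.ofReal_zero, mul_one, mul_zero, Complex.exp_zero]
    rw [div_mul_eq_mul_div, div_mul_eq_mul_div, div_eq_div_iff (neg_ne_zero.2 hcne) hcne]
    ring
  have hIsub : (∫ t in (0:ℝ)..1,
        Complex.exp (-((c:ℝ):ℂ) * (t:ℂ)) * (Complex.exp (Complex.I * a * z * (1 - 2 * (t:ℂ))) - E))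
      = (∫ t in (0:ℝ)..1, Complex.exp (-((c:ℝ):ℂ) * (t:ℂ)) * Complex.exp (Complex.I * a * z * (1 - 2 * (t:ℂ))))
        - ∫ t in (0:ℝ)..1, Complex.exp (-((c:ℝ):ℂ) * (t:ℂ)) * E := by
    rw [← intervalIntegral.integral_sub (f := fun t : ℝ => Complex.exp (-((c:ℝ):ℂ) * (t:ℂ)) * Complex.exp (Complex.I * a * z * (1 - 2 * (t:ℂ))))
      (g := fun t : ℝ => Complex.exp (-((c:ℝ):ℂ) * (t:ℂ)) * E) ((contE.mul contX).intervalIntegrable _ _)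
      ((contE.mul continuous_const).intervalIntegrable _ _)]
    congr 1; funext t; ring
  have hsplit : (2 / (δ : ℂ)) * Complex.exp (-(1 / (δ : ℂ))) *
        csinc (Complex.I / (δ : ℂ) - (a : ℂ) * z) - E
      = ((c:ℝ):ℂ) * (∫ t in (0:ℝ)..1,
          Complex.exp (-((c:ℝ):ℂ) * (t:ℂ)) * (Complex.exp (Complex.I * a * z * (1 - 2 * (t:ℂ))) - E))
        - Complex.exp (-((c:ℝ):ℂ)) * E := by
    rw [hrep, hIsub, hI2]
    have key2 : ((c:ℝ):ℂ) * ((1 - Complex.exp (-((c:ℝ):ℂ))) / ((c:ℝ):ℂ) * E) = (1 - Complex.exp (-((c:ℝ):ℂ))) * E := by field_simp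
    rw [mul_sub, key2]; ring
  rw [hsplit]
  have hptwise : ∀ t ∈ Set.Icc (0:ℝ) 1,
      ‖Complex.exp (-((c:ℝ):ℂ) * (t:ℂ)) * (Complex.exp (Complex.I * a * z * (1 - 2 * (t:ℂ))) - E)‖
        ≤ (2 * a * ‖z‖ * Real.exp (a * ‖z‖)) * (t * Real.exp (-c * t)) := by
    intro t ht
    obtain ⟨ht0, ht1⟩ := ht
    rw [norm_mul]
    have habs1 : ‖Complex.exp (-((c:ℝ):ℂ) * (t:ℂ))‖ = Real.exp (-c * t) := by
      rw [Complex.norm_exp]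
      norm_num
    rw [habs1]
    have hd := exp_diff_bound (Complex.I * a * z * (1 - 2 * (t:ℂ))) (Complex.I * (a:ℂ) * z)
    have haC : ‖(a:ℂ)‖ = a := by rw [Complex.norm_real, Real.norm_eq_abs, abs_of_pos ha]
    have habsu : ‖Complex.I * a * z * (1 - 2 * (t:ℂ))‖ ≤ a * ‖z‖ := by
      rw [norm_mul, norm_mul, norm_mul, Complex.norm_I, haC]
      have h12 : ‖1 - 2 * (t:ℂ)‖ ≤ 1 := by
        have h : (1 - 2*(t:ℂ)) = ((1 - 2*t : ℝ) : ℂ) := by push_cast; ring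
        rw [h, Complex.norm_real, Real.norm_eq_abs, abs_le]
        constructor <;> linarith
      have hz : (0:ℝ) ≤ a * ‖z‖ := by positivity
      nlinarith [mul_le_mul_of_nonneg_left h12 hz]
    have habsv : ‖Complex.I * (a:ℂ) * z‖ ≤ a * ‖z‖ := by
      rw [norm_mul, norm_mul, Complex.norm_I, haC]
      nlinarith
    have hdiff : ‖Complex.I * a * z * (1 - 2 * (t:ℂ)) - Complex.I * (a:ℂ) * z‖
        = 2 * a * ‖z‖ * t := by
      have heq : Complex.I * a * z * (1 - 2 * (t:ℂ)) - Complex.I * (a:ℂ) * z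
          = Complex.I * a * z * (-2 * (t:ℂ)) := by ring
      rw [heq, norm_mul, norm_mul, norm_mul, Complex.norm_I, haC]
      have h2 : ‖-2 * (t:ℂ)‖ = 2 * t := by
        have h : (-2 * (t:ℂ)) = ((-2*t : ℝ) : ℂ) := by push_cast; ring
        rw [h, Complex.norm_real, Real.norm_eq_abs, abs_of_nonpos (by linarith)]
        ring
      rw [h2]
      ring
    have hmax : max (‖Complex.I * a * z * (1 - 2 * (t:ℂ))‖)
        (‖Complex.I * (a:ℂ) * z‖) ≤ a * ‖z‖ := max_le habsu habsv
    have hd2 : ‖Complex.exp (Complex.I * a * z * (1 - 2 * (t:ℂ))) - E‖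
        ≤ (2 * a * ‖z‖ * t) * Real.exp (a * ‖z‖) := by
      rw [hE]
      refine hd.trans ?_
      rw [hdiff]
      exact mul_le_mul_of_nonneg_left (Real.exp_le_exp.2 hmax) (by positivity)
    calc Real.exp (-c*t) * ‖Complex.exp (Complex.I * a * z * (1 - 2 * (t:ℂ))) - E‖
        ≤ Real.exp (-c*t) * ((2 * a * ‖z‖ * t) * Real.exp (a * ‖z‖)) :=
          mul_le_mul_of_nonneg_left hd2 (Real.exp_nonneg _)
      _ = (2 * a * ‖z‖ * Real.exp (a * ‖z‖)) * (t * Real.exp (-c * t)) := by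
          ring
  have hnormint : ‖∫ t in (0:ℝ)..1,
      Complex.exp (-((c:ℝ):ℂ) * (t:ℂ)) * (Complex.exp (Complex.I * a * z * (1 - 2 * (t:ℂ))) - E)‖
      ≤ (2 * a * ‖z‖ * Real.exp (a * ‖z‖)) * (1/c^2) := by
    refine (intervalIntegral.norm_integral_le_integral_norm (by norm_num : (0:ℝ) ≤ 1)).trans ?_
    have hmono : (∫ t in (0:ℝ)..1, ‖Complex.exp (-((c:ℝ):ℂ) * (t:ℂ)) * (Complex.exp (Complex.I * a * z * (1 - 2 * (t:ℂ))) - E)‖)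
        ≤ ∫ t in (0:ℝ)..1, (2 * a * ‖z‖ * Real.exp (a * ‖z‖)) * (t * Real.exp (-c * t)) := by
      apply intervalIntegral.integral_mono_on (by norm_num : (0:ℝ) ≤ 1)
        (cont1.norm.intervalIntegrable _ _)
        ((continuous_const.mul (continuous_id.mul (Real.continuous_exp.comp (continuous_const.mul continuous_id)))).intervalIntegrable _ _)
        hptwise
    refine hmono.trans ?_
    rw [intervalIntegral.integral_const_mul]
    exact mul_le_mul_of_nonneg_left (texp_int c hcpos) (by positivity)
  -- final combination
  have habs_sum : ‖((c:ℝ):ℂ) * (∫ t in (0:ℝ)..1,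
        Complex.exp (-((c:ℝ):ℂ) * (t:ℂ)) * (Complex.exp (Complex.I * a * z * (1 - 2 * (t:ℂ))) - E))
        - Complex.exp (-((c:ℝ):ℂ)) * E‖
      ≤ c * ((2 * a * ‖z‖ * Real.exp (a * ‖z‖)) * (1/c^2))
        + Real.exp (-c) * Real.exp (a * ‖z‖) := by
    refine (norm_sub_le _ _).trans ?_
    gcongr
    · rw [norm_mul, Complex.norm_real, Real.norm_eq_abs, abs_of_pos hcpos]
      exact mul_le_mul_of_nonneg_left hnormint hcpos.le
    · rw [norm_mul, Complex.norm_exp]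
      have : ((-((c:ℝ):ℂ)).re) = -c := by simp
      rw [this]
      exact mul_le_mul_of_nonneg_left hEabs (Real.exp_nonneg _)
  refine habs_sum.trans ?_
  have hzle : ‖z‖ ≤ Real.exp (‖z‖) := by
    have := Real.add_one_le_exp (‖z‖)
    linarith
  have h1le : (1:ℝ) ≤ Real.exp (‖z‖) := Real.one_le_exp hr0
  have hexp_split : Real.exp ((a+1) * ‖z‖)
      = Real.exp (a * ‖z‖) * Real.exp (‖z‖) := by
    rw [← Real.exp_add]; ring_nf
  have hcδ : 1/c = δ/2 := by rw [hcdef]; field_simp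
  have hec : Real.exp (-c) = Real.exp (-2/δ) := by rw [hcdef]; ring_nf
  rw [hexp_split, hec]
  have hterm1 : c * ((2 * a * ‖z‖ * Real.exp (a * ‖z‖)) * (1/c^2))
      = a * δ * (‖z‖ * Real.exp (a * ‖z‖)) := by
    rw [hcdef]
    field_simp
  rw [hterm1]
  have haδ : (0:ℝ) ≤ a * δ := by positivity
  have h2 : ‖z‖ * Real.exp (a * ‖z‖)
      ≤ Real.exp (‖z‖) * Real.exp (a * ‖z‖) :=
    mul_le_mul_of_nonneg_right hzle (Real.exp_nonneg _)
  have h3 : Real.exp (a * ‖z‖) * 1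
      ≤ Real.exp (a * ‖z‖) * Real.exp (‖z‖) :=
    mul_le_mul_of_nonneg_left h1le (Real.exp_nonneg _)
  nlinarith [mul_le_mul_of_nonneg_left h2 haδ,
    mul_le_mul_of_nonneg_left h3 (Real.exp_nonneg (-2/δ))]

/-- from the proof of Theorem 3.2. For `a > 1` and
`G_δ(z) = (2/δ) e^{-1/δ} sinc(i/δ - az)` one has
`|G_δ(z) - e^{iaz}| ≤ (e^{-2/δ} + aδ) e^{(a+1)|z|}`; in particular
`G_δ → z ↦ e^{iaz}` in `𝒜₁(ℂ)` as `δ → 0⁺`. -/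
theorem statement6 (a : ℝ) (ha : 1 < a) (G : ℝ → ℂ → ℂ)
    (hG : ∀ δ : ℝ, ∀ z : ℂ, G δ z = (2 / (δ : ℂ)) * Complex.exp (-(1 / (δ : ℂ))) *
      csinc (Complex.I / (δ : ℂ) - (a : ℂ) * z)) :
    (∀ δ : ℝ, 0 < δ → ∀ z : ℂ,
      ‖G δ z - Complex.exp (Complex.I * (a : ℂ) * z)‖ ≤
        (Real.exp (-2 / δ) + a * δ) * Real.exp ((a + 1) * ‖z‖)) ∧
    TendstoA1Zero G (fun z => Complex.exp (Complex.I * (a : ℂ) * z)) := by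
  constructor
  · intro δ hδ z
    rw [hG δ z]
    exact key a (by linarith) δ hδ z
  · refine ⟨a + 1, by linarith, fun ε hε => ⟨ε / (a + 1), by positivity, fun δ hδ hδ' z => ?_⟩⟩
    have hb := key a (by linarith) δ hδ z
    rw [hG δ z] at *
    refine hb.trans ?_
    have hsmall : Real.exp (-2/δ) + a * δ ≤ ε := by
      have h1 : 2/δ + 1 ≤ Real.exp (2/δ) := Real.add_one_le_exp _
      have h2 : Real.exp (-2/δ) ≤ δ/2 := by
        rw [show (-2/δ : ℝ) = -(2/δ) by ring, Real.exp_neg]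
        rw [inv_le_comm₀ (Real.exp_pos _) (by positivity)]
        calc (δ/2)⁻¹ = 2/δ := by field_simp
          _ ≤ Real.exp (2/δ) := by linarith
      have h3 : (a + 1) * δ < ε := (lt_div_iff₀' (by positivity)).1 hδ'
      nlinarith
    exact mul_le_mul_of_nonneg_right hsmall (Real.exp_nonneg _)
end

section
/- Let k0 > 0, a ∈ ℝ∖[−k0,k0], and for each n ∈ ℕ and j ∈ {0,…,n} let μ_{j,n} be a complex Borel measure on [−k0,k0] and C_j(n) ∈ ℂ, such that Σ_{j=0}^n C_j(n) ∫_{−k0}^{k0} (ik)^l dμ_{j,n}(k) = (ia)^l for every n ∈ ℕ and every l ∈ {0,…,n}. If there exist constants κ₁, κ₂ ≥ 0 such that |μ_{j,n}|([−k0,k0]) ≤ κ₁ⁿ and |C_j(n)| ≤ κ₂ⁿ for every n ∈ ℕ and j ∈ {0,…,n}, then the functions F_n(z) = Σ_{j=0}^n C_j(n) ∫_{−k0}^{k0} e^{ikz} dμ_{j,n}(k) satisfy F_n(z) = ∫_{−k0}^{k0} e^{ikz} dμ_n(k) with the complex Borel measure μ_n = Σ_{j=0}^n C_j(n) μ_{j,n},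 and F_n converges to z ↦ e^{iaz} in 𝒜₁(ℂ) as n → ∞; in particular the sequence F_n is superoscillating. -/
open MeasureTheory Complex Filter Set

/-- Integral of a complex-valued function against a complex Borel measure,
defined via the Jordan decompositions of the real and imaginary parts of the measure. -/
noncomputable def cmInt (μ : ComplexMeasure ℝ) (f : ℝ → ℂ) : ℂ :=
    ((∫ x, f x ∂((ComplexMeasure.re μ).toJordanDecomposition.posPart))
      - (∫ x, f x ∂((ComplexMeasure.re μ).toJordanDecomposition.negPart)))
    + Complex.I * ((∫ x, f x ∂((ComplexMeasure.im μ).toJordanDecomposition.posPart))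
      - (∫ x, f x ∂((ComplexMeasure.im μ).toJordanDecomposition.negPart)))

/-- The complex measure `μ` is supported in the set `S`. -/
def cmSupportedIn (μ : ComplexMeasure ℝ) (S : Set ℝ) : Prop :=
  ∀ B : Set ℝ, MeasurableSet B → Disjoint B S → μ B = 0

/-- Total variation `|μ|(B)` of a complex measure on a set `B`: the supremum of
`∑ |μ (P i)|` over finite disjoint families of measurable subsets of `B`. -/
noncomputable def cmVar (μ : ComplexMeasure ℝ) (B : Set ℝ) : ℝ :=
  sSup {r : ℝ | ∃ (n : ℕ) (P : Fin n → Set ℝ), (∀ i, MeasurableSet (P i)) ∧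
    Pairwise (Function.onFun Disjoint P) ∧ (∀ i, P i ⊆ B) ∧
    r = ∑ i, ‖μ (P i)‖}

open scoped NNReal ENNReal Nat Topology

namespace SO8

noncomputable def sInt (s : SignedMeasure ℝ) (f : ℝ → ℂ) : ℂ :=
  (∫ x, f x ∂s.toJordanDecomposition.posPart) - ∫ x, f x ∂s.toJordanDecomposition.negPart

def sSupp (s : SignedMeasure ℝ) (S : Set ℝ) : Prop :=
  ∀ B : Set ℝ, MeasurableSet B → Disjoint B S → s B = 0

lemma cmInt_eq (μ : ComplexMeasure ℝ) (f : ℝ → ℂ) :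
    cmInt μ f = sInt (ComplexMeasure.re μ) f + Complex.I * sInt (ComplexMeasure.im μ) f := rfl

lemma part_null {s : SignedMeasure ℝ} {S : Set ℝ} (hS : MeasurableSet S) (h : sSupp s S) :
    s.toJordanDecomposition.posPart Sᶜ = 0 ∧ s.toJordanDecomposition.negPart Sᶜ = 0 := by
  obtain ⟨i, hi₁, hi₂, hi₃, hpos, hneg⟩ := s.toJordanDecomposition_spec
  constructor
  · rw [hpos, SignedMeasure.toMeasureOfZeroLE_apply _ hi₂ hi₁ hS.compl]
    have h0 : s (i ∩ Sᶜ) = 0 :=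
      h _ (hi₁.inter hS.compl) (disjoint_compl_left.mono_left Set.inter_subset_right)
    simp [h0]
  · rw [hneg, SignedMeasure.toMeasureOfLEZero_apply _ hi₃ hi₁.compl hS.compl]
    have h0 : s (iᶜ ∩ Sᶜ) = 0 :=
      h _ (hi₁.compl.inter hS.compl) (disjoint_compl_left.mono_left Set.inter_subset_right)
    simp [h0]

lemma integrable_of_null_compl {p : Measure ℝ} [IsFiniteMeasure p] {S : Set ℝ}
    (hSc : IsCompact S) (hp : p Sᶜ = 0) {f : ℝ → ℂ} (hf : Continuous f) :
    Integrable f p := by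
  have hr : p.restrict S = p := by
    refine Measure.restrict_eq_self_of_ae_mem ?_
    rw [MeasureTheory.ae_iff]
    exact hp
  have : IntegrableOn f S p := (hf.continuousOn).integrableOn_compact hSc
  rwa [IntegrableOn, hr] at this

lemma sSupp_integrable {s : SignedMeasure ℝ} {S : Set ℝ} (hSm : MeasurableSet S)
    (hSc : IsCompact S) (h : sSupp s S) {f : ℝ → ℂ} (hf : Continuous f) :
    Integrable f s.toJordanDecomposition.posPart ∧
      Integrable f s.toJordanDecomposition.negPart :=
  ⟨integrable_of_null_compl hSc (part_null hSm h).1 hf,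
   integrable_of_null_compl hSc (part_null hSm h).2 hf⟩

lemma integral_sub_eq {μ₁ ν₁ μ₂ ν₂ : Measure ℝ} [IsFiniteMeasure μ₁] [IsFiniteMeasure ν₁]
    [IsFiniteMeasure μ₂] [IsFiniteMeasure ν₂]
    (h : μ₁.toSignedMeasure - ν₁.toSignedMeasure = μ₂.toSignedMeasure - ν₂.toSignedMeasure)
    {f : ℝ → ℂ} (h₁ : Integrable f μ₁) (h₂ : Integrable f ν₁) (h₃ : Integrable f μ₂)
    (h₄ : Integrable f ν₂) :
    (∫ x, f x ∂μ₁) - ∫ x, f x ∂ν₁ = (∫ x, f x ∂μ₂) - ∫ x, f x ∂ν₂ := by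
  have hm : μ₁ + ν₂ = μ₂ + ν₁ := by
    ext B hB
    have hB' := congrArg (fun v : SignedMeasure ℝ => v B) h
    simp only [VectorMeasure.sub_apply, Measure.toSignedMeasure_apply_measurable hB] at hB'
    have ht : (μ₁ B + ν₂ B).toReal = (μ₂ B + ν₁ B).toReal := by
      rw [ENNReal.toReal_add (measure_ne_top _ _) (measure_ne_top _ _),
        ENNReal.toReal_add (measure_ne_top _ _) (measure_ne_top _ _)]
      simp only [measureReal_def] at hB'
      linarith
    rw [Measure.add_apply, Measure.add_apply]
    exact (ENNReal.toReal_eq_toReal_iff' (by finiteness) (by finiteness)).1 ht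
  have hint : ∫ x, f x ∂(μ₁ + ν₂) = ∫ x, f x ∂(μ₂ + ν₁) := by rw [hm]
  rw [integral_add_measure h₁ h₄, integral_add_measure h₃ h₂] at hint
  linear_combination hint

lemma jd_eq (s : SignedMeasure ℝ) :
    s.toJordanDecomposition.posPart.toSignedMeasure -
      s.toJordanDecomposition.negPart.toSignedMeasure = s := by
  conv_rhs => rw [← s.toSignedMeasure_toJordanDecomposition]
  rfl

lemma sSupp_add {s t : SignedMeasure ℝ} {S : Set ℝ} (hs : sSupp s S) (ht : sSupp t S) :
    sSupp (s + t) S := by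
  intro B hB hd
  rw [VectorMeasure.add_apply, hs B hB hd, ht B hB hd, add_zero]

lemma sSupp_smul {s : SignedMeasure ℝ} {S : Set ℝ} (r : ℝ) (hs : sSupp s S) :
    sSupp (r • s) S := by
  intro B hB hd
  rw [VectorMeasure.smul_apply, hs B hB hd, smul_zero]

lemma sInt_add {s t : SignedMeasure ℝ} {S : Set ℝ} (hSm : MeasurableSet S) (hSc : IsCompact S)
    (hs : sSupp s S) (ht : sSupp t S) {f : ℝ → ℂ} (hf : Continuous f) :
    sInt (s + t) f = sInt s f + sInt t f := by
  obtain ⟨hs₁, hs₂⟩ := sSupp_integrable hSm hSc hs hf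
  obtain ⟨ht₁, ht₂⟩ := sSupp_integrable hSm hSc ht hf
  obtain ⟨hst₁, hst₂⟩ := sSupp_integrable hSm hSc (sSupp_add hs ht) hf
  have key : (∫ x, f x ∂(s + t).toJordanDecomposition.posPart)
      - ∫ x, f x ∂(s + t).toJordanDecomposition.negPart
      = (∫ x, f x ∂(s.toJordanDecomposition.posPart + t.toJordanDecomposition.posPart))
      - ∫ x, f x ∂(s.toJordanDecomposition.negPart + t.toJordanDecomposition.negPart) := by
    refine integral_sub_eq ?_ hst₁ hst₂ (hs₁.add_measure ht₁) (hs₂.add_measure ht₂)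
    rw [Measure.toSignedMeasure_add, Measure.toSignedMeasure_add, jd_eq]
    conv_lhs => rw [← jd_eq s, ← jd_eq t]
    abel
  rw [sInt, key, integral_add_measure hs₁ ht₁, integral_add_measure hs₂ ht₂]
  unfold sInt
  ring

lemma integral_nnreal_smul_measure (c : ℝ≥0) (p : Measure ℝ) (f : ℝ → ℂ) :
    ∫ x, f x ∂(c • p) = (c : ℝ) • ∫ x, f x ∂p := by
  have : (c • p) = ((c : ℝ≥0∞) • p) := rfl
  rw [this, integral_smul_measure]
  simp

lemma sInt_smul (r : ℝ) (s : SignedMeasure ℝ) (f : ℝ → ℂ) :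
    sInt (r • s) f = (r : ℂ) * sInt s f := by
  rcases le_or_gt 0 r with hr | hr
  · have hp : (r • s).toJordanDecomposition.posPart
        = r.toNNReal • s.toJordanDecomposition.posPart := by
      rw [s.toJordanDecomposition_smul_real r, JordanDecomposition.real_smul_posPart_nonneg _ _ hr]
    have hn : (r • s).toJordanDecomposition.negPart
        = r.toNNReal • s.toJordanDecomposition.negPart := by
      rw [s.toJordanDecomposition_smul_real r, JordanDecomposition.real_smul_negPart_nonneg _ _ hr]
    rw [sInt, hp, hn, integral_nnreal_smul_measure, integral_nnreal_smul_measure,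
      Real.coe_toNNReal _ hr]
    unfold sInt
    simp [Complex.real_smul]
    ring
  · have hp : (r • s).toJordanDecomposition.posPart
        = (-r).toNNReal • s.toJordanDecomposition.negPart := by
      rw [s.toJordanDecomposition_smul_real r, JordanDecomposition.real_smul_posPart_neg _ _ hr]
    have hn : (r • s).toJordanDecomposition.negPart
        = (-r).toNNReal • s.toJordanDecomposition.posPart := by
      rw [s.toJordanDecomposition_smul_real r, JordanDecomposition.real_smul_negPart_neg _ _ hr]
    rw [sInt, hp, hn, integral_nnreal_smul_measure, integral_nnreal_smul_measure,
      Real.coe_toNNReal _ (by linarith)]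
    unfold sInt
    simp [Complex.real_smul]
    ring

lemma sSupp_re {μ : ComplexMeasure ℝ} {S : Set ℝ} (h : cmSupportedIn μ S) :
    sSupp (ComplexMeasure.re μ) S := by
  intro B hB hd
  change (μ B).re = 0
  simp [ComplexMeasure.re_apply, h B hB hd]

lemma sSupp_im {μ : ComplexMeasure ℝ} {S : Set ℝ} (h : cmSupportedIn μ S) :
    sSupp (ComplexMeasure.im μ) S := by
  intro B hB hd
  change (μ B).im = 0
  simp [ComplexMeasure.im_apply, h B hB hd]

lemma re_csmul (c : ℂ) (μ : ComplexMeasure ℝ) :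
    ComplexMeasure.re (c • μ) = c.re • ComplexMeasure.re μ + (-c.im) • ComplexMeasure.im μ := by
  refine VectorMeasure.ext fun i hi => ?_
  change ((c • μ) i).re = c.re * (μ i).re + (-c.im) * (μ i).im
  simp only [ComplexMeasure.re_apply, ComplexMeasure.im_apply, VectorMeasure.add_apply,
    VectorMeasure.smul_apply, smul_eq_mul, Complex.mul_re,
    VectorMeasure.mapRange_apply, LinearMap.toAddMonoidHom_coe, Complex.reLm_coe,
    Complex.imLm_coe]
  ring

lemma im_csmul (c : ℂ) (μ : ComplexMeasure ℝ) :
    ComplexMeasure.im (c • μ) = c.re • ComplexMeasure.im μ + c.im • ComplexMeasure.re μ := by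
  refine VectorMeasure.ext fun i hi => ?_
  change ((c • μ) i).im = c.re * (μ i).im + c.im * (μ i).re
  simp only [ComplexMeasure.re_apply, ComplexMeasure.im_apply, VectorMeasure.add_apply,
    VectorMeasure.smul_apply, smul_eq_mul, Complex.mul_im,
    VectorMeasure.mapRange_apply, LinearMap.toAddMonoidHom_coe, Complex.reLm_coe,
    Complex.imLm_coe]

lemma cmSupp_add {μ ν : ComplexMeasure ℝ} {S : Set ℝ} (hμ : cmSupportedIn μ S)
    (hν : cmSupportedIn ν S) : cmSupportedIn (μ + ν) S := by
  intro B hB hd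
  rw [VectorMeasure.add_apply, hμ B hB hd, hν B hB hd, add_zero]

lemma cmSupp_smul {μ : ComplexMeasure ℝ} {S : Set ℝ} (c : ℂ) (hμ : cmSupportedIn μ S) :
    cmSupportedIn (c • μ) S := by
  intro B hB hd
  rw [VectorMeasure.smul_apply, hμ B hB hd, smul_zero]

lemma cmSupp_sum {S : Set ℝ} (t : Finset ℕ) (ms : ℕ → ComplexMeasure ℝ)
    (h : ∀ j ∈ t, cmSupportedIn (ms j) S) : cmSupportedIn (∑ j ∈ t, ms j) S := by
  classical
  induction t using Finset.cons_induction with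
  | empty => intro B hB hd; simp
  | cons a t ha ih =>
    rw [Finset.sum_cons]
    exact cmSupp_add (h a (Finset.mem_cons_self a t))
      (ih fun j hj => h j (Finset.mem_cons_of_mem hj))

lemma cmInt_zero (f : ℝ → ℂ) : cmInt 0 f = 0 := by
  unfold cmInt
  rw [map_zero ComplexMeasure.re, map_zero ComplexMeasure.im,
    SignedMeasure.toJordanDecomposition_zero]
  simp

lemma cmInt_add_measure {μ ν : ComplexMeasure ℝ} {S : Set ℝ} (hSm : MeasurableSet S)
    (hSc : IsCompact S) (hμ : cmSupportedIn μ S) (hν : cmSupportedIn ν S)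
    {f : ℝ → ℂ} (hf : Continuous f) :
    cmInt (μ + ν) f = cmInt μ f + cmInt ν f := by
  have hre : ComplexMeasure.re (μ + ν) = ComplexMeasure.re μ + ComplexMeasure.re ν :=
    map_add _ _ _
  have him : ComplexMeasure.im (μ + ν) = ComplexMeasure.im μ + ComplexMeasure.im ν :=
    map_add _ _ _
  rw [cmInt_eq, cmInt_eq, cmInt_eq, hre, him,
    sInt_add hSm hSc (sSupp_re hμ) (sSupp_re hν) hf,
    sInt_add hSm hSc (sSupp_im hμ) (sSupp_im hν) hf]
  ring

lemma cmInt_smul_measure {μ : ComplexMeasure ℝ} {S : Set ℝ} (hSm : MeasurableSet S)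
    (hSc : IsCompact S) (c : ℂ) (hμ : cmSupportedIn μ S) {f : ℝ → ℂ} (hf : Continuous f) :
    cmInt (c • μ) f = c * cmInt μ f := by
  rw [cmInt_eq, cmInt_eq, re_csmul, im_csmul,
    sInt_add hSm hSc (sSupp_smul _ (sSupp_re hμ)) (sSupp_smul _ (sSupp_im hμ)) hf,
    sInt_add hSm hSc (sSupp_smul _ (sSupp_im hμ)) (sSupp_smul _ (sSupp_re hμ)) hf,
    sInt_smul, sInt_smul, sInt_smul, sInt_smul]
  conv_rhs => rw [← Complex.re_add_im c]
  push_cast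
  ring_nf
  linear_combination (-(c.im : ℂ) * sInt (ComplexMeasure.im μ) f) * Complex.I_sq

lemma cmInt_sum_measure {S : Set ℝ} (hSm : MeasurableSet S) (hSc : IsCompact S)
    (t : Finset ℕ) (c : ℕ → ℂ) (ms : ℕ → ComplexMeasure ℝ)
    (h : ∀ j ∈ t, cmSupportedIn (ms j) S) {f : ℝ → ℂ} (hf : Continuous f) :
    cmInt (∑ j ∈ t, c j • ms j) f = ∑ j ∈ t, c j * cmInt (ms j) f := by
  classical
  induction t using Finset.cons_induction with
  | empty => simp [cmInt_zero]
  | cons a t ha ih =>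
    rw [Finset.sum_cons, Finset.sum_cons,
      cmInt_add_measure hSm hSc (cmSupp_smul _ (h a (Finset.mem_cons_self a t)))
        (cmSupp_sum t _ fun j hj => cmSupp_smul _ (h j (Finset.mem_cons_of_mem hj))) hf,
      cmInt_smul_measure hSm hSc _ (h a (Finset.mem_cons_self a t)) hf,
      ih fun j hj => h j (Finset.mem_cons_of_mem hj)]

lemma cm_integrable {μ : ComplexMeasure ℝ} {S : Set ℝ} (hSm : MeasurableSet S)
    (hSc : IsCompact S) (hμ : cmSupportedIn μ S) {f : ℝ → ℂ} (hf : Continuous f) :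
    Integrable f (ComplexMeasure.re μ).toJordanDecomposition.posPart ∧
    Integrable f (ComplexMeasure.re μ).toJordanDecomposition.negPart ∧
    Integrable f (ComplexMeasure.im μ).toJordanDecomposition.posPart ∧
    Integrable f (ComplexMeasure.im μ).toJordanDecomposition.negPart :=
  ⟨(sSupp_integrable hSm hSc (sSupp_re hμ) hf).1,
   (sSupp_integrable hSm hSc (sSupp_re hμ) hf).2,
   (sSupp_integrable hSm hSc (sSupp_im hμ) hf).1,
   (sSupp_integrable hSm hSc (sSupp_im hμ) hf).2⟩

lemma cmInt_fun_add {μ : ComplexMeasure ℝ} {S : Set ℝ} (hSm : MeasurableSet S)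
    (hSc : IsCompact S) (hμ : cmSupportedIn μ S) {g h : ℝ → ℂ} (hg : Continuous g)
    (hh : Continuous h) :
    cmInt μ (fun x => g x + h x) = cmInt μ g + cmInt μ h := by
  obtain ⟨h1, h2, h3, h4⟩ := cm_integrable hSm hSc hμ hg
  obtain ⟨k1, k2, k3, k4⟩ := cm_integrable hSm hSc hμ hh
  unfold cmInt
  rw [integral_add h1 k1, integral_add h2 k2, integral_add h3 k3, integral_add h4 k4]
  ring

lemma cmInt_fun_smul (μ : ComplexMeasure ℝ) (c : ℂ) (g : ℝ → ℂ) :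
    cmInt μ (fun x => c * g x) = c * cmInt μ g := by
  unfold cmInt
  rw [integral_const_mul, integral_const_mul, integral_const_mul, integral_const_mul]
  ring

lemma cmInt_fun_sum {μ : ComplexMeasure ℝ} {S : Set ℝ} (hSm : MeasurableSet S)
    (hSc : IsCompact S) (hμ : cmSupportedIn μ S) (t : Finset ℕ) {g : ℕ → ℝ → ℂ}
    (hg : ∀ l ∈ t, Continuous (g l)) :
    cmInt μ (fun x => ∑ l ∈ t, g l x) = ∑ l ∈ t, cmInt μ (g l) := by
  classical
  induction t using Finset.cons_induction with
  | empty => simp [cmInt_zero]; unfold cmInt; simp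
  | cons a t ha ih =>
    have hconts : Continuous fun x => ∑ l ∈ t, g l x :=
      continuous_finset_sum _ fun l hl => hg l (Finset.mem_cons_of_mem hl)
    simp only [Finset.sum_cons]
    rw [cmInt_fun_add hSm hSc hμ (hg a (Finset.mem_cons_self a t)) hconts,
      ih fun l hl => hg l (Finset.mem_cons_of_mem hl)]

lemma s_apply_eq (s : SignedMeasure ℝ) {B : Set ℝ} (hB : MeasurableSet B) :
    s B = (s.toJordanDecomposition.posPart B).toReal
      - (s.toJordanDecomposition.negPart B).toReal := by
  conv_lhs => rw [← jd_eq s]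
  rw [VectorMeasure.sub_apply, Measure.toSignedMeasure_apply_measurable hB,
    Measure.toSignedMeasure_apply_measurable hB]
  rfl

lemma sum_part_le {p : Measure ℝ} [IsFiniteMeasure p] {n : ℕ} {P : Fin n → Set ℝ}
    (hPm : ∀ i, MeasurableSet (P i)) (hPd : Pairwise (Function.onFun Disjoint P)) :
    ∑ i, (p (P i)).toReal ≤ (p univ).toReal := by
  have h1 : ∑ i, p (P i) ≤ p univ := by
    calc ∑ i, p (P i) = ∑' i, p (P i) := (tsum_fintype _).symm
      _ = p (⋃ i, P i) := (measure_iUnion hPd hPm).symm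
      _ ≤ p univ := measure_mono (subset_univ _)
  calc ∑ i, (p (P i)).toReal = (∑ i, p (P i)).toReal :=
        (ENNReal.toReal_sum fun _ _ => measure_ne_top _ _).symm
    _ ≤ (p univ).toReal := ENNReal.toReal_mono (measure_ne_top _ _) h1

lemma abs_s_le (s : SignedMeasure ℝ) {B : Set ℝ} (hB : MeasurableSet B) :
    |s B| ≤ (s.toJordanDecomposition.posPart B).toReal
      + (s.toJordanDecomposition.negPart B).toReal := by
  rw [s_apply_eq s hB]
  have h1 : (0:ℝ) ≤ (s.toJordanDecomposition.posPart B).toReal := ENNReal.toReal_nonneg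
  have h2 : (0:ℝ) ≤ (s.toJordanDecomposition.negPart B).toReal := ENNReal.toReal_nonneg
  rw [abs_le]
  constructor <;> linarith

lemma var_bddAbove (μ : ComplexMeasure ℝ) (B : Set ℝ) :
    BddAbove {r : ℝ | ∃ (n : ℕ) (P : Fin n → Set ℝ), (∀ i, MeasurableSet (P i)) ∧
      Pairwise (Function.onFun Disjoint P) ∧ (∀ i, P i ⊆ B) ∧
      r = ∑ i, ‖μ (P i)‖} := by
  set sre := ComplexMeasure.re μ
  set sim := ComplexMeasure.im μ
  refine ⟨(sre.toJordanDecomposition.posPart univ).toReal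
    + (sre.toJordanDecomposition.negPart univ).toReal
    + (sim.toJordanDecomposition.posPart univ).toReal
    + (sim.toJordanDecomposition.negPart univ).toReal, ?_⟩
  rintro r ⟨n, P, hPm, hPd, hPB, rfl⟩
  have hterm : ∀ i, ‖μ (P i)‖ ≤
      ((sre.toJordanDecomposition.posPart (P i)).toReal
        + (sre.toJordanDecomposition.negPart (P i)).toReal)
      + ((sim.toJordanDecomposition.posPart (P i)).toReal
        + (sim.toJordanDecomposition.negPart (P i)).toReal) := by
    intro i
    have h0 : ‖μ (P i)‖ ≤ |(μ (P i)).re| + |(μ (P i)).im| :=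
      Complex.norm_le_abs_re_add_abs_im _
    have hre : |(μ (P i)).re| = |sre (P i)| := rfl
    have him : |(μ (P i)).im| = |sim (P i)| := rfl
    rw [hre, him] at h0
    exact h0.trans (add_le_add (abs_s_le sre (hPm i)) (abs_s_le sim (hPm i)))
  calc ∑ i, ‖μ (P i)‖ ≤ _ := Finset.sum_le_sum fun i _ => hterm i
    _ ≤ _ := by
      rw [Finset.sum_add_distrib, Finset.sum_add_distrib, Finset.sum_add_distrib]
      have := sum_part_le (p := sre.toJordanDecomposition.posPart) hPm hPd
      have := sum_part_le (p := sre.toJordanDecomposition.negPart) hPm hPd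
      have := sum_part_le (p := sim.toJordanDecomposition.posPart) hPm hPd
      have := sum_part_le (p := sim.toJordanDecomposition.negPart) hPm hPd
      linarith

lemma tv_le_cmVar {μ : ComplexMeasure ℝ} {S : Set ℝ} (hSm : MeasurableSet S)
    (s : SignedMeasure ℝ) (hs : sSupp s S)
    (habs : ∀ B : Set ℝ, MeasurableSet B → |s B| ≤ ‖μ B‖) :
    (s.toJordanDecomposition.posPart univ).toReal
      + (s.toJordanDecomposition.negPart univ).toReal ≤ cmVar μ S := by
  obtain ⟨i, hi₁, hi₂, hi₃, hpos, hneg⟩ := s.toJordanDecomposition_spec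
  have hsplit : ∀ A : Set ℝ, MeasurableSet A → s A = s (A ∩ S) := by
    intro A hA
    have hu : A ∩ S ∪ A ∩ Sᶜ = A := Set.inter_union_compl A S
    have hd : Disjoint (A ∩ S) (A ∩ Sᶜ) :=
      (disjoint_compl_right.mono Set.inter_subset_right Set.inter_subset_right)
    have := s.of_union hd (hA.inter hSm) (hA.inter hSm.compl)
    rw [hu] at this
    rw [this, hs _ (hA.inter hSm.compl)
      (disjoint_compl_left.mono_left Set.inter_subset_right), add_zero]
  have hposu : (s.toJordanDecomposition.posPart univ).toReal = s (i ∩ S) := by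
    rw [hpos, SignedMeasure.toMeasureOfZeroLE_apply _ hi₂ hi₁ MeasurableSet.univ]
    simp only [Set.inter_univ, ENNReal.coe_toReal, NNReal.coe_mk]
    exact (hsplit i hi₁).symm ▸ (hsplit i hi₁)
  have hnegu : (s.toJordanDecomposition.negPart univ).toReal = -s (iᶜ ∩ S) := by
    rw [hneg, SignedMeasure.toMeasureOfLEZero_apply _ hi₃ hi₁.compl MeasurableSet.univ]
    simp only [Set.inter_univ, ENNReal.coe_toReal, NNReal.coe_mk]
    rw [hsplit iᶜ hi₁.compl]
  have hmem : ‖μ (i ∩ S)‖ + ‖μ (iᶜ ∩ S)‖ ∈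
      {r : ℝ | ∃ (n : ℕ) (P : Fin n → Set ℝ), (∀ i, MeasurableSet (P i)) ∧
        Pairwise (Function.onFun Disjoint P) ∧ (∀ i, P i ⊆ S) ∧
        r = ∑ i, ‖μ (P i)‖} := by
    refine ⟨2, ![i ∩ S, iᶜ ∩ S], ?_, ?_, ?_, ?_⟩
    · intro j; fin_cases j
      · exact hi₁.inter hSm
      · exact hi₁.compl.inter hSm
    · intro a b hab
      fin_cases a <;> fin_cases b <;> simp_all [Function.onFun] <;>
        [exact (disjoint_compl_right.mono Set.inter_subset_left Set.inter_subset_left);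
         exact (disjoint_compl_right.mono Set.inter_subset_left Set.inter_subset_left).symm]
    · intro j; fin_cases j <;> exact Set.inter_subset_right
    · rw [Fin.sum_univ_two]
      simp
  have hle : (s.toJordanDecomposition.posPart univ).toReal
      + (s.toJordanDecomposition.negPart univ).toReal
      ≤ ‖μ (i ∩ S)‖ + ‖μ (iᶜ ∩ S)‖ := by
    rw [hposu, hnegu]
    have h1 := habs (i ∩ S) (hi₁.inter hSm)
    have h2 := habs (iᶜ ∩ S) (hi₁.compl.inter hSm)
    calc s (i ∩ S) + -s (iᶜ ∩ S) ≤ |s (i ∩ S)| + |s (iᶜ ∩ S)| := by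
          have := le_abs_self (s (i ∩ S))
          have := neg_le_abs (s (iᶜ ∩ S))
          linarith
      _ ≤ _ := add_le_add h1 h2
  exact hle.trans (le_csSup (var_bddAbove μ S) hmem)

lemma sInt_bound {s : SignedMeasure ℝ} {S : Set ℝ} (hSm : MeasurableSet S) (hSc : IsCompact S)
    (hs : sSupp s S) {f : ℝ → ℂ} (hf : Continuous f) {M : ℝ}
    (hM : ∀ x ∈ S, ‖f x‖ ≤ M) :
    ‖sInt s f‖ ≤ M * ((s.toJordanDecomposition.posPart univ).toReal
      + (s.toJordanDecomposition.negPart univ).toReal) := by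
  have key : ∀ (p : Measure ℝ) [IsFiniteMeasure p], p Sᶜ = 0 →
      ‖∫ x, f x ∂p‖ ≤ M * (p univ).toReal := by
    intro p _ hp
    have hae : ∀ᵐ x ∂p, x ∈ S := by
      rw [MeasureTheory.ae_iff]
      exact hp
    have hint : Integrable f p := integrable_of_null_compl hSc hp hf
    calc ‖∫ x, f x ∂p‖ ≤ ∫ x, ‖f x‖ ∂p := norm_integral_le_integral_norm _
      _ ≤ ∫ _x, M ∂p := by
          refine integral_mono_ae hint.norm (integrable_const M) ?_
          filter_upwards [hae] with x hx
          simpa using hM x hx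
      _ = M * (p univ).toReal := by
          rw [integral_const, smul_eq_mul, mul_comm, measureReal_def]
  have h1 := key _ (part_null hSm hs).1
  have h2 := key _ (part_null hSm hs).2
  rw [sInt]
  calc ‖(∫ x, f x ∂s.toJordanDecomposition.posPart)
        - ∫ x, f x ∂s.toJordanDecomposition.negPart‖
      ≤ ‖∫ x, f x ∂s.toJordanDecomposition.posPart‖
        + ‖∫ x, f x ∂s.toJordanDecomposition.negPart‖ := norm_sub_le _ _
    _ ≤ _ := by rw [mul_add]; exact add_le_add h1 h2

lemma cmInt_bound {μ : ComplexMeasure ℝ} {S : Set ℝ} (hSm : MeasurableSet S)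
    (hSc : IsCompact S) (hμ : cmSupportedIn μ S) {f : ℝ → ℂ} (hf : Continuous f)
    {M : ℝ} (hM0 : 0 ≤ M) (hM : ∀ x ∈ S, ‖f x‖ ≤ M) :
    ‖cmInt μ f‖ ≤ 2 * M * cmVar μ S := by
  have habsre : ∀ B : Set ℝ, MeasurableSet B →
      |(ComplexMeasure.re μ) B| ≤ ‖μ B‖ := by
    intro B hB
    exact Complex.abs_re_le_norm (μ B)
  have habsim : ∀ B : Set ℝ, MeasurableSet B →
      |(ComplexMeasure.im μ) B| ≤ ‖μ B‖ := by
    intro B hB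
    exact Complex.abs_im_le_norm (μ B)
  have htv1 := tv_le_cmVar hSm (ComplexMeasure.re μ) (sSupp_re hμ) habsre
  have htv2 := tv_le_cmVar hSm (ComplexMeasure.im μ) (sSupp_im hμ) habsim
  have hb1 := sInt_bound hSm hSc (sSupp_re hμ) hf hM
  have hb2 := sInt_bound hSm hSc (sSupp_im hμ) hf hM
  rw [cmInt_eq]
  calc ‖sInt (ComplexMeasure.re μ) f + Complex.I * sInt (ComplexMeasure.im μ) f‖
      ≤ ‖sInt (ComplexMeasure.re μ) f‖
        + ‖Complex.I * sInt (ComplexMeasure.im μ) f‖ := norm_add_le _ _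
    _ = ‖sInt (ComplexMeasure.re μ) f‖
        + ‖sInt (ComplexMeasure.im μ) f‖ := by
          rw [norm_mul, Complex.norm_I, one_mul]
    _ ≤ M * cmVar μ S + M * cmVar μ S := by
        have e1 := hb1.trans (mul_le_mul_of_nonneg_left htv1 hM0)
        have e2 := hb2.trans (mul_le_mul_of_nonneg_left htv2 hM0)
        exact add_le_add e1 e2
    _ = 2 * M * cmVar μ S := by ring

lemma exp_tail (w : ℂ) (m : ℕ) :
    ‖Complex.exp w - ∑ l ∈ Finset.range m, w ^ l / (l !)‖ ≤
      ‖w‖ ^ m / m ! * Real.exp (‖w‖) := by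
  have hsum : Summable (fun n => w ^ n / n ! : ℕ → ℂ) := NormedSpace.expSeries_div_summable w
  have hexp : Complex.exp w = ∑' n : ℕ, w ^ n / n ! := by
    rw [Complex.exp_eq_exp_ℂ, NormedSpace.exp_eq_tsum_div]
  have hsplit : Complex.exp w - ∑ l ∈ Finset.range m, w ^ l / l !
      = ∑' n : ℕ, w ^ (n + m) / (n + m)! := by
    rw [hexp, ← Summable.sum_add_tsum_nat_add m hsum]
    ring
  rw [hsplit]
  have hnorm : ∀ k : ℕ, ‖w ^ k / (k : ℕ)!‖ = ‖w‖ ^ k / (k : ℕ)! := by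
    intro k
    simp [norm_div, norm_pow]
  have hsn : Summable (fun n : ℕ => ‖w ^ (n + m) / ((n + m : ℕ) : ℕ)!‖) := by
    have := (summable_nat_add_iff (f := fun k : ℕ => ‖w‖ ^ k / (k : ℕ)!) m).2
      (Real.summable_pow_div_factorial (‖w‖))
    refine this.congr fun n => ?_
    rw [hnorm]
  have hbound : ∀ n : ℕ, ‖w ^ (n + m) / ((n + m : ℕ) : ℕ)!‖ ≤
      ‖w‖ ^ m / m ! * (‖w‖ ^ n / n !) := by
    intro n
    rw [hnorm]
    have hfac : (m ! * n ! : ℝ) ≤ ((n + m)! : ℝ) := by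
      exact_mod_cast Nat.le_of_dvd (Nat.factorial_pos _)
        (by simpa [add_comm] using Nat.factorial_mul_factorial_dvd_factorial_add m n)
    have heq : ‖w‖ ^ m / m ! * (‖w‖ ^ n / n !)
        = ‖w‖ ^ (n + m) / (m ! * n !) := by
      rw [div_mul_div_comm, ← pow_add]
      rw [add_comm m n]
    rw [heq]
    gcongr
  calc ‖∑' n : ℕ, w ^ (n + m) / ((n + m : ℕ) : ℕ)!‖
      ≤ ∑' n : ℕ, ‖w ^ (n + m) / ((n + m : ℕ) : ℕ)!‖ := norm_tsum_le_tsum_norm hsn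
    _ ≤ ∑' n : ℕ, ‖w‖ ^ m / m ! * (‖w‖ ^ n / n !) :=
        Summable.tsum_le_tsum hbound hsn ((Real.summable_pow_div_factorial _).mul_left _)
    _ = ‖w‖ ^ m / m ! * Real.exp (‖w‖) := by
        rw [tsum_mul_left, Real.exp_eq_exp_ℝ, NormedSpace.exp_eq_tsum_div]

lemma pow_div_factorial_le_exp (x : ℝ) (hx : 0 ≤ x) (m : ℕ) :
    x ^ m / m ! ≤ Real.exp x := by
  rw [Real.exp_eq_exp_ℝ, NormedSpace.exp_eq_tsum_div]
  exact Summable.le_tsum (Real.summable_pow_div_factorial x) m fun i _ => by positivity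

end SO8

/-- Theorem 4.1 of the paper. Let `k0 > 0`,
`a ∈ ℝ∖[-k0,k0]`, `μ_{j,n}` complex Borel measures on `[-k0,k0]` and
`C_j(n) ∈ ℂ` satisfying the moment conditions
`Σ_{j≤n} C_j(n) ∫ (ik)^l dμ_{j,n} = (ia)^l` for `l ≤ n`, with bounds
`|μ_{j,n}|([-k0,k0]) ≤ κ₁ⁿ` and `|C_j(n)| ≤ κ₂ⁿ`. Then the functions
`F_n(z) = Σ_{j≤n} C_j(n) ∫ e^{ikz} dμ_{j,n}(k)` are representable by the
complex measures `μ_n = Σ_{j≤n} C_j(n) μ_{j,n}` and converge to `z ↦ e^{iaz}`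
in `𝒜₁(ℂ)`; in particular the sequence `F_n` is superoscillating. -/
theorem statement8 (k0 : ℝ) (hk0 : 0 < k0) (a : ℝ) (ha : a ∉ Set.Icc (-k0) k0)
    (μ : ℕ → ℕ → ComplexMeasure ℝ)
    (hsupp : ∀ n j, j ≤ n → cmSupportedIn (μ n j) (Set.Icc (-k0) k0))
    (C : ℕ → ℕ → ℂ)
    (hmom : ∀ n : ℕ, ∀ l ≤ n, ∑ j ∈ Finset.range (n + 1), C n j *
        cmInt (μ n j) (fun k => (Complex.I * (k : ℂ)) ^ l) = (Complex.I * (a : ℂ)) ^ l)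
    (κ₁ κ₂ : ℝ) (hκ₁ : 0 ≤ κ₁) (hκ₂ : 0 ≤ κ₂)
    (hvar : ∀ n j, j ≤ n → cmVar (μ n j) (Set.Icc (-k0) k0) ≤ κ₁ ^ n)
    (hC : ∀ n j, j ≤ n → ‖C n j‖ ≤ κ₂ ^ n)
    (F : ℕ → ℂ → ℂ)
    (hF : ∀ n z, F n z = ∑ j ∈ Finset.range (n + 1), C n j *
        cmInt (μ n j) (fun k => Complex.exp (Complex.I * (k : ℂ) * z))) :
    (∀ n z, F n z = cmInt (∑ j ∈ Finset.range (n + 1), C n j • μ n j)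
        (fun k => Complex.exp (Complex.I * (k : ℂ) * z))) ∧
    TendstoA1 F (fun z => Complex.exp (Complex.I * (a : ℂ) * z)) := by
  classical
  set S : Set ℝ := Set.Icc (-k0) k0 with hS
  have hSm : MeasurableSet S := measurableSet_Icc
  have hSc : IsCompact S := isCompact_Icc
  have hfz : ∀ z : ℂ, Continuous fun k : ℝ => Complex.exp (Complex.I * (k : ℂ) * z) :=
    fun z => Complex.continuous_exp.comp
      ((continuous_const.mul Complex.continuous_ofReal).mul continuous_const)
  constructor
  · intro n z
    rw [hF n z]
    exact (SO8.cmInt_sum_measure hSm hSc _ _ _ (fun j hj =>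
      hsupp n j (Nat.lt_succ_iff.1 (Finset.mem_range.1 hj))) (hfz z)).symm
  · -- convergence
    set c : ℝ := max k0 |a| with hc
    have hc0 : 0 < c := lt_of_lt_of_le hk0 (le_max_left _ _)
    set K : ℝ := max (κ₁ * κ₂) 1 with hK
    have hK1 : 1 ≤ K := le_max_right _ _
    have hK0 : 0 < K := lt_of_lt_of_le one_pos hK1
    set D : ℝ := 2 * K + 2 with hD
    have hD0 : 0 < D := by positivity
    set B : ℝ := c * (1 + D) with hB
    have hB0 : 0 ≤ B := by positivity
    refine ⟨B, hB0, ?_⟩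
    -- the coefficient sequence
    set coef : ℕ → ℝ := fun n => (2 * (n + 1) * K ^ n + 1) * (1 / D) ^ (n + 1) with hcoef
    have hcoef0 : ∀ n, 0 ≤ coef n := by
      intro n
      have : (0:ℝ) ≤ (n:ℝ) + 1 := by positivity
      positivity
    -- pointwise estimate
    have hmain : ∀ n : ℕ, ∀ z : ℂ,
        ‖F n z - Complex.exp (Complex.I * (a : ℂ) * z)‖ ≤
          coef n * Real.exp (B * ‖z‖) := by
      intro n z
      set m : ℕ := n + 1 with hm
      set r : ℝ := ‖z‖ with hr
      have hr0 : 0 ≤ r := norm_nonneg z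
      -- Step A
      have stepA : ∀ j ∈ Finset.range (n + 1),
          C n j * cmInt (μ n j) (fun k : ℝ => Complex.exp (Complex.I * (k : ℂ) * z))
            = C n j * cmInt (μ n j) (fun k : ℝ => Complex.exp (Complex.I * (k : ℂ) * z)
                - ∑ l ∈ Finset.range m, (Complex.I * (k : ℂ) * z) ^ l / l !)
              + ∑ l ∈ Finset.range m, (z ^ l / l !)
                * (C n j * cmInt (μ n j) (fun k : ℝ => (Complex.I * (k : ℂ)) ^ l)) := by
        intro j hj
        have hjn : j ≤ n := Nat.lt_succ_iff.1 (Finset.mem_range.1 hj)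
        have hsuppj := hsupp n j hjn
        have hcontE : Continuous fun k : ℝ => Complex.exp (Complex.I * (k : ℂ) * z)
            - ∑ l ∈ Finset.range m, (Complex.I * (k : ℂ) * z) ^ l / l ! :=
          (hfz z).sub (continuous_finset_sum _ fun l _ =>
            (((continuous_const.mul Complex.continuous_ofReal).mul continuous_const).pow l).div_const _)
        have hcontT : ∀ l ∈ Finset.range m,
            Continuous fun k : ℝ => (z ^ l / l !) * (Complex.I * (k : ℂ)) ^ l :=
          fun l _ => continuous_const.mul ((continuous_const.mul Complex.continuous_ofReal).pow l)
        have hfun : (fun k : ℝ => Complex.exp (Complex.I * (k : ℂ) * z))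
            = fun k : ℝ => (Complex.exp (Complex.I * (k : ℂ) * z)
                - ∑ l ∈ Finset.range m, (Complex.I * (k : ℂ) * z) ^ l / l !)
              + ∑ l ∈ Finset.range m, (z ^ l / l !) * (Complex.I * (k : ℂ)) ^ l := by
          funext k
          have : ∀ l ∈ Finset.range m, (Complex.I * (k : ℂ) * z) ^ l / l !
              = (z ^ l / l !) * (Complex.I * (k : ℂ)) ^ l := by
            intro l _
            rw [mul_pow]
            ring
          rw [← Finset.sum_congr rfl this]
          ring
        conv_lhs => rw [hfun]
        rw [SO8.cmInt_fun_add hSm hSc hsuppj hcontE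
          (continuous_finset_sum _ hcontT),
          SO8.cmInt_fun_sum hSm hSc hsuppj _ hcontT]
        rw [mul_add, Finset.mul_sum]
        congr 1
        refine Finset.sum_congr rfl fun l _ => ?_
        rw [SO8.cmInt_fun_smul]
        ring
      -- key identity
      have key : F n z - Complex.exp (Complex.I * (a : ℂ) * z)
          = (∑ j ∈ Finset.range (n + 1), C n j * cmInt (μ n j)
              (fun k : ℝ => Complex.exp (Complex.I * (k : ℂ) * z)
                - ∑ l ∈ Finset.range m, (Complex.I * (k : ℂ) * z) ^ l / l !))
            - (Complex.exp (Complex.I * (a : ℂ) * z)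
              - ∑ l ∈ Finset.range m, (Complex.I * (a : ℂ) * z) ^ l / l !) := by
        rw [hF n z, Finset.sum_congr rfl stepA, Finset.sum_add_distrib]
        have hswap : ∑ j ∈ Finset.range (n + 1), ∑ l ∈ Finset.range m, (z ^ l / l !)
              * (C n j * cmInt (μ n j) (fun k : ℝ => (Complex.I * (k : ℂ)) ^ l))
            = ∑ l ∈ Finset.range m, (Complex.I * (a : ℂ) * z) ^ l / l ! := by
          rw [Finset.sum_comm]
          refine Finset.sum_congr rfl fun l hl => ?_
          have hln : l ≤ n := Nat.lt_succ_iff.1 (Finset.mem_range.1 hl)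
          rw [← Finset.mul_sum, hmom n l hln, mul_pow]
          ring
        rw [hswap]
        ring
      rw [key]
      -- bound each term
      have hEbound : ∀ j ∈ Finset.range (n + 1),
          ‖cmInt (μ n j) (fun k : ℝ => Complex.exp (Complex.I * (k : ℂ) * z)
            - ∑ l ∈ Finset.range m, (Complex.I * (k : ℂ) * z) ^ l / l !)‖
          ≤ 2 * ((k0 * r) ^ m / m ! * Real.exp (k0 * r)) * κ₁ ^ n := by
        intro j hj
        have hjn : j ≤ n := Nat.lt_succ_iff.1 (Finset.mem_range.1 hj)
        have hM0 : 0 ≤ (k0 * r) ^ m / m ! * Real.exp (k0 * r) := by positivity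
        have hcontE : Continuous fun k : ℝ => Complex.exp (Complex.I * (k : ℂ) * z)
            - ∑ l ∈ Finset.range m, (Complex.I * (k : ℂ) * z) ^ l / l ! :=
          (hfz z).sub (continuous_finset_sum _ fun l _ =>
            (((continuous_const.mul Complex.continuous_ofReal).mul continuous_const).pow l).div_const _)
        have hM : ∀ x ∈ S, ‖Complex.exp (Complex.I * (x : ℂ) * z)
            - ∑ l ∈ Finset.range m, (Complex.I * (x : ℂ) * z) ^ l / (l !)‖
            ≤ (k0 * r) ^ m / m ! * Real.exp (k0 * r) := by
          intro x hx
          have hxabs : |x| ≤ k0 := abs_le.2 ⟨hx.1, hx.2⟩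
          have habsw : ‖Complex.I * (x : ℂ) * z‖ = |x| * r := by
            rw [norm_mul, norm_mul, Complex.norm_I, Complex.norm_real, Real.norm_eq_abs, one_mul]
          have h1 := SO8.exp_tail (Complex.I * (x : ℂ) * z) m
          rw [habsw] at h1
          refine h1.trans ?_
          have hxr : |x| * r ≤ k0 * r := mul_le_mul_of_nonneg_right hxabs hr0
          have h2 : (|x| * r) ^ m / m ! ≤ (k0 * r) ^ m / m ! := by
            gcongr
          have h3 : Real.exp (|x| * r) ≤ Real.exp (k0 * r) := Real.exp_le_exp.2 hxr
          have h4 : (0:ℝ) ≤ (|x| * r) ^ m / m ! := by positivity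
          calc (|x| * r) ^ m / m ! * Real.exp (|x| * r)
              ≤ (|x| * r) ^ m / m ! * Real.exp (k0 * r) := by
                exact mul_le_mul_of_nonneg_left h3 h4
            _ ≤ (k0 * r) ^ m / m ! * Real.exp (k0 * r) := by
                exact mul_le_mul_of_nonneg_right h2 (Real.exp_nonneg _)
        have hbd := SO8.cmInt_bound hSm hSc (hsupp n j hjn) hcontE hM0 hM
        refine hbd.trans ?_
        exact mul_le_mul_of_nonneg_left (hvar n j hjn) (by positivity)
      -- uniform bound for the exponential-tail factor
      have hG : ∀ x : ℝ, 0 ≤ x → x ≤ c →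
          (x * r) ^ m / m ! * Real.exp (x * r) ≤ (1 / D) ^ m * Real.exp (B * r) := by
        intro x hx hxc
        have hxr : x * r ≤ c * r := mul_le_mul_of_nonneg_right hxc hr0
        have h1 : (x * r) ^ m / m ! ≤ (c * r) ^ m / m ! := by
          gcongr
        have h2 : Real.exp (x * r) ≤ Real.exp (c * r) := Real.exp_le_exp.2 hxr
        have h3 : (c * r) ^ m = (c * D * r) ^ m * (1 / D) ^ m := by
          rw [← mul_pow]
          congr 1
          field_simp
        have h4 : (c * D * r) ^ m / m ! ≤ Real.exp (c * D * r) :=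
          SO8.pow_div_factorial_le_exp _ (by positivity) m
        have h5 : Real.exp (c * D * r) * Real.exp (c * r) = Real.exp (B * r) := by
          rw [← Real.exp_add]
          congr 1
          rw [hB]
          ring
        calc (x * r) ^ m / m ! * Real.exp (x * r)
            ≤ (c * r) ^ m / m ! * Real.exp (c * r) :=
              mul_le_mul h1 h2 (Real.exp_nonneg _) (by positivity)
          _ = (c * D * r) ^ m / m ! * (1 / D) ^ m * Real.exp (c * r) := by
              rw [h3]; ring
          _ ≤ Real.exp (c * D * r) * (1 / D) ^ m * Real.exp (c * r) := by
              have h6 : (0:ℝ) ≤ (1 / D) ^ m := by positivity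
              exact mul_le_mul_of_nonneg_right
                (mul_le_mul_of_nonneg_right h4 h6) (Real.exp_nonneg _)
          _ = (1 / D) ^ m * Real.exp (B * r) := by rw [← h5]; ring
      set Q : ℝ := (1 / D) ^ m * Real.exp (B * r) with hQ
      have hQ0 : 0 ≤ Q := by positivity
      have hMQ : (k0 * r) ^ m / m ! * Real.exp (k0 * r) ≤ Q :=
        hG k0 hk0.le (le_max_left _ _)
      have hEa : ‖Complex.exp (Complex.I * (a : ℂ) * z)
          - ∑ l ∈ Finset.range m, (Complex.I * (a : ℂ) * z) ^ l / (l !)‖ ≤ Q := by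
        have h1 := SO8.exp_tail (Complex.I * (a : ℂ) * z) m
        have habs : ‖Complex.I * (a : ℂ) * z‖ = |a| * r := by
          rw [norm_mul, norm_mul, Complex.norm_I, Complex.norm_real, Real.norm_eq_abs, one_mul]
        rw [habs] at h1
        exact h1.trans (hG |a| (abs_nonneg a) (le_max_right _ _))
      have hsum : ‖∑ j ∈ Finset.range (n + 1), C n j * cmInt (μ n j)
            (fun k : ℝ => Complex.exp (Complex.I * (k : ℂ) * z)
              - ∑ l ∈ Finset.range m, (Complex.I * (k : ℂ) * z) ^ l / l !)‖
          ≤ ((n : ℝ) + 1) * (κ₂ ^ n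
            * (2 * ((k0 * r) ^ m / m ! * Real.exp (k0 * r)) * κ₁ ^ n)) := by
        calc ‖∑ j ∈ Finset.range (n + 1), C n j * cmInt (μ n j)
              (fun k : ℝ => Complex.exp (Complex.I * (k : ℂ) * z)
                - ∑ l ∈ Finset.range m, (Complex.I * (k : ℂ) * z) ^ l / l !)‖
            ≤ ∑ j ∈ Finset.range (n + 1), ‖C n j * cmInt (μ n j)
              (fun k : ℝ => Complex.exp (Complex.I * (k : ℂ) * z)
                - ∑ l ∈ Finset.range m, (Complex.I * (k : ℂ) * z) ^ l / l !)‖ :=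
              norm_sum_le _ _
          _ ≤ ∑ _j ∈ Finset.range (n + 1), κ₂ ^ n
              * (2 * ((k0 * r) ^ m / m ! * Real.exp (k0 * r)) * κ₁ ^ n) := by
              refine Finset.sum_le_sum fun j hj => ?_
              rw [norm_mul]
              exact mul_le_mul (hC n j (Nat.lt_succ_iff.1 (Finset.mem_range.1 hj)))
                (hEbound j hj) (norm_nonneg _) (pow_nonneg hκ₂ n)
          _ = ((n : ℝ) + 1) * (κ₂ ^ n
              * (2 * ((k0 * r) ^ m / m ! * Real.exp (k0 * r)) * κ₁ ^ n)) := by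
              rw [Finset.sum_const, Finset.card_range, nsmul_eq_mul]
              push_cast
              ring
      have htri : ‖(∑ j ∈ Finset.range (n + 1), C n j * cmInt (μ n j)
            (fun k : ℝ => Complex.exp (Complex.I * (k : ℂ) * z)
              - ∑ l ∈ Finset.range m, (Complex.I * (k : ℂ) * z) ^ l / l !))
          - (Complex.exp (Complex.I * (a : ℂ) * z)
            - ∑ l ∈ Finset.range m, (Complex.I * (a : ℂ) * z) ^ l / l !)‖
          ≤ ((n : ℝ) + 1) * (κ₂ ^ n
            * (2 * ((k0 * r) ^ m / m ! * Real.exp (k0 * r)) * κ₁ ^ n)) + Q := by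
        refine le_trans ?_ (add_le_add hsum hEa)
        rw [sub_eq_add_neg]
        refine (norm_add_le _ _).trans ?_
        rw [norm_neg]
      refine htri.trans ?_
      have hstep1 : ((n : ℝ) + 1) * (κ₂ ^ n
            * (2 * ((k0 * r) ^ m / m ! * Real.exp (k0 * r)) * κ₁ ^ n))
          ≤ ((n : ℝ) + 1) * (κ₂ ^ n * (2 * Q * κ₁ ^ n)) := by
        have hn1 : (0:ℝ) ≤ (n : ℝ) + 1 := by positivity
        gcongr
      have hstep2 : ((n : ℝ) + 1) * (κ₂ ^ n * (2 * Q * κ₁ ^ n))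
          = 2 * ((n : ℝ) + 1) * (κ₁ * κ₂) ^ n * Q := by
        rw [mul_pow]
        ring
      have hstep3 : (κ₁ * κ₂) ^ n ≤ K ^ n :=
        pow_le_pow_left₀ (by positivity) (le_max_left _ _) n
      have hfin : ((n : ℝ) + 1) * (κ₂ ^ n * (2 * Q * κ₁ ^ n)) + Q
          ≤ coef n * Real.exp (B * r) := by
        have h7 : 2 * ((n : ℝ) + 1) * (κ₁ * κ₂) ^ n * Q ≤ 2 * ((n : ℝ) + 1) * K ^ n * Q := by
          have hn1 : (0:ℝ) ≤ 2 * ((n : ℝ) + 1) := by positivity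
          exact mul_le_mul_of_nonneg_right (mul_le_mul_of_nonneg_left hstep3 hn1) hQ0
        have h8 : coef n * Real.exp (B * r) = (2 * ((n : ℝ) + 1) * K ^ n + 1) * Q := by
          rw [hcoef, hQ, hm]
          ring
        rw [hstep2, h8]
        nlinarith [hQ0]
      calc ((n : ℝ) + 1) * (κ₂ ^ n
            * (2 * ((k0 * r) ^ m / m ! * Real.exp (k0 * r)) * κ₁ ^ n)) + Q
          ≤ ((n : ℝ) + 1) * (κ₂ ^ n * (2 * Q * κ₁ ^ n)) + Q := by linarith
        _ ≤ coef n * Real.exp (B * r) := hfin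
    -- conclude from the limit
    have hlim : Tendsto coef atTop (𝓝 0) := by
      have hrK : 0 ≤ K / D := by positivity
      have hrK1 : K / D < 1 := by
        rw [div_lt_one hD0]
        linarith
      have h1 : Tendsto (fun n : ℕ => ((n : ℝ) + 1) * (K / D) ^ n) atTop (𝓝 0) := by
        have := (tendsto_self_mul_const_pow_of_lt_one hrK hrK1).add
          (tendsto_pow_atTop_nhds_zero_of_lt_one hrK hrK1)
        simpa [add_mul] using this
      have h2 : Tendsto (fun n : ℕ => (1 / D) ^ n) atTop (𝓝 0) := by
        apply tendsto_pow_atTop_nhds_zero_of_lt_one (by positivity)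
        rw [div_lt_one hD0]
        linarith
      have heq : ∀ n : ℕ, coef n = (2 / D) * (((n : ℝ) + 1) * (K / D) ^ n)
          + (1 / D) * (1 / D) ^ n := by
        intro n
        rw [hcoef]
        have hDn : (D : ℝ) ^ n ≠ 0 := by positivity
        field_simp
        have hDi : D * D⁻¹ = 1 := mul_inv_cancel₀ hD0.ne'
        linear_combination ((n : ℝ) * K ^ n * D⁻¹ ^ n * 2 + K ^ n * D⁻¹ ^ n * 2 + D⁻¹ ^ n) * hDi
      have := ((h1.const_mul (2 / D)).add (h2.const_mul (1 / D)))
      rw [show ((2 / D) * 0 + (1 / D) * 0 : ℝ) = 0 by ring] at this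
      refine Tendsto.congr (fun n => ?_) this
      rw [heq n]
    intro ε hε
    obtain ⟨N, hN⟩ := (Metric.tendsto_atTop.1 hlim) ε hε
    refine ⟨N, fun n hn z => ?_⟩
    have h1 := hmain n z
    have h2 : coef n ≤ ε := by
      have := hN n hn
      rw [Real.dist_eq, sub_zero, _root_.abs_of_nonneg (hcoef0 n)] at this
      exact this.le
    exact h1.trans (mul_le_mul_of_nonneg_right h2 (Real.exp_nonneg _))
end

section
/- Let k0 > 0 and for each n ∈ ℕ let k_0(n), …, k_n(n) ∈ [−k0, k0] be frequencies satisfying Π_{l=0, l≠j}^{n} |k_l(n) − k_j(n)| ≥ κⁿ for some κ > 0, for all n ∈ ℕ and j ∈ {0,…,n}. For a ∈ ℝ∖[−k0,k0] define C_j(n) = Π_{l=0, l≠j}^{n} (k_l(n) − a)/(k_l(n) − k_j(n)). Then the functions F_n(z) = Σ_{j=0}^{n} C_j(n) e^{i k_j(n) z} converge to z ↦ e^{iaz} in 𝒜₁(ℂ) as n → ∞; in particular, together with their representation F_n(z) = ∫_{−k0}^{k0} e^{ikz} dμ_n(k) via the complex Borel measure μ_n = Σ_{j=0}^n C_j(n)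 δ_{k_j(n)}, the sequence F_n is superoscillating. -/
open MeasureTheory Complex Filter Set

open scoped Classical Nat ENNReal NNReal

lemma aux_inj (κ : ℝ) (hκ : 0 < κ) (n : ℕ) (kk : ℕ → ℝ)
    (hsep : ∀ j ≤ n, κ ^ n ≤ ∏ l ∈ (Finset.range (n+1)).erase j, |kk l - kk j|) :
    Set.InjOn kk ((Finset.range (n+1) : Finset ℕ) : Set ℕ) := by
  intro i hi j hj hij
  by_contra hne
  have hi' : i ∈ (Finset.range (n+1)).erase j :=
    Finset.mem_erase.2 ⟨hne, Finset.mem_coe.1 hi⟩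
  have h0 : ∏ l ∈ (Finset.range (n+1)).erase j, |kk l - kk j| = 0 :=
    Finset.prod_eq_zero hi' (by rw [hij, sub_self, abs_zero])
  have hj' : j ≤ n := Nat.lt_succ_iff.1 (Finset.mem_range.1 (Finset.mem_coe.1 hj))
  have := hsep j hj'
  rw [h0] at this
  exact absurd this (not_le.2 (pow_pos hκ n))


lemma aux_eval_basis (s : Finset ℕ) (v : ℕ → ℝ) (j : ℕ) (a : ℝ) :
    Polynomial.eval a (Lagrange.basis s v j) = ∏ l ∈ s.erase j, (v l - a) / (v l - v j) := by
  rw [Lagrange.basis, Polynomial.eval_prod]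
  refine Finset.prod_congr rfl fun l _ => ?_
  rw [Lagrange.basisDivisor]
  simp only [Polynomial.eval_mul, Polynomial.eval_C, Polynomial.eval_sub, Polynomial.eval_X]
  rw [div_eq_mul_inv, ← neg_sub (v j) (v l), inv_neg]
  ring

lemma aux_lagrange (n : ℕ) (v : ℕ → ℝ)
    (hinj : Set.InjOn v ((Finset.range (n+1) : Finset ℕ) : Set ℕ)) (a : ℝ)
    (m : ℕ) (hm : m ≤ n) :
    ∑ j ∈ Finset.range (n+1),
      (∏ l ∈ (Finset.range (n+1)).erase j, (v l - a)/(v l - v j)) * v j ^ m = a ^ m := by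
  have hdeg : (Polynomial.X ^ m : Polynomial ℝ).degree < (Finset.range (n+1)).card := by
    rw [Polynomial.degree_X_pow, Finset.card_range]
    exact_mod_cast Nat.lt_succ_of_le hm
  have h := Lagrange.eq_interpolate hinj hdeg
  have h2 := congrArg (Polynomial.eval a) h
  rw [Polynomial.eval_pow, Polynomial.eval_X] at h2
  rw [Lagrange.interpolate_apply, Polynomial.eval_finset_sum] at h2
  rw [h2]
  refine Finset.sum_congr rfl fun j hj => ?_
  rw [Polynomial.eval_mul, Polynomial.eval_C, Polynomial.eval_pow, Polynomial.eval_X,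
    aux_eval_basis, mul_comm]

lemma aux_exp_term (y : ℝ) (hy : 0 ≤ y) (n : ℕ) : y ^ n / (n ! : ℝ) ≤ Real.exp y := by
  rw [Real.exp_eq_exp_ℝ, NormedSpace.exp_eq_tsum_div]
  exact Summable.le_tsum (NormedSpace.expSeries_div_summable y) n (fun m _ => by positivity)

set_option maxHeartbeats 1000000 in
lemma aux_bound (k0 κ a : ℝ) (hk0 : 0 < k0) (hκ : 0 < κ) (n : ℕ) (kk : ℕ → ℝ)
    (hkk : ∀ j ≤ n, kk j ∈ Set.Icc (-k0) k0)
    (hsep : ∀ j ≤ n, κ ^ n ≤ ∏ l ∈ (Finset.range (n+1)).erase j, |kk l - kk j|)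
    (Cc : ℕ → ℝ)
    (hC : ∀ j, Cc j = ∏ l ∈ (Finset.range (n+1)).erase j, (kk l - a)/(kk l - kk j))
    (z : ℂ) :
    ‖(∑ j ∈ Finset.range (n+1), (Cc j : ℂ) * Complex.exp (Complex.I * (kk j : ℂ) * z))
      - Complex.exp (Complex.I * (a:ℂ) * z)‖
      ≤ ((n:ℝ)+2) / 2^(n+1)
        * Real.exp ((max |a| k0 + 2 * max 1 ((|a|+k0)/κ) * max |a| k0) * ‖z‖) := by
  have hinj : Set.InjOn kk ((Finset.range (n+1) : Finset ℕ) : Set ℕ) := by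
    intro i hi j hj hij
    by_contra hne
    have hi' : i ∈ (Finset.range (n+1)).erase j :=
      Finset.mem_erase.2 ⟨hne, Finset.mem_coe.1 hi⟩
    have h0 : ∏ l ∈ (Finset.range (n+1)).erase j, |kk l - kk j| = 0 :=
      Finset.prod_eq_zero hi' (by rw [hij, sub_self, abs_zero])
    have hj' : j ≤ n := Nat.lt_succ_iff.1 (Finset.mem_range.1 (Finset.mem_coe.1 hj))
    have := hsep j hj'
    rw [h0] at this
    exact absurd this (not_le.2 (pow_pos hκ n))
  set M := max |a| k0 with hM
  set R := max 1 ((|a|+k0)/κ) with hR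
  set x := ‖z‖ with hx
  have hx0 : 0 ≤ x := norm_nonneg z
  have hM0 : 0 < M := lt_of_lt_of_le hk0 (le_max_right _ _)
  have hR1 : 1 ≤ R := le_max_left _ _
  have hR0 : 0 < R := lt_of_lt_of_le one_pos hR1
  set c := 2 * R * M with hc
  have hc0 : 0 < c := by positivity
  have hkabs : ∀ j, j ≤ n → |kk j| ≤ k0 := fun j hj => abs_le.2 ⟨(hkk j hj).1, (hkk j hj).2⟩
  -- coefficient bound
  have hCb : ∀ j, j ≤ n → |Cc j| ≤ R ^ n := by
    intro j hj
    have hcard : ((Finset.range (n+1)).erase j).card = n := by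
      rw [Finset.card_erase_of_mem (Finset.mem_range.2 (Nat.lt_succ_of_le hj)), Finset.card_range]
      rfl
    rw [hC j, Finset.abs_prod]
    have hnum : ∏ l ∈ (Finset.range (n+1)).erase j, |kk l - a| ≤ (|a|+k0)^n := by
      calc ∏ l ∈ (Finset.range (n+1)).erase j, |kk l - a|
          ≤ ∏ _l ∈ (Finset.range (n+1)).erase j, (|a|+k0) := by
            refine Finset.prod_le_prod (fun l _ => abs_nonneg (kk l - a)) fun l hl => ?_
            have hl' : l ≤ n := Nat.lt_succ_iff.1 (Finset.mem_range.1 (Finset.mem_erase.1 hl).2)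
            calc |kk l - a| ≤ |kk l| + |a| := abs_sub _ _
              _ ≤ k0 + |a| := by linarith [hkabs l hl']
              _ = |a| + k0 := by ring
        _ = (|a|+k0)^n := by rw [Finset.prod_const, hcard]
    calc ∏ l ∈ (Finset.range (n+1)).erase j, |(kk l - a)/(kk l - kk j)|
        = (∏ l ∈ (Finset.range (n+1)).erase j, |kk l - a|)
          / (∏ l ∈ (Finset.range (n+1)).erase j, |kk l - kk j|) := by
          rw [← Finset.prod_div_distrib]
          exact Finset.prod_congr rfl fun l _ => abs_div _ _
      _ ≤ (|a|+k0)^n / κ^n := by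
          apply div_le_div₀ (by positivity) hnum (pow_pos hκ n) (hsep j hj)
      _ = ((|a|+k0)/κ)^n := by rw [div_pow]
      _ ≤ R^n := pow_le_pow_left₀ (by positivity) (le_max_right _ _) n
  -- the power sums
  set S : ℕ → ℝ := fun m => ∑ j ∈ Finset.range (n+1), Cc j * kk j ^ m with hSdef
  have hSm : ∀ m, m ≤ n → S m = a ^ m := by
    intro m hm
    rw [hSdef]
    rw [← aux_lagrange n kk hinj a m hm]
    exact Finset.sum_congr rfl fun j hj => by rw [hC j]
  have hScast : ∀ m : ℕ, ((S m : ℝ) : ℂ)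
      = ∑ j ∈ Finset.range (n+1), (Cc j : ℂ) * ((kk j : ℝ):ℂ)^m := by
    intro m
    rw [hSdef]
    norm_cast
  have hSb : ∀ m, |S m - a^m| ≤ ((n:ℝ)+2) * R^n * M^m := by
    intro m
    have hRn1 : (1:ℝ) ≤ R ^ n := one_le_pow₀ hR1
    have h1 : |S m| ≤ ((n:ℝ)+1) * (R^n * M^m) := by
      calc |S m| ≤ ∑ j ∈ Finset.range (n+1), |Cc j * kk j ^ m| :=
            Finset.abs_sum_le_sum_abs _ _
        _ ≤ ∑ _j ∈ Finset.range (n+1), R^n * M^m := by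
            refine Finset.sum_le_sum fun j hj => ?_
            have hj' : j ≤ n := Nat.lt_succ_iff.1 (Finset.mem_range.1 hj)
            rw [abs_mul, _root_.abs_pow]
            refine mul_le_mul (hCb j hj') (pow_le_pow_left₀ (abs_nonneg _)
              ((hkabs j hj').trans (le_max_right _ _)) m) (by positivity) (by positivity)
        _ = ((n:ℝ)+1) * (R^n * M^m) := by
            rw [Finset.sum_const, Finset.card_range, nsmul_eq_mul]
            push_cast; ring
    have h2 : |a^m| ≤ R^n * M^m := by
      rw [_root_.abs_pow]
      calc |a|^m ≤ M^m := pow_le_pow_left₀ (abs_nonneg _) (le_max_left _ _) m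
        _ ≤ R^n * M^m := le_mul_of_one_le_left (by positivity) hRn1
    calc |S m - a^m| ≤ |S m| + |a^m| := abs_sub _ _
      _ ≤ ((n:ℝ)+1) * (R^n * M^m) + R^n * M^m := by linarith
      _ = ((n:ℝ)+2) * R^n * M^m := by ring
  -- series representation
  have hexpw : ∀ w : ℝ, Complex.exp (Complex.I * (w:ℂ) * z)
      = ∑' m : ℕ, ((Complex.I*z)^m / (m ! : ℂ)) * (w:ℂ)^m := by
    intro w
    rw [Complex.exp_eq_exp_ℂ, NormedSpace.exp_eq_tsum_div]
    refine tsum_congr fun m => ?_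
    rw [show Complex.I * (w:ℂ) * z = (Complex.I * z) * (w:ℂ) by ring, mul_pow,
      mul_div_right_comm]
  have hsumw : ∀ w : ℝ, Summable (fun m : ℕ => ((Complex.I*z)^m / (m ! : ℂ)) * (w:ℂ)^m) := by
    intro w
    refine (NormedSpace.expSeries_div_summable (Complex.I * z * (w:ℂ))).congr fun m => ?_
    rw [show Complex.I * z * (w:ℂ) = (Complex.I * z) * (w:ℂ) by ring, mul_pow,
      mul_div_right_comm]
  set E : ℕ → ℂ := fun m => ((Complex.I*z)^m / (m ! : ℂ)) * (((S m : ℝ) : ℂ) - ((a:ℂ))^m)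
    with hE
  have hsumS : Summable (fun m : ℕ => ((Complex.I*z)^m / (m ! : ℂ)) * ((S m : ℝ) : ℂ)) := by
    refine Summable.congr (summable_sum (f := fun j (m : ℕ) =>
      ((Complex.I*z)^m / (m ! : ℂ)) * ((Cc j : ℂ) * ((kk j : ℝ):ℂ)^m))
      (s := Finset.range (n+1)) (fun j _ => ?_)) fun m => ?_
    · refine Summable.congr ((hsumw (kk j)).mul_left (Cc j : ℂ)) fun m => by ring
    · rw [hScast m, Finset.mul_sum]
  have hsumE : Summable E := by
    rw [hE]
    simp only [mul_sub]
    exact hsumS.sub (((hsumw a)).congr fun m => by ring)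
  have hrep : (∑ j ∈ Finset.range (n+1), (Cc j : ℂ) * Complex.exp (Complex.I * (kk j : ℂ) * z))
      - Complex.exp (Complex.I * (a:ℂ) * z) = ∑' m, E m := by
    have h1 : (∑ j ∈ Finset.range (n+1), (Cc j : ℂ) * Complex.exp (Complex.I * (kk j : ℂ) * z))
        = ∑' m : ℕ, ((Complex.I*z)^m / (m ! : ℂ)) * ((S m : ℝ) : ℂ) := by
      have : ∀ j ∈ Finset.range (n+1), (Cc j : ℂ) * Complex.exp (Complex.I * (kk j : ℂ) * z)
          = ∑' m : ℕ, ((Complex.I*z)^m / (m ! : ℂ)) * ((Cc j : ℂ) * ((kk j : ℝ):ℂ)^m) := by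
        intro j _
        rw [hexpw (kk j), ← tsum_mul_left]
        exact tsum_congr fun m => by ring
      rw [Finset.sum_congr rfl this, ← Summable.tsum_finsetSum (fun j _ =>
        Summable.congr ((hsumw (kk j)).mul_left (Cc j : ℂ)) fun m => by ring)]
      refine tsum_congr fun m => ?_
      rw [hScast m, Finset.mul_sum]
    rw [h1, hexpw a, ← Summable.tsum_sub hsumS ((hsumw a))]
    exact tsum_congr fun m => by rw [hE]; ring
  -- norm bound for terms
  have hnormE : ∀ m : ℕ, ‖E m‖ ≤ ((n:ℝ)+2) * R^n * (M*x)^m / (m ! : ℝ) := by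
    intro m
    rw [hE]
    simp only
    rw [norm_mul, norm_div, norm_pow]
    have h1 : ‖Complex.I * z‖ = x := by rw [norm_mul, Complex.norm_I, one_mul]
    have h2 : ‖(m ! : ℂ)‖ = (m ! : ℝ) := by
      rw [Complex.norm_natCast]
    have h3 : ‖((S m : ℝ) : ℂ) - ((a:ℂ))^m‖ = |S m - a^m| := by
      rw [show ((a:ℂ))^m = (((a^m : ℝ)) : ℂ) by push_cast; ring, ← Complex.ofReal_sub,
        Complex.norm_real, Real.norm_eq_abs]
    rw [h1, h2, h3, mul_pow]
    calc x^m / (m ! : ℝ) * |S m - a^m| ≤ x^m / (m ! : ℝ) * (((n:ℝ)+2) * R^n * M^m) := by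
          refine mul_le_mul_of_nonneg_left (hSb m) (by positivity)
      _ = ((n:ℝ)+2) * R^n * (M^m * x^m) / (m ! : ℝ) := by ring
  have hEzero : ∀ m ∈ Finset.range (n+1), E m = 0 := by
    intro m hm
    have hm' : m ≤ n := Nat.lt_succ_iff.1 (Finset.mem_range.1 hm)
    rw [hE]
    simp only
    rw [hSm m hm', show (((a^m : ℝ)) : ℂ) = ((a:ℂ))^m by push_cast; ring]
    simp
  have hsumnorm : Summable (fun m => ‖E m‖) := by
    refine Summable.of_nonneg_of_le (fun m => norm_nonneg _) hnormE ?_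
    refine Summable.congr
      ((NormedSpace.expSeries_div_summable (M*x)).mul_left (((n:ℝ)+2) * R^n)) fun m => by ring
  have htsum : ∑' m, E m = ∑' m, E (m + (n+1)) := by
    rw [← Summable.sum_add_tsum_nat_add (f := E) (n+1) hsumE, Finset.sum_eq_zero hEzero, zero_add]
  have hfact : ∀ m : ℕ, (((n+1)! : ℝ) * (m ! : ℝ)) ≤ ((m + (n+1))! : ℝ) := by
    intro m
    have h := Nat.factorial_mul_factorial_dvd_factorial_add m (n+1)
    exact_mod_cast Nat.le_of_dvd (Nat.factorial_pos _) (by rwa [Nat.mul_comm] at h)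
  have hterm : ∀ m : ℕ, ‖E (m + (n+1))‖
      ≤ (((n:ℝ)+2) * R^n * (M*x)^(n+1) / ((n+1)! : ℝ)) * ((M*x)^m / (m ! : ℝ)) := by
    intro m
    refine (hnormE (m + (n+1))).trans ?_
    have h1 : ((n:ℝ)+2) * R^n * (M*x)^(m+(n+1)) / ((m + (n+1))! : ℝ)
        ≤ ((n:ℝ)+2) * R^n * (M*x)^(m+(n+1)) / (((n+1)! : ℝ) * (m ! : ℝ)) :=
      div_le_div_of_nonneg_left (by positivity) (by positivity) (hfact m)
    refine h1.trans (le_of_eq ?_)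
    rw [pow_add]
    ring
  have hexpMx : ∑' m : ℕ, ((M*x)^m / (m ! : ℝ)) = Real.exp (M*x) := by
    rw [Real.exp_eq_exp_ℝ, NormedSpace.exp_eq_tsum_div]
  have hsum2 : Summable (fun m : ℕ => (M*x)^m / (m ! : ℝ)) :=
    NormedSpace.expSeries_div_summable (M*x)
  have hmain : ‖∑' m, E m‖
      ≤ (((n:ℝ)+2) * R^n * (M*x)^(n+1) / ((n+1)! : ℝ)) * Real.exp (M*x) := by
    rw [htsum]
    have hshift : Summable (fun m => ‖E (m + (n+1))‖) :=
      (summable_nat_add_iff (n+1)).2 hsumnorm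
    calc ‖∑' m, E (m + (n+1))‖ ≤ ∑' m, ‖E (m + (n+1))‖ := by
          simpa using
            norm_tsum_le_tsum_norm (f := fun m => E (m + (n+1))) (by simpa using hshift)
      _ ≤ ∑' m, (((n:ℝ)+2) * R^n * (M*x)^(n+1) / ((n+1)! : ℝ)) * ((M*x)^m / (m ! : ℝ)) :=
          Summable.tsum_le_tsum hterm hshift (hsum2.mul_left _)
      _ = (((n:ℝ)+2) * R^n * (M*x)^(n+1) / ((n+1)! : ℝ)) * Real.exp (M*x) := by
          rw [tsum_mul_left, hexpMx]
  have hK : (((n:ℝ)+2) * R^n * (M*x)^(n+1) / ((n+1)! : ℝ))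
      ≤ (((n:ℝ)+2) / 2^(n+1)) * Real.exp (c*x) := by
    have h1 : (M*x)^(n+1) = (c*x)^(n+1) * (M/c)^(n+1) := by
      rw [← mul_pow]
      congr 1
      field_simp
    have h2 : (c*x)^(n+1) / (((n+1))! : ℝ) ≤ Real.exp (c*x) :=
      aux_exp_term (c*x) (by positivity) (n+1)
    have h3 : (M/c)^(n+1) = 1 / (2*R)^(n+1) := by
      rw [hc, show M / (2*R*M) = 1/(2*R) by field_simp, div_pow, one_pow]
    calc ((n:ℝ)+2) * R^n * (M*x)^(n+1) / ((n+1)! : ℝ)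
        = (((n:ℝ)+2) * R^n * (M/c)^(n+1)) * ((c*x)^(n+1) / ((n+1)! : ℝ)) := by
          rw [h1]; ring
      _ ≤ (((n:ℝ)+2) * R^n * (M/c)^(n+1)) * Real.exp (c*x) :=
          mul_le_mul_of_nonneg_left h2 (by positivity)
      _ ≤ (((n:ℝ)+2) / 2^(n+1)) * Real.exp (c*x) := by
          refine mul_le_mul_of_nonneg_right ?_ (Real.exp_nonneg _)
          rw [h3, mul_pow]
          have he : ((n:ℝ)+2) * R^n * (1/((2:ℝ)^(n+1) * R^(n+1)))
              = (((n:ℝ)+2)/2^(n+1)) * (1/R) := by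
            field_simp
            ring
          rw [he]
          calc (((n:ℝ)+2)/2^(n+1)) * (1/R) ≤ (((n:ℝ)+2)/2^(n+1)) * 1 :=
                mul_le_mul_of_nonneg_left (by rw [div_le_one hR0]; exact hR1) (by positivity)
            _ = ((n:ℝ)+2)/2^(n+1) := mul_one _
  calc ‖(∑ j ∈ Finset.range (n+1),
          (Cc j : ℂ) * Complex.exp (Complex.I * (kk j : ℂ) * z))
        - Complex.exp (Complex.I * (a:ℂ) * z)‖ = ‖∑' m, E m‖ := by rw [hrep]
    _ ≤ (((n:ℝ)+2) * R^n * (M*x)^(n+1) / ((n+1)! : ℝ)) * Real.exp (M*x) := hmain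
    _ ≤ ((((n:ℝ)+2) / 2^(n+1)) * Real.exp (c*x)) * Real.exp (M*x) :=
        mul_le_mul_of_nonneg_right hK (Real.exp_nonneg _)
    _ = (((n:ℝ)+2) / 2^(n+1)) * Real.exp ((M + c) * x) := by
        rw [mul_assoc, ← Real.exp_add]
        congr 2
        ring

lemma aux_integrable (f : ℝ → ℂ) (x : ℝ) : Integrable f (Measure.dirac x) := by
  have h : f =ᵐ[Measure.dirac x] (fun _ => f x) := by
    rw [MeasureTheory.ae_dirac_eq]
    exact Filter.eventually_pure.2 rfl
  exact (integrable_const (f x)).congr h.symm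

lemma aux_measure (k0 : ℝ) (n : ℕ) (kk : ℕ → ℝ) (hkk : ∀ j ≤ n, kk j ∈ Set.Icc (-k0) k0)
    (hinj : Set.InjOn kk ((Finset.range (n+1) : Finset ℕ) : Set ℕ))
    (Cc : ℕ → ℝ) :
    ∃ μ : ComplexMeasure ℝ,
      (∀ B : Set ℝ, MeasurableSet B →
        μ B = ∑ j ∈ Finset.range (n + 1), if kk j ∈ B then (Cc j : ℂ) else 0) ∧
      ∀ f : ℝ → ℂ, cmInt μ f = ∑ j ∈ Finset.range (n+1), (Cc j : ℂ) * f (kk j) := by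
  set s := Finset.range (n+1) with hs
  set pos : Measure ℝ := ∑ j ∈ s, (((Cc j).toNNReal : ℝ≥0∞) • Measure.dirac (kk j)) with hposdef
  set neg : Measure ℝ := ∑ j ∈ s, (((-Cc j).toNNReal : ℝ≥0∞) • Measure.dirac (kk j)) with hnegdef
  have hfin : ∀ c : ℕ → ℝ,
      IsFiniteMeasure (∑ j ∈ s, (((c j).toNNReal : ℝ≥0∞) • Measure.dirac (kk j))) := by
    intro c
    constructor
    rw [Measure.finset_sum_apply]
    refine ENNReal.sum_lt_top.2 fun j _ => ?_
    rw [Measure.smul_apply, smul_eq_mul]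
    exact ENNReal.mul_lt_top ENNReal.coe_lt_top (measure_lt_top _ _)
  have hposfin : IsFiniteMeasure pos := hfin Cc
  have hnegfin : IsFiniteMeasure neg := hfin (fun j => -Cc j)
  -- the separating set
  set T : Finset ℝ := Finset.image kk (s.filter (fun j => Cc j < 0)) with hT
  have hmemT : ∀ j ∈ s, (kk j ∈ (T : Set ℝ) ↔ Cc j < 0) := by
    intro j hj
    constructor
    · intro h
      rcases Finset.mem_image.1 h with ⟨l, hl, hkl⟩
      rcases Finset.mem_filter.1 hl with ⟨hls, hlC⟩
      rwa [hinj hls hj hkl] at hlC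
    · intro h
      exact Finset.mem_image.2 ⟨j, Finset.mem_filter.2 ⟨hj, h⟩, rfl⟩
  have hsing : pos ⟂ₘ neg := by
    refine ⟨(T : Set ℝ), T.measurableSet, ?_, ?_⟩
    · rw [hposdef, Measure.finset_sum_apply]
      refine Finset.sum_eq_zero fun j hj => ?_
      rw [Measure.smul_apply, smul_eq_mul]
      rcases le_or_gt (Cc j) 0 with hc | hc
      · rw [Real.toNNReal_of_nonpos hc]; simp
      · rw [Measure.dirac_apply' _ T.measurableSet, Set.indicator_of_notMem, mul_zero]
        intro hmem
        exact absurd ((hmemT j hj).1 hmem) (not_lt.2 hc.le)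
    · rw [hnegdef, Measure.finset_sum_apply]
      refine Finset.sum_eq_zero fun j hj => ?_
      rw [Measure.smul_apply, smul_eq_mul]
      rcases le_or_gt 0 (Cc j) with hc | hc
      · rw [Real.toNNReal_of_nonpos (by linarith)]; simp
      · rw [Measure.dirac_apply' _ T.measurableSet.compl, Set.indicator_of_notMem, mul_zero]
        simp only [Set.mem_compl_iff, not_not]
        exact (hmemT j hj).2 hc
  set jd : JordanDecomposition ℝ :=
    @JordanDecomposition.mk ℝ _ pos neg hposfin hnegfin hsing with hjd
  set μ : ComplexMeasure ℝ := jd.toSignedMeasure.toComplexMeasure 0 with hμ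
  have happly : ∀ B : Set ℝ, MeasurableSet B →
      μ B = ∑ j ∈ s, if kk j ∈ B then (Cc j : ℂ) else 0 := by
    intro B hB
    have hposB : (pos B).toReal = ∑ j ∈ s, (if kk j ∈ B then ((Cc j).toNNReal : ℝ) else 0) := by
      rw [hposdef, Measure.finset_sum_apply]
      rw [ENNReal.toReal_sum (fun j _ => ?_)]
      · refine Finset.sum_congr rfl fun j hj => ?_
        rw [Measure.smul_apply, smul_eq_mul, Measure.dirac_apply' _ hB, Set.indicator_apply]
        by_cases h : kk j ∈ B <;> simp [h]
      · rw [Measure.smul_apply, smul_eq_mul]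
        exact (ENNReal.mul_lt_top ENNReal.coe_lt_top (measure_lt_top _ _)).ne
    have hnegB : (neg B).toReal = ∑ j ∈ s, (if kk j ∈ B then (((-Cc j)).toNNReal : ℝ) else 0) := by
      rw [hnegdef, Measure.finset_sum_apply]
      rw [ENNReal.toReal_sum (fun j _ => ?_)]
      · refine Finset.sum_congr rfl fun j hj => ?_
        rw [Measure.smul_apply, smul_eq_mul, Measure.dirac_apply' _ hB, Set.indicator_apply]
        by_cases h : kk j ∈ B <;> simp [h]
      · rw [Measure.smul_apply, smul_eq_mul]
        exact (ENNReal.mul_lt_top ENNReal.coe_lt_top (measure_lt_top _ _)).ne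
    have hsm : jd.toSignedMeasure B = ∑ j ∈ s, (if kk j ∈ B then Cc j else 0) := by
      rw [JordanDecomposition.toSignedMeasure, VectorMeasure.sub_apply,
        Measure.toSignedMeasure_apply_measurable hB, Measure.toSignedMeasure_apply_measurable hB]
      show (pos B).toReal - (neg B).toReal = _
      rw [hposB, hnegB, ← Finset.sum_sub_distrib]
      refine Finset.sum_congr rfl fun j hj => ?_
      by_cases h : kk j ∈ B
      · simp only [h, if_true, Real.coe_toNNReal', max_zero_sub_max_neg_zero_eq_self]
      · simp [h]
    rw [hμ, SignedMeasure.toComplexMeasure_apply]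
    have hcast : (∑ j ∈ s, if kk j ∈ B then (Cc j : ℂ) else 0)
        = ((∑ j ∈ s, if kk j ∈ B then Cc j else 0 : ℝ) : ℂ) := by
      rw [Complex.ofReal_sum]
      exact Finset.sum_congr rfl fun j _ => by by_cases h : kk j ∈ B <;> simp [h]
    rw [hcast, ← hsm]
    apply Complex.ext <;> simp
  refine ⟨μ, happly, ?_⟩
  intro f
  have hre : ComplexMeasure.re μ = jd.toSignedMeasure := SignedMeasure.re_toComplexMeasure _ _
  have him : ComplexMeasure.im μ = 0 := SignedMeasure.im_toComplexMeasure _ _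
  have hint : ∀ c : ℕ → ℝ,
      ∫ x, f x ∂(∑ j ∈ s, (((c j).toNNReal : ℝ≥0∞) • Measure.dirac (kk j)))
        = ∑ j ∈ s, ((c j).toNNReal : ℝ) • f (kk j) := by
    intro c
    rw [integral_finset_sum_measure (fun j _ =>
      (aux_integrable f (kk j)).smul_measure ENNReal.coe_ne_top)]
    refine Finset.sum_congr rfl fun j hj => ?_
    rw [integral_smul_measure, integral_dirac, ENNReal.coe_toReal]
  rw [cmInt, hre, him, SignedMeasure.toJordanDecomposition_zero,
    JordanDecomposition.toJordanDecomposition_toSignedMeasure]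
  rw [JordanDecomposition.zero_posPart, JordanDecomposition.zero_negPart,
    integral_zero_measure, sub_zero, mul_zero, add_zero]
  have e1 : jd.posPart = ∑ j ∈ s, (((Cc j).toNNReal : ℝ≥0∞) • Measure.dirac (kk j)) := rfl
  have e2 : jd.negPart = ∑ j ∈ s, ((((fun j => -Cc j) j).toNNReal : ℝ≥0∞) • Measure.dirac (kk j)) := rfl
  rw [e1, e2, hint Cc, hint (fun j => -Cc j), ← Finset.sum_sub_distrib]
  refine Finset.sum_congr rfl fun j _ => ?_
  rw [← sub_smul, Real.coe_toNNReal', Real.coe_toNNReal', max_zero_sub_max_neg_zero_eq_self,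
    Complex.real_smul]

open scoped Classical

/-- Corollary 4.2 of the paper. Given frequencies
`k_j(n) ∈ [-k0,k0]` with `Π_{l≠j} |k_l(n) - k_j(n)| ≥ κⁿ` and
`a ∈ ℝ∖[-k0,k0]`, the coefficients `C_j(n) = Π_{l≠j} (k_l(n)-a)/(k_l(n)-k_j(n))`
make `F_n(z) = Σ_{j≤n} C_j(n) e^{i k_j(n) z}` converge to `z ↦ e^{iaz}` in
`𝒜₁(ℂ)`; together with the representation by the complex measures
`μ_n = Σ_{j≤n} C_j(n) δ_{k_j(n)}` the sequence `F_n` is superoscillating. -/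
theorem statement10 (k0 : ℝ) (hk0 : 0 < k0) (κ : ℝ) (hκ : 0 < κ)
    (k : ℕ → ℕ → ℝ) (hk : ∀ n j, j ≤ n → k n j ∈ Set.Icc (-k0) k0)
    (hsep : ∀ n : ℕ, ∀ j ≤ n,
      κ ^ n ≤ ∏ l ∈ (Finset.range (n + 1)).erase j, |k n l - k n j|)
    (a : ℝ) (ha : a ∉ Set.Icc (-k0) k0)
    (C : ℕ → ℕ → ℝ)
    (hC : ∀ n j, C n j = ∏ l ∈ (Finset.range (n + 1)).erase j,
      (k n l - a) / (k n l - k n j))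
    (F : ℕ → ℂ → ℂ)
    (hF : ∀ n z, F n z = ∑ j ∈ Finset.range (n + 1),
      (C n j : ℂ) * Complex.exp (Complex.I * (k n j : ℂ) * z)) :
    TendstoA1 F (fun z => Complex.exp (Complex.I * (a : ℂ) * z)) ∧
    ∀ n : ℕ, ∃ μ : ComplexMeasure ℝ, cmSupportedIn μ (Set.Icc (-k0) k0) ∧
      (∀ B : Set ℝ, MeasurableSet B →
        μ B = ∑ j ∈ Finset.range (n + 1), if k n j ∈ B then (C n j : ℂ) else 0) ∧
      ∀ z : ℂ, F n z = cmInt μ (fun x => Complex.exp (Complex.I * (x : ℂ) * z)) := by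
  constructor
  · refine ⟨max |a| k0 + 2 * max 1 ((|a|+k0)/κ) * max |a| k0, by positivity, ?_⟩
    intro ε hε
    have h1 : Summable (fun n : ℕ => ((n:ℝ)) * (1/2:ℝ)^n) := by
      simpa using summable_pow_mul_geometric_of_norm_lt_one 1 (r := (1/2:ℝ)) (by norm_num)
    have h2 : Summable (fun n : ℕ => (2:ℝ) * (1/2:ℝ)^n) :=
      (summable_geometric_of_lt_one (by norm_num) (by norm_num)).mul_left 2
    have hsum : Summable (fun n : ℕ => ((n:ℝ)+2)/2^(n+1)) := by
      refine Summable.of_nonneg_of_le (fun n => by positivity) (fun n => ?_) (h1.add h2)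
      have hstep : ((n:ℝ)+2)/2^(n+1) ≤ ((n:ℝ)+2)/2^n :=
        div_le_div_of_nonneg_left (by positivity) (by positivity)
          (pow_le_pow_right₀ one_le_two (Nat.le_succ n))
      refine hstep.trans (le_of_eq ?_)
      rw [div_eq_mul_inv, ← one_div, div_pow, one_pow]
      ring
    have htend := hsum.tendsto_atTop_zero
    rw [Metric.tendsto_atTop] at htend
    rcases htend ε hε with ⟨N, hN⟩
    refine ⟨N, fun n hn z => ?_⟩
    have hb := aux_bound k0 κ a hk0 hκ n (k n) (fun j hj => hk n j hj) (hsep n) (C n)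
      (fun j => hC n j) z
    simp only [hF]
    refine hb.trans ?_
    have hDn : ((n:ℝ)+2)/2^(n+1) ≤ ε := by
      have := hN n hn
      rw [Real.dist_eq, sub_zero, _root_.abs_of_nonneg (by positivity)] at this
      linarith
    exact mul_le_mul_of_nonneg_right hDn (Real.exp_nonneg _)
  · intro n
    have hinj := aux_inj κ hκ n (k n) (hsep n)
    obtain ⟨μ, happ, hint⟩ := aux_measure k0 n (k n) (fun j hj => hk n j hj) hinj (C n)
    refine ⟨μ, ?_, happ, ?_⟩
    · intro B hB hdisj
      rw [happ B hB]
      refine Finset.sum_eq_zero fun j hj => ?_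
      have hmem : k n j ∉ B := fun hmem =>
        Set.disjoint_left.1 hdisj hmem (hk n j (Nat.lt_succ_iff.1 (Finset.mem_range.1 hj)))
      simp [hmem]
    · intro z
      rw [hF, hint (fun x => Complex.exp (Complex.I * x * z))]
end

section
/- For n ∈ ℕ, n ≥ 1, and the frequencies k_j(n) = 1 − 2j/n, j ∈ {0,…,n}, one has for every j ∈ {0,…,n} the lower bound Π_{l=0, l≠j}^{n} |k_l(n) − k_j(n)| = 2ⁿ n! / (nⁿ · binom(n,j)) ≥ e^{−n}. -/
open Finset

lemma aux_prod_sub (j : ℕ) : ∏ l ∈ range j, (j - l) = j.factorial := by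
  rw [← Finset.prod_range_reflect]
  rw [← Finset.prod_range_add_one_eq_factorial]
  apply Finset.prod_congr rfl
  intro l hl
  simp only [Finset.mem_range] at hl
  omega

lemma aux_pow_le (n : ℕ) : (n : ℝ) ^ n ≤ Real.exp n * n.factorial := by
  have h1 : (n : ℝ) ^ n / n.factorial ≤ Real.exp n := by
    have := Real.sum_le_exp_of_nonneg (x := (n : ℝ)) (by positivity) (n + 1)
    refine le_trans ?_ this
    have := Finset.single_le_sum (f := fun i => (n : ℝ) ^ i / i.factorial)
      (fun i _ => by positivity) (Finset.self_mem_range_succ n)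
    simpa using this
  have hf : (0 : ℝ) < n.factorial := by positivity
  rw [div_le_iff₀ hf] at h1
  linarith

/-- Remark 4.3 of the paper. For `n ≥ 1` and the frequencies
`k_j(n) = 1 - 2j/n`, `j ∈ {0,…,n}`, one has
`Π_{l≠j} |k_l(n) - k_j(n)| = 2ⁿ n! / (nⁿ · binom(n,j)) ≥ e^{-n}`. -/
theorem statement11 (n : ℕ) (hn : 1 ≤ n) (k : ℕ → ℝ)
    (hk : ∀ j : ℕ, k j = 1 - 2 * (j : ℝ) / (n : ℝ)) :
    ∀ j ≤ n,
      (∏ l ∈ (Finset.range (n + 1)).erase j, |k l - k j|) =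
        2 ^ n * (Nat.factorial n : ℝ) / ((n : ℝ) ^ n * (Nat.choose n j : ℝ)) ∧
      Real.exp (-(n : ℝ)) ≤
        2 ^ n * (Nat.factorial n : ℝ) / ((n : ℝ) ^ n * (Nat.choose n j : ℝ)) := by
  intro j hj
  have hn0 : (0 : ℝ) < n := by exact_mod_cast hn
  have hC : 0 < n.choose j := Nat.choose_pos hj
  have hCR : (0 : ℝ) < n.choose j := by exact_mod_cast hC
  constructor
  · -- product formula
    have hsplit : (Finset.range (n + 1)).erase j =
        Finset.range j ∪ Finset.Ico (j + 1) (n + 1) := by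
      ext l
      simp only [mem_erase, mem_range, mem_union, mem_Ico]
      omega
    have hdisj : Disjoint (Finset.range j) (Finset.Ico (j + 1) (n + 1)) := by
      rw [Finset.disjoint_left]
      intro l hl hl'
      simp only [mem_range] at hl
      simp only [mem_Ico] at hl'
      omega
    have hfac : ∀ l : ℕ, |k l - k j| = 2 / n * |(j : ℝ) - l| := by
      intro l
      rw [hk l, hk j]
      rw [← abs_of_pos (show (0:ℝ) < 2 / n by positivity), ← abs_mul]
      ring_nf
    calc ∏ l ∈ (Finset.range (n + 1)).erase j, |k l - k j|
        = ∏ l ∈ (Finset.range (n + 1)).erase j, (2 / n * |(j : ℝ) - l|) :=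
          Finset.prod_congr rfl fun l _ => hfac l
      _ = (2 / n) ^ n * ∏ l ∈ (Finset.range (n + 1)).erase j, |(j : ℝ) - l| := by
          rw [Finset.prod_mul_distrib, Finset.prod_const,
            Finset.card_erase_of_mem (by simp; omega), Finset.card_range, Nat.add_sub_cancel]
      _ = (2 / n) ^ n * ((j.factorial : ℝ) * (n - j).factorial) := by
          congr 1
          rw [hsplit, Finset.prod_union hdisj]
          have h1 : ∏ l ∈ Finset.range j, |(j : ℝ) - l| = (j.factorial : ℝ) := by
            rw [← aux_prod_sub j]
            push_cast
            apply Finset.prod_congr rfl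
            intro l hl
            simp only [mem_range] at hl
            rw [Nat.cast_sub hl.le, abs_of_nonneg (by
              have : (l : ℝ) ≤ j := by exact_mod_cast hl.le
              linarith)]
          have h2 : ∏ l ∈ Finset.Ico (j + 1) (n + 1), |(j : ℝ) - l|
              = ((n - j).factorial : ℝ) := by
            rw [← Finset.prod_range_add_one_eq_factorial]
            rw [Finset.prod_Ico_eq_prod_range]
            have hcard : n + 1 - (j + 1) = n - j := by omega
            rw [hcard]
            push_cast
            apply Finset.prod_congr rfl
            intro i _
            rw [abs_sub_comm, abs_of_nonneg (by push_cast; linarith)]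
            push_cast
            ring
          rw [h1, h2]
      _ = 2 ^ n * (Nat.factorial n : ℝ) / ((n : ℝ) ^ n * (Nat.choose n j : ℝ)) := by
          have key : (n.choose j : ℝ) * j.factorial * (n - j).factorial
              = n.factorial := by
            exact_mod_cast Nat.choose_mul_factorial_mul_factorial hj
          rw [← key, div_pow]
          field_simp
  · -- lower bound
    rw [Real.exp_neg, ← one_div, div_le_div_iff₀ (Real.exp_pos _) (by positivity), one_mul]
    have h1 : (n : ℝ) ^ n ≤ Real.exp n * n.factorial := aux_pow_le n
    have h2 : (n.choose j : ℝ) ≤ 2 ^ n := by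
      exact_mod_cast le_trans (Finset.single_le_sum
        (f := fun m => n.choose m) (fun _ _ => Nat.zero_le _)
        (Finset.mem_range_succ_iff.mpr hj)) (le_of_eq (Nat.sum_range_choose n))
    calc (n : ℝ) ^ n * (n.choose j : ℝ) ≤ (Real.exp n * n.factorial) * 2 ^ n := by
          apply mul_le_mul h1 h2 (by positivity) (by positivity)
      _ = 2 ^ n * (n.factorial : ℝ) * Real.exp n := by ring
end

section
/- Let H : ℂ → ℂ be an entire function with power series H(z) = Σ_{l=0}^∞ h_l z^l, let k0 > 0, and let μ be a complex Borel measure on [−k0,k0]. Define Ψ(t,z) = ∫_{−k0}^{k0} e^{iH(k)t} e^{ikz} dμ(k) for t, z ∈ ℂ. Then for every fixed t the function z ↦ Ψ(t,z) is entire, for every fixed z the function t ↦ Ψ(t,z) is entire, the series Σ_{l=0}^∞ h_l (−i)^l ∂_z^l Ψ(t,z) converges for all t, z ∈ ℂ, and Ψ solves the generalized Schrödinger equation i ∂_t Ψ(t,z) = − Σ_{l=0}^∞ h_l (−i)^l ∂_z^l Ψ(t,z) with initial condition Ψ(0,z) = ∫_{−k0}^{k0} e^{ikz} dμ(k). -/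
open MeasureTheory Complex Filter Set Topology

lemma cmInt_const_mul (μ : ComplexMeasure ℝ) (c : ℂ) (f : ℝ → ℂ) :
    cmInt μ (fun k => c * f k) = c * cmInt μ f := by
  simp only [cmInt, integral_const_mul]
  ring

set_option linter.unusedSectionVars false
set_option linter.unusedVariables false
set_option maxHeartbeats 1000000


lemma jordan_null (s : SignedMeasure ℝ) {S : Set ℝ} (hS : MeasurableSet S)
    (h0 : ∀ B : Set ℝ, MeasurableSet B → Disjoint B S → s B = 0) :
    s.toJordanDecomposition.posPart Sᶜ = 0 ∧ s.toJordanDecomposition.negPart Sᶜ = 0 := by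
  obtain ⟨u, hu, -, -, hpos, hneg⟩ :=
    s.toJordanDecomposition.exists_compl_positive_negative
  have happ : ∀ B : Set ℝ, MeasurableSet B →
      s B = (s.toJordanDecomposition.posPart B).toReal
        - (s.toJordanDecomposition.negPart B).toReal := by
    intro B hB
    conv_lhs => rw [← s.toSignedMeasure_toJordanDecomposition]
    rw [JordanDecomposition.toSignedMeasure, Measure.toSignedMeasure_sub_apply hB]; rfl
  constructor
  · have hB1 : MeasurableSet (Sᶜ ∩ uᶜ) := hS.compl.inter hu.compl
    have hneg1 : s.toJordanDecomposition.negPart (Sᶜ ∩ uᶜ) = 0 :=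
      measure_mono_null inter_subset_right hneg
    have hs1 : s (Sᶜ ∩ uᶜ) = 0 :=
      h0 _ hB1 (disjoint_compl_left.mono_left inter_subset_left)
    have hpos1 : s.toJordanDecomposition.posPart (Sᶜ ∩ uᶜ) = 0 := by
      have := happ _ hB1
      rw [hs1, hneg1] at this
      have h2 : (s.toJordanDecomposition.posPart (Sᶜ ∩ uᶜ)).toReal = 0 := by
        simp only [ENNReal.toReal_zero] at this; linarith
      exact ((ENNReal.toReal_eq_zero_iff _).1 h2).resolve_right (measure_ne_top _ _)
    have : Sᶜ ⊆ (Sᶜ ∩ uᶜ) ∪ u := by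
      intro x hx
      by_cases hxu : x ∈ u
      · exact Or.inr hxu
      · exact Or.inl ⟨hx, hxu⟩
    exact measure_mono_null this (measure_union_null hpos1 hpos)
  · have hB2 : MeasurableSet (Sᶜ ∩ u) := hS.compl.inter hu
    have hpos2 : s.toJordanDecomposition.posPart (Sᶜ ∩ u) = 0 :=
      measure_mono_null inter_subset_right hpos
    have hs2 : s (Sᶜ ∩ u) = 0 :=
      h0 _ hB2 (disjoint_compl_left.mono_left inter_subset_left)
    have hneg2 : s.toJordanDecomposition.negPart (Sᶜ ∩ u) = 0 := by
      have := happ _ hB2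
      rw [hs2, hpos2] at this
      have h2 : (s.toJordanDecomposition.negPart (Sᶜ ∩ u)).toReal = 0 := by
        simp only [ENNReal.toReal_zero] at this; linarith
      exact ((ENNReal.toReal_eq_zero_iff _).1 h2).resolve_right (measure_ne_top _ _)
    have : Sᶜ ⊆ (Sᶜ ∩ u) ∪ uᶜ := by
      intro x hx
      by_cases hxu : x ∈ u
      · exact Or.inl ⟨hx, hxu⟩
      · exact Or.inr hxu
    exact measure_mono_null this (measure_union_null hneg2 hneg)

section core

variable {H : ℂ → ℂ} {k0 C0 : ℝ}

lemma norm_cexp_le (w : ℂ) : ‖Complex.exp w‖ ≤ Real.exp ‖w‖ := by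
  rw [Complex.norm_exp]
  exact Real.exp_le_exp.2 (Complex.re_le_norm w)

lemma normE_le (hHb : ∀ x : ℝ, |x| ≤ k0 → ‖H x‖ ≤ C0) (t z : ℂ) {k : ℝ} (hk : |k| ≤ k0) :
    ‖Complex.exp (Complex.I * H k * t) * Complex.exp (Complex.I * k * z)‖ ≤
      Real.exp (C0 * ‖t‖ + k0 * ‖z‖) := by
  rw [norm_mul]
  have h1 : ‖Complex.exp (Complex.I * H k * t)‖ ≤ Real.exp (C0 * ‖t‖) := by
    refine (norm_cexp_le _).trans (Real.exp_le_exp.2 ?_)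
    calc ‖Complex.I * H k * t‖ = ‖H (k:ℂ)‖ * ‖t‖ := by
          rw [norm_mul, norm_mul, Complex.norm_I, one_mul]
      _ ≤ C0 * ‖t‖ := by
          exact mul_le_mul_of_nonneg_right (hHb k hk) (norm_nonneg _)
  have h2 : ‖Complex.exp (Complex.I * k * z)‖ ≤ Real.exp (k0 * ‖z‖) := by
    refine (norm_cexp_le _).trans (Real.exp_le_exp.2 ?_)
    calc ‖Complex.I * k * z‖ = |k| * ‖z‖ := by
          rw [norm_mul, norm_mul, Complex.norm_I, one_mul, Complex.norm_real,
            Real.norm_eq_abs]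
      _ ≤ k0 * ‖z‖ := mul_le_mul_of_nonneg_right hk (norm_nonneg _)
  calc _ ≤ Real.exp (C0 * ‖t‖) * Real.exp (k0 * ‖z‖) :=
        mul_le_mul h1 h2 (norm_nonneg _) (Real.exp_nonneg _)
    _ = Real.exp (C0 * ‖t‖ + k0 * ‖z‖) := (Real.exp_add _ _).symm

lemma measE (hHm : Measurable fun x : ℝ => H x) (t z : ℂ) :
    Measurable fun k : ℝ => Complex.exp (Complex.I * H k * t) * Complex.exp (Complex.I * k * z) := by
  apply Measurable.mul
  · exact Complex.measurable_exp.comp ((hHm.const_mul Complex.I).mul_const t)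
  · exact Complex.measurable_exp.comp
      ((Complex.measurable_ofReal.const_mul Complex.I).mul_const z)

variable {ν : Measure ℝ} [IsFiniteMeasure ν]

lemma ae_abs_le (hν : ν (Set.Icc (-k0) k0)ᶜ = 0) : ∀ᵐ k ∂ν, |k| ≤ k0 := by
  rw [ae_iff]
  refine measure_mono_null ?_ hν
  intro x hx
  simp only [mem_compl_iff, mem_Icc, mem_setOf_eq] at hx ⊢
  rw [abs_le] at hx
  tauto

lemma int_of_bound {f : ℝ → ℂ} (hν : ν (Set.Icc (-k0) k0)ᶜ = 0) (hm : Measurable f) {D : ℝ}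
    (hD : ∀ k : ℝ, |k| ≤ k0 → ‖f k‖ ≤ D) : Integrable f ν :=
  ⟨hm.aestronglyMeasurable,
    HasFiniteIntegral.of_bounded ((ae_abs_le hν).mono fun k hk => hD k hk)⟩


lemma hasDerivAt_z (hHm : Measurable fun x : ℝ => H x)
    (hHb : ∀ x : ℝ, |x| ≤ k0 → ‖H x‖ ≤ C0) (hk0 : 0 < k0)
    (hν : ν (Set.Icc (-k0) k0)ᶜ = 0) (l : ℕ) (t z : ℂ) :
    HasDerivAt (fun w => ∫ k, (Complex.I * k) ^ l *
        (Complex.exp (Complex.I * H k * t) * Complex.exp (Complex.I * k * w)) ∂ν)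
      (∫ k, (Complex.I * k) ^ (l + 1) *
        (Complex.exp (Complex.I * H k * t) * Complex.exp (Complex.I * k * z)) ∂ν) z := by
  have hmeas : ∀ (m : ℕ) (w : ℂ), Measurable fun k : ℝ => (Complex.I * k) ^ m *
      (Complex.exp (Complex.I * H k * t) * Complex.exp (Complex.I * k * w)) :=
    fun m w => ((Complex.measurable_ofReal.const_mul Complex.I).pow_const m).mul (measE hHm t w)
  have hnormIk : ∀ (k : ℝ), ‖Complex.I * (k : ℂ)‖ = |k| := by
    intro k
    rw [norm_mul, Complex.norm_I, one_mul, Complex.norm_real, Real.norm_eq_abs]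
  have hbnd : ∀ (m : ℕ) (w : ℂ) (k : ℝ), |k| ≤ k0 →
      ‖(Complex.I * k) ^ m * (Complex.exp (Complex.I * H k * t) *
        Complex.exp (Complex.I * k * w))‖ ≤ k0 ^ m * Real.exp (C0 * ‖t‖ + k0 * ‖w‖) := by
    intro m w k hk
    rw [norm_mul, norm_pow, hnormIk]
    exact mul_le_mul (pow_le_pow_left₀ (abs_nonneg k) hk m) (normE_le hHb t w hk)
      (norm_nonneg _) (pow_nonneg hk0.le m)
  refine (hasDerivAt_integral_of_dominated_loc_of_deriv_le (Metric.ball_mem_nhds z one_pos)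
    (Filter.Eventually.of_forall fun w => (hmeas l w).aestronglyMeasurable)
    (int_of_bound hν (hmeas l z) (hbnd l z))
    (F' := fun w k => (Complex.I * k) ^ (l + 1) *
      (Complex.exp (Complex.I * H k * t) * Complex.exp (Complex.I * k * w)))
    (hmeas (l + 1) z).aestronglyMeasurable
    (bound := fun _ => k0 ^ (l + 1) * Real.exp (C0 * ‖t‖ + k0 * (‖z‖ + 1)))
    ?_ (integrable_const _) ?_).2
  · filter_upwards [ae_abs_le hν] with k hk
    intro w hw
    refine (hbnd (l + 1) w k hk).trans ?_
    have hwz : ‖w‖ ≤ ‖z‖ + 1 := by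
      have := mem_ball_iff_norm.1 hw
      calc ‖w‖ = ‖z + (w - z)‖ := by ring_nf
        _ ≤ ‖z‖ + ‖w - z‖ := norm_add_le _ _
        _ ≤ ‖z‖ + 1 := by linarith
    have : C0 * ‖t‖ + k0 * ‖w‖ ≤ C0 * ‖t‖ + k0 * (‖z‖ + 1) := by nlinarith
    exact mul_le_mul_of_nonneg_left (Real.exp_le_exp.2 this) (pow_nonneg hk0.le _)
  · refine Filter.Eventually.of_forall fun k => fun w _ => ?_
    have h1 : HasDerivAt (fun w : ℂ => Complex.I * k * w) (Complex.I * k) w := by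
      simpa using (hasDerivAt_id w).const_mul (Complex.I * (k : ℂ))
    have h2 := h1.cexp
    have h3 := h2.const_mul ((Complex.I * (k : ℂ)) ^ l * Complex.exp (Complex.I * H k * t))
    have h4 : HasDerivAt (fun w => (Complex.I * k) ^ l *
        (Complex.exp (Complex.I * H k * t) * Complex.exp (Complex.I * k * w)))
        ((Complex.I * k) ^ (l + 1) *
        (Complex.exp (Complex.I * H k * t) * Complex.exp (Complex.I * k * w))) w := by
      have e : (fun w => (Complex.I * k) ^ l *
          (Complex.exp (Complex.I * H k * t) * Complex.exp (Complex.I * k * w))) =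
          fun y => (Complex.I * (k : ℂ)) ^ l * Complex.exp (Complex.I * H k * t) *
          Complex.exp (Complex.I * k * y) := by
        funext x; ring
      rw [e]
      exact h3.congr_deriv (by simp only [pow_succ]; ring)
    exact h4

lemma hasDerivAt_t (hHm : Measurable fun x : ℝ => H x)
    (hHb : ∀ x : ℝ, |x| ≤ k0 → ‖H x‖ ≤ C0) (hk0 : 0 < k0) (hC0 : 0 ≤ C0)
    (hν : ν (Set.Icc (-k0) k0)ᶜ = 0) (t z : ℂ) :
    HasDerivAt (fun s => ∫ k,
        Complex.exp (Complex.I * H k * s) * Complex.exp (Complex.I * k * z) ∂ν)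
      (∫ k, (Complex.I * H k) *
        (Complex.exp (Complex.I * H k * t) * Complex.exp (Complex.I * k * z)) ∂ν) t := by
  have hmeas : ∀ s : ℂ, Measurable fun k : ℝ =>
      Complex.exp (Complex.I * H k * s) * Complex.exp (Complex.I * k * z) :=
    fun s => measE hHm s z
  have hmeas' : Measurable fun k : ℝ => (Complex.I * H k) *
      (Complex.exp (Complex.I * H k * t) * Complex.exp (Complex.I * k * z)) :=
    (hHm.const_mul Complex.I).mul (measE hHm t z)
  refine (hasDerivAt_integral_of_dominated_loc_of_deriv_le (Metric.ball_mem_nhds t one_pos)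
    (Filter.Eventually.of_forall fun s => (hmeas s).aestronglyMeasurable)
    (int_of_bound hν (hmeas t) (fun k hk => normE_le hHb t z hk))
    (F' := fun s k => (Complex.I * H k) *
      (Complex.exp (Complex.I * H k * s) * Complex.exp (Complex.I * k * z)))
    hmeas'.aestronglyMeasurable
    (bound := fun _ => C0 * Real.exp (C0 * (‖t‖ + 1) + k0 * ‖z‖))
    ?_ (integrable_const _) ?_).2
  · filter_upwards [ae_abs_le hν] with k hk
    intro s hs
    rw [norm_mul]
    have h1 : ‖Complex.I * H (k : ℂ)‖ ≤ C0 := by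
      rw [norm_mul, Complex.norm_I, one_mul]; exact hHb k hk
    have hst : ‖s‖ ≤ ‖t‖ + 1 := by
      have := mem_ball_iff_norm.1 hs
      calc ‖s‖ = ‖t + (s - t)‖ := by ring_nf
        _ ≤ ‖t‖ + ‖s - t‖ := norm_add_le _ _
        _ ≤ ‖t‖ + 1 := by linarith
    have h2 : ‖Complex.exp (Complex.I * H k * s) * Complex.exp (Complex.I * k * z)‖ ≤
        Real.exp (C0 * (‖t‖ + 1) + k0 * ‖z‖) := by
      refine (normE_le hHb s z hk).trans (Real.exp_le_exp.2 ?_)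
      nlinarith
    exact mul_le_mul h1 h2 (norm_nonneg _) hC0
  · refine Filter.Eventually.of_forall fun k => fun s _ => ?_
    have h1 : HasDerivAt (fun s : ℂ => Complex.I * H k * s) (Complex.I * H k) s := by
      simpa using (hasDerivAt_id s).const_mul (Complex.I * H (k : ℂ))
    have h2 := h1.cexp.mul_const (Complex.exp (Complex.I * k * z))
    have h3 : HasDerivAt (fun s => Complex.exp (Complex.I * H k * s) *
        Complex.exp (Complex.I * k * z)) ((Complex.I * H k) *
        (Complex.exp (Complex.I * H k * s) * Complex.exp (Complex.I * k * z))) s := by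
      exact h2.congr_deriv (by ring)
    exact h3

lemma norm_term_le {h : ℕ → ℂ} (hHb : ∀ x : ℝ, |x| ≤ k0 → ‖H x‖ ≤ C0)
    (hk0 : 0 < k0) (t z : ℂ) (l : ℕ) {k : ℝ} (hk : |k| ≤ k0) :
    ‖h l * (k : ℂ) ^ l * (Complex.exp (Complex.I * H k * t) *
      Complex.exp (Complex.I * k * z))‖ ≤
      ‖h l‖ * k0 ^ l * Real.exp (C0 * ‖t‖ + k0 * ‖z‖) := by
  rw [norm_mul, norm_mul, norm_pow, Complex.norm_real, Real.norm_eq_abs]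
  refine mul_le_mul (mul_le_mul le_rfl (pow_le_pow_left₀ (abs_nonneg k) hk l)
    (pow_nonneg (abs_nonneg k) l) (norm_nonneg _)) (normE_le hHb t z hk)
    (norm_nonneg _) (by positivity)

lemma meas_term {h : ℕ → ℂ} (hHm : Measurable fun x : ℝ => H x) (t z : ℂ) (l : ℕ) :
    Measurable fun k : ℝ => h l * (k : ℂ) ^ l * (Complex.exp (Complex.I * H k * t) *
      Complex.exp (Complex.I * k * z)) :=
  ((Complex.measurable_ofReal.pow_const l).const_mul (h l)).mul (measE hHm t z)

lemma summable_int {h : ℕ → ℂ} (hs : Summable fun l : ℕ => ‖h l‖ * k0 ^ l)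
    (hHb : ∀ x : ℝ, |x| ≤ k0 → ‖H x‖ ≤ C0) (hk0 : 0 < k0)
    (hν : ν (Set.Icc (-k0) k0)ᶜ = 0) (t z : ℂ) :
    Summable (fun l : ℕ => ∫ k, h l * (k : ℂ) ^ l *
      (Complex.exp (Complex.I * H k * t) * Complex.exp (Complex.I * k * z)) ∂ν) := by
  refine Summable.of_norm_bounded
    (g := fun l => (‖h l‖ * k0 ^ l) *
      (Real.exp (C0 * ‖t‖ + k0 * ‖z‖) * (ν Set.univ).toReal))
    (hs.mul_right _) fun l => ?_
  have := norm_integral_le_of_norm_le_const (μ := ν)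
    (C := ‖h l‖ * k0 ^ l * Real.exp (C0 * ‖t‖ + k0 * ‖z‖))
    ((ae_abs_le hν).mono fun k hk => norm_term_le hHb hk0 t z l hk)
  calc _ ≤ (‖h l‖ * k0 ^ l * Real.exp (C0 * ‖t‖ + k0 * ‖z‖)) * (ν Set.univ).toReal := this
    _ = _ := by ring

lemma tsum_int {h : ℕ → ℂ} (hH : ∀ w : ℂ, HasSum (fun l : ℕ => h l * w ^ l) (H w))
    (hs : Summable fun l : ℕ => ‖h l‖ * k0 ^ l)
    (hC0 : ∑' l : ℕ, ‖h l‖ * k0 ^ l ≤ C0)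
    (hHm : Measurable fun x : ℝ => H x)
    (hHb : ∀ x : ℝ, |x| ≤ k0 → ‖H x‖ ≤ C0) (hk0 : 0 < k0)
    (hν : ν (Set.Icc (-k0) k0)ᶜ = 0) (t z : ℂ) :
    (∑' l : ℕ, ∫ k, h l * (k : ℂ) ^ l *
      (Complex.exp (Complex.I * H k * t) * Complex.exp (Complex.I * k * z)) ∂ν) =
    ∫ k, H k * (Complex.exp (Complex.I * H k * t) * Complex.exp (Complex.I * k * z)) ∂ν := by
  have hsumm := summable_int (H := H) (C0 := C0) hs hHb hk0 hν t z
  have hps := hsumm.hasSum.tendsto_sum_nat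
  have hint : ∀ l : ℕ, Integrable (fun k : ℝ => h l * (k : ℂ) ^ l *
      (Complex.exp (Complex.I * H k * t) * Complex.exp (Complex.I * k * z))) ν :=
    fun l => int_of_bound hν (meas_term hHm t z l) fun k hk => norm_term_le hHb hk0 t z l hk
  have heq : ∀ n : ℕ, (∑ l ∈ Finset.range n, ∫ k, h l * (k : ℂ) ^ l *
      (Complex.exp (Complex.I * H k * t) * Complex.exp (Complex.I * k * z)) ∂ν) =
      ∫ k, (∑ l ∈ Finset.range n, h l * (k : ℂ) ^ l) *
      (Complex.exp (Complex.I * H k * t) * Complex.exp (Complex.I * k * z)) ∂ν := by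
    intro n
    rw [← integral_finset_sum _ fun l _ => hint l]
    congr 1
    funext k
    rw [Finset.sum_mul]
  have hdct : Tendsto (fun n : ℕ => ∫ k, (∑ l ∈ Finset.range n, h l * (k : ℂ) ^ l) *
      (Complex.exp (Complex.I * H k * t) * Complex.exp (Complex.I * k * z)) ∂ν) atTop
      (𝓝 (∫ k, H k * (Complex.exp (Complex.I * H k * t) *
        Complex.exp (Complex.I * k * z)) ∂ν)) := by
    refine tendsto_integral_of_dominated_convergence
      (bound := fun _ => C0 * Real.exp (C0 * ‖t‖ + k0 * ‖z‖))
      (fun n => ?_) (integrable_const _) (fun n => ?_) ?_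
    · exact ((Finset.measurable_sum (Finset.range n) fun l _ =>
        (Complex.measurable_ofReal.pow_const l).const_mul (h l)).mul
        (measE hHm t z)).aestronglyMeasurable
    · filter_upwards [ae_abs_le hν] with k hk
      rw [norm_mul]
      have h1 : ‖∑ l ∈ Finset.range n, h l * (k : ℂ) ^ l‖ ≤ C0 := by
        refine (norm_sum_le _ _).trans ?_
        refine le_trans ?_ hC0
        refine (Finset.sum_le_sum fun l _ => ?_).trans
          (Summable.sum_le_tsum (Finset.range n) (fun l _ => by positivity) hs)
        rw [norm_mul, norm_pow, Complex.norm_real, Real.norm_eq_abs]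
        exact mul_le_mul_of_nonneg_left (pow_le_pow_left₀ (abs_nonneg k) hk l) (norm_nonneg _)
      exact mul_le_mul h1 (normE_le hHb t z hk) (norm_nonneg _)
        (le_trans (by positivity) (le_trans (Summable.sum_le_tsum (Finset.range 0)
          (fun l _ => by positivity) hs) hC0))
    · refine Filter.Eventually.of_forall fun k => ?_
      exact ((hH k).tendsto_sum_nat).mul_const _
  have := hps
  rw [funext heq] at this
  exact tendsto_nhds_unique this hdct

end core


/-- Lemma 5.1 of the paper. For an entire function
`H(z) = Σ h_l z^l` and a complex Borel measure `μ` on `[-k0,k0]`, the function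
`Ψ(t,z) = ∫_{-k0}^{k0} e^{iH(k)t} e^{ikz} dμ(k)` is entire in each variable,
the series `Σ_l h_l (-i)^l ∂_z^l Ψ(t,z)` converges, and `Ψ` solves the
generalized Schrödinger equation `i ∂_t Ψ = -Σ_l h_l (-i)^l ∂_z^l Ψ` with
initial condition `Ψ(0,z) = ∫_{-k0}^{k0} e^{ikz} dμ(k)`. -/
theorem statement14 (H : ℂ → ℂ) (h : ℕ → ℂ)
    (hH : ∀ z : ℂ, HasSum (fun l : ℕ => h l * z ^ l) (H z))
    (k0 : ℝ) (hk0 : 0 < k0) (μ : ComplexMeasure ℝ)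
    (hsupp : cmSupportedIn μ (Set.Icc (-k0) k0))
    (Ψ : ℂ → ℂ → ℂ)
    (hΨ : ∀ t z : ℂ, Ψ t z = cmInt μ (fun k =>
      Complex.exp (Complex.I * H (k : ℂ) * t) * Complex.exp (Complex.I * (k : ℂ) * z))) :
    (∀ t : ℂ, Differentiable ℂ (fun z => Ψ t z)) ∧
    (∀ z : ℂ, Differentiable ℂ (fun t => Ψ t z)) ∧
    (∀ t z : ℂ, Summable (fun l : ℕ =>
      h l * (-Complex.I) ^ l * iteratedDeriv l (fun w => Ψ t w) z)) ∧
    (∀ t z : ℂ, Complex.I * deriv (fun s => Ψ s z) t =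
      -∑' l : ℕ, h l * (-Complex.I) ^ l * iteratedDeriv l (fun w => Ψ t w) z) ∧
    (∀ z : ℂ, Ψ 0 z = cmInt μ (fun k => Complex.exp (Complex.I * (k : ℂ) * z))) := by
  have hs : Summable fun l : ℕ => ‖h l‖ * k0 ^ l := by
    have h1 : Summable fun l : ℕ => ‖h l * (k0 : ℂ) ^ l‖ :=
      summable_norm_iff.2 (hH (k0 : ℂ)).summable
    simpa [norm_mul, norm_pow, Complex.norm_real, Real.norm_eq_abs,
      abs_of_pos hk0] using h1
  set C0 : ℝ := ∑' l : ℕ, ‖h l‖ * k0 ^ l with hC0def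
  have hC0 : 0 ≤ C0 := tsum_nonneg fun l => by positivity
  have hC0le : ∑' l : ℕ, ‖h l‖ * k0 ^ l ≤ C0 := le_of_eq rfl
  have hHb : ∀ x : ℝ, |x| ≤ k0 → ‖H x‖ ≤ C0 := by
    intro x hx
    have hsx : Summable fun l : ℕ => ‖h l * (x : ℂ) ^ l‖ :=
      summable_norm_iff.2 (hH (x : ℂ)).summable
    calc ‖H (x : ℂ)‖ = ‖∑' l : ℕ, h l * (x : ℂ) ^ l‖ := by rw [(hH (x : ℂ)).tsum_eq]
      _ ≤ ∑' l : ℕ, ‖h l * (x : ℂ) ^ l‖ := norm_tsum_le_tsum_norm hsx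
      _ ≤ C0 := by
          refine Summable.tsum_le_tsum (fun l => ?_) hsx hs
          rw [norm_mul, norm_pow, Complex.norm_real, Real.norm_eq_abs]
          exact mul_le_mul_of_nonneg_left (pow_le_pow_left₀ (abs_nonneg x) hx l)
            (norm_nonneg _)
  have hHm : Measurable fun x : ℝ => H x := by
    refine measurable_of_tendsto_metrizable
      (f := fun n (x : ℝ) => ∑ l ∈ Finset.range n, h l * (x : ℂ) ^ l)
      (fun n => Finset.measurable_sum _ fun l _ =>
        (Complex.measurable_ofReal.pow_const l).const_mul (h l)) ?_
    rw [tendsto_pi_nhds]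
    exact fun x => (hH (x : ℂ)).tendsto_sum_nat
  set ν₁ := (ComplexMeasure.re μ).toJordanDecomposition.posPart with hν₁def
  set ν₂ := (ComplexMeasure.re μ).toJordanDecomposition.negPart with hν₂def
  set ν₃ := (ComplexMeasure.im μ).toJordanDecomposition.posPart with hν₃def
  set ν₄ := (ComplexMeasure.im μ).toJordanDecomposition.negPart with hν₄def
  have hre : ∀ B : Set ℝ, MeasurableSet B → Disjoint B (Set.Icc (-k0) k0) →
      (ComplexMeasure.re μ) B = 0 := by
    intro B hB hd
    show (μ B).re = 0
    rw [hsupp B hB hd, Complex.zero_re]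
  have him : ∀ B : Set ℝ, MeasurableSet B → Disjoint B (Set.Icc (-k0) k0) →
      (ComplexMeasure.im μ) B = 0 := by
    intro B hB hd
    show (μ B).im = 0
    rw [hsupp B hB hd, Complex.zero_im]
  have hn₁ : ν₁ (Set.Icc (-k0) k0)ᶜ = 0 := (jordan_null _ measurableSet_Icc hre).1
  have hn₂ : ν₂ (Set.Icc (-k0) k0)ᶜ = 0 := (jordan_null _ measurableSet_Icc hre).2
  have hn₃ : ν₃ (Set.Icc (-k0) k0)ᶜ = 0 := (jordan_null _ measurableSet_Icc him).1
  have hn₄ : ν₄ (Set.Icc (-k0) k0)ᶜ = 0 := (jordan_null _ measurableSet_Icc him).2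
  set P : ℕ → ℂ → ℂ → ℂ := fun l t z => cmInt μ (fun k => (Complex.I * (k : ℂ)) ^ l *
    (Complex.exp (Complex.I * H (k : ℂ) * t) * Complex.exp (Complex.I * (k : ℂ) * z)))
    with hPdef
  have hΨP : ∀ t z : ℂ, Ψ t z = P 0 t z := by
    intro t z
    rw [hΨ t z, hPdef]
    simp only [pow_zero, one_mul]
  have hPderiv : ∀ (l : ℕ) (t z : ℂ), HasDerivAt (fun w => P l t w) (P (l + 1) t z) z := by
    intro l t z
    exact ((hasDerivAt_z (ν := ν₁) hHm hHb hk0 hn₁ l t z).sub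
        (hasDerivAt_z (ν := ν₂) hHm hHb hk0 hn₂ l t z)).add
      (((hasDerivAt_z (ν := ν₃) hHm hHb hk0 hn₃ l t z).sub
        (hasDerivAt_z (ν := ν₄) hHm hHb hk0 hn₄ l t z)).const_mul Complex.I)
  have hiter : ∀ (l : ℕ) (t : ℂ), iteratedDeriv l (fun w => Ψ t w) = fun z => P l t z := by
    intro l t
    induction l with
    | zero =>
      rw [iteratedDeriv_zero]
      exact funext fun z => hΨP t z
    | succ n ih =>
      rw [iteratedDeriv_succ, ih]
      exact funext fun z => (hPderiv n t z).deriv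
  have hTd : ∀ t z : ℂ, HasDerivAt (fun s => Ψ s z)
      (cmInt μ (fun k => (Complex.I * H (k : ℂ)) *
        (Complex.exp (Complex.I * H (k : ℂ) * t) *
          Complex.exp (Complex.I * (k : ℂ) * z)))) t := by
    intro t z
    have e : (fun s => Ψ s z) = fun s => cmInt μ (fun k =>
        Complex.exp (Complex.I * H (k : ℂ) * s) * Complex.exp (Complex.I * (k : ℂ) * z)) :=
      funext fun s => hΨ s z
    rw [e]
    exact ((hasDerivAt_t (ν := ν₁) hHm hHb hk0 hC0 hn₁ t z).sub
        (hasDerivAt_t (ν := ν₂) hHm hHb hk0 hC0 hn₂ t z)).add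
      (((hasDerivAt_t (ν := ν₃) hHm hHb hk0 hC0 hn₃ t z).sub
        (hasDerivAt_t (ν := ν₄) hHm hHb hk0 hC0 hn₄ t z)).const_mul Complex.I)
  have hterm : ∀ (t z : ℂ) (l : ℕ), h l * (-Complex.I) ^ l * P l t z =
      cmInt μ (fun k => h l * (k : ℂ) ^ l *
        (Complex.exp (Complex.I * H (k : ℂ) * t) *
          Complex.exp (Complex.I * (k : ℂ) * z))) := by
    intro t z l
    rw [hPdef, ← cmInt_const_mul]
    congr 1
    funext k
    have hIk : ((-Complex.I) * (Complex.I * (k : ℂ))) ^ l = ((k : ℂ)) ^ l := by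
      congr 1
      rw [neg_mul, ← mul_assoc, Complex.I_mul_I]
      ring
    calc h l * (-Complex.I) ^ l * ((Complex.I * (k : ℂ)) ^ l *
          (Complex.exp (Complex.I * H (k : ℂ) * t) * Complex.exp (Complex.I * (k : ℂ) * z)))
        = h l * ((-Complex.I) * (Complex.I * (k : ℂ))) ^ l *
          (Complex.exp (Complex.I * H (k : ℂ) * t) * Complex.exp (Complex.I * (k : ℂ) * z)) := by
          rw [mul_pow]; ring
      _ = h l * (k : ℂ) ^ l *
          (Complex.exp (Complex.I * H (k : ℂ) * t) * Complex.exp (Complex.I * (k : ℂ) * z)) := by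
          rw [hIk]
  have hsummP : ∀ t z : ℂ, Summable (fun l : ℕ => h l * (-Complex.I) ^ l * P l t z) := by
    intro t z
    have e : (fun l : ℕ => h l * (-Complex.I) ^ l * P l t z) =
        fun l : ℕ => ((∫ k, h l * (k : ℂ) ^ l * (Complex.exp (Complex.I * H (k : ℂ) * t) *
            Complex.exp (Complex.I * (k : ℂ) * z)) ∂ν₁)
          - (∫ k, h l * (k : ℂ) ^ l * (Complex.exp (Complex.I * H (k : ℂ) * t) *
            Complex.exp (Complex.I * (k : ℂ) * z)) ∂ν₂))
          + Complex.I * ((∫ k, h l * (k : ℂ) ^ l * (Complex.exp (Complex.I * H (k : ℂ) * t) *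
            Complex.exp (Complex.I * (k : ℂ) * z)) ∂ν₃)
          - (∫ k, h l * (k : ℂ) ^ l * (Complex.exp (Complex.I * H (k : ℂ) * t) *
            Complex.exp (Complex.I * (k : ℂ) * z)) ∂ν₄)) := by
      funext l
      rw [hterm t z l]
      rfl
    rw [e]
    exact (((summable_int (H := H) hs hHb hk0 hn₁ t z).sub
        (summable_int (H := H) hs hHb hk0 hn₂ t z)).add
      (((summable_int (H := H) hs hHb hk0 hn₃ t z).sub
        (summable_int (H := H) hs hHb hk0 hn₄ t z)).mul_left Complex.I))
  have htsumP : ∀ t z : ℂ, (∑' l : ℕ, h l * (-Complex.I) ^ l * P l t z) =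
      cmInt μ (fun k => H (k : ℂ) * (Complex.exp (Complex.I * H (k : ℂ) * t) *
        Complex.exp (Complex.I * (k : ℂ) * z))) := by
    intro t z
    calc (∑' l : ℕ, h l * (-Complex.I) ^ l * P l t z)
        = ∑' l : ℕ, (((∫ k, h l * (k : ℂ) ^ l * (Complex.exp (Complex.I * H (k : ℂ) * t) *
            Complex.exp (Complex.I * (k : ℂ) * z)) ∂ν₁)
          - (∫ k, h l * (k : ℂ) ^ l * (Complex.exp (Complex.I * H (k : ℂ) * t) *
            Complex.exp (Complex.I * (k : ℂ) * z)) ∂ν₂))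
          + Complex.I * ((∫ k, h l * (k : ℂ) ^ l * (Complex.exp (Complex.I * H (k : ℂ) * t) *
            Complex.exp (Complex.I * (k : ℂ) * z)) ∂ν₃)
          - (∫ k, h l * (k : ℂ) ^ l * (Complex.exp (Complex.I * H (k : ℂ) * t) *
            Complex.exp (Complex.I * (k : ℂ) * z)) ∂ν₄))) := by
          refine tsum_congr fun l => ?_
          rw [hterm t z l]
          rfl
      _ = _ := by
          rw [Summable.tsum_add (((summable_int (H := H) hs hHb hk0 hn₁ t z).sub
              (summable_int (H := H) hs hHb hk0 hn₂ t z)))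
            (((summable_int (H := H) hs hHb hk0 hn₃ t z).sub
              (summable_int (H := H) hs hHb hk0 hn₄ t z)).mul_left Complex.I),
            Summable.tsum_sub (summable_int (H := H) hs hHb hk0 hn₁ t z)
              (summable_int (H := H) hs hHb hk0 hn₂ t z),
            tsum_mul_left,
            Summable.tsum_sub (summable_int (H := H) hs hHb hk0 hn₃ t z)
              (summable_int (H := H) hs hHb hk0 hn₄ t z),
            tsum_int (H := H) hH hs hC0le hHm hHb hk0 hn₁ t z,
            tsum_int (H := H) hH hs hC0le hHm hHb hk0 hn₂ t z,
            tsum_int (H := H) hH hs hC0le hHm hHb hk0 hn₃ t z,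
            tsum_int (H := H) hH hs hC0le hHm hHb hk0 hn₄ t z]
          rfl
  refine ⟨?_, ?_, ?_, ?_, ?_⟩
  · intro t z
    have hd := (hPderiv 0 t z).differentiableAt
    have e : (fun z => Ψ t z) = fun z => P 0 t z := funext fun z => hΨP t z
    rw [e]
    exact hd
  · intro z t
    exact (hTd t z).differentiableAt
  · intro t z
    have e : (fun l : ℕ => h l * (-Complex.I) ^ l * iteratedDeriv l (fun w => Ψ t w) z) =
        fun l : ℕ => h l * (-Complex.I) ^ l * P l t z := by
      funext l
      rw [hiter l t]
    rw [e]
    exact hsummP t z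
  · intro t z
    have e : (∑' l : ℕ, h l * (-Complex.I) ^ l * iteratedDeriv l (fun w => Ψ t w) z) =
        ∑' l : ℕ, h l * (-Complex.I) ^ l * P l t z := by
      refine tsum_congr fun l => ?_
      rw [hiter l t]
    rw [e, htsumP t z, (hTd t z).deriv, ← cmInt_const_mul]
    have e2 : (fun k : ℝ => Complex.I * ((Complex.I * H (k : ℂ)) *
        (Complex.exp (Complex.I * H (k : ℂ) * t) * Complex.exp (Complex.I * (k : ℂ) * z)))) =
        fun k : ℝ => (-1 : ℂ) * (H (k : ℂ) *
        (Complex.exp (Complex.I * H (k : ℂ) * t) * Complex.exp (Complex.I * (k : ℂ) * z))) := by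
      funext k
      calc Complex.I * ((Complex.I * H (k : ℂ)) *
            (Complex.exp (Complex.I * H (k : ℂ) * t) * Complex.exp (Complex.I * (k : ℂ) * z)))
          = (Complex.I * Complex.I) * (H (k : ℂ) *
            (Complex.exp (Complex.I * H (k : ℂ) * t) *
              Complex.exp (Complex.I * (k : ℂ) * z))) := by ring
        _ = (-1 : ℂ) * (H (k : ℂ) * (Complex.exp (Complex.I * H (k : ℂ) * t) *
              Complex.exp (Complex.I * (k : ℂ) * z))) := by rw [Complex.I_mul_I]
    rw [e2, cmInt_const_mul]
    ring
  · intro z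
    rw [hΨ 0 z]
    congr 1
    funext k
    rw [mul_zero, Complex.exp_zero, one_mul]
end

section
/- Let b > 0. Then for every z ∈ ℂ one has sinc(√(z² + b²)) = (1/2) ∫_{−1}^{1} e^{ikz} J₀(b√(1−k²)) dk, where J₀(x) = (1/π) ∫_0^π cos(x cos θ) dθ is the Bessel function of order zero and sinc(√w) denotes the entire function Σ_{n=0}^∞ ((−1)^n/(2n+1)!) w^n evaluated at w = z² + b². -/
/-- The entire function `w ↦ sinc(√w) = Σ_{n=0}^∞ ((-1)^n/(2n+1)!) wⁿ`. -/
noncomputable def sincSqrt (w : ℂ) : ℂ :=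
  ∑' n : ℕ, ((-1 : ℂ) ^ n / (Nat.factorial (2 * n + 1) : ℂ)) * w ^ n

/-- The Bessel function of order zero, `J₀(x) = (1/π) ∫₀^π cos(x cos θ) dθ`. -/
noncomputable def besselJ0 (x : ℝ) : ℝ :=
  (1 / Real.pi) * ∫ θ in (0:ℝ)..Real.pi, Real.cos (x * Real.cos θ)

set_option maxHeartbeats 1000000

open MeasureTheory intervalIntegral Real Complex Function

lemma cos_pow_int (n : ℕ) :
    ∫ θ in (0:ℝ)..Real.pi, Real.cos θ ^ (2*n)
      = Real.pi * (2*n).factorial / (4^n * (n.factorial)^2) := by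
  induction n with
  | zero => simp
  | succ n ih =>
    have h := integral_cos_pow (a := 0) (b := Real.pi) (n := 2*n)
    rw [Real.sin_pi, Real.sin_zero] at h
    have h2 : (∫ θ in (0:ℝ)..Real.pi, Real.cos θ ^ (2*n+2))
        = (2*n+1)/(2*n+2) * ∫ θ in (0:ℝ)..Real.pi, Real.cos θ ^ (2*n) := by
      rw [h]; push_cast; ring
    have e0 : 2*(n+1) = 2*n+2 := by ring
    rw [e0, h2, ih]
    have e1 : ((2*n+2).factorial : ℝ) = (2*n+2)*((2*n+1)*(2*n).factorial) := by
      rw [show 2*n+2 = (2*n+1)+1 from rfl, Nat.factorial_succ, Nat.factorial_succ]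
      push_cast; ring
    have e2 : ((n+1).factorial : ℝ) = (n+1)*n.factorial := by
      rw [Nat.factorial_succ]; push_cast; ring
    have f1 : ((2*n).factorial : ℝ) ≠ 0 := Nat.cast_ne_zero.2 (Nat.factorial_ne_zero _)
    have f2 : (n.factorial : ℝ) ≠ 0 := Nat.cast_ne_zero.2 (Nat.factorial_ne_zero _)
    have f3 : (4:ℝ)^n ≠ 0 := by positivity
    have f4 : ((2:ℝ)*n+2) ≠ 0 := by positivity
    rw [e1, e2]
    field_simp
    ring



lemma summable_even_fact (x : ℝ) : Summable (fun n : ℕ => x ^ (2*n) / (2*n).factorial) :=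
  (Real.summable_pow_div_factorial x).comp_injective
    (fun a b h => Nat.eq_of_mul_eq_mul_left two_pos h)

lemma besselJ0_continuous : Continuous besselJ0 := by
  have : Continuous fun x : ℝ => ∫ θ in (0:ℝ)..Real.pi, Real.cos (x * Real.cos θ) := by
    apply continuous_parametric_intervalIntegral_of_continuous' (μ := volume)
      (f := fun (x : ℝ) (θ : ℝ) => Real.cos (x * Real.cos θ))
    fun_prop
  exact continuous_const.mul this

lemma besselJ0_abs_le_one (x : ℝ) : |besselJ0 x| ≤ 1 := by
  have h : ‖∫ θ in (0:ℝ)..Real.pi, Real.cos (x * Real.cos θ)‖ ≤ 1 * |Real.pi - 0| :=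
    intervalIntegral.norm_integral_le_of_norm_le_const (fun θ _ => by
      rw [Real.norm_eq_abs]; exact Real.abs_cos_le_one _)
  rw [Real.norm_eq_abs, sub_zero, _root_.abs_of_nonneg Real.pi_pos.le, one_mul] at h
  rw [besselJ0, _root_.abs_mul, _root_.abs_of_nonneg (by positivity : (0:ℝ) ≤ 1 / Real.pi)]
  rw [div_mul_eq_mul_div, one_mul, div_le_one Real.pi_pos]
  exact h

lemma besselJ0_hasSum (x : ℝ) :
    HasSum (fun n : ℕ => (-1)^n * x^(2*n) / (4^n * (n.factorial)^2)) (besselJ0 x) := by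
  have key : HasSum
      (fun n : ℕ => ∫ θ in (0:ℝ)..Real.pi, (-1)^n * (x * Real.cos θ)^(2*n) / (2*n).factorial)
      (∫ θ in (0:ℝ)..Real.pi, Real.cos (x * Real.cos θ)) := by
    apply intervalIntegral.hasSum_integral_of_dominated_convergence
      (bound := fun n _ => |x|^(2*n) / (2*n).factorial)
    · intro n; exact Continuous.aestronglyMeasurable (by fun_prop)
    · intro n
      filter_upwards with θ _
      have h1 : |x * Real.cos θ| ≤ |x| := by
        rw [_root_.abs_mul]; exact mul_le_of_le_one_right (abs_nonneg _) (Real.abs_cos_le_one _)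
      rw [Real.norm_eq_abs, _root_.abs_div, _root_.abs_mul, _root_.abs_pow, _root_.abs_pow, _root_.abs_neg, _root_.abs_one, one_pow,
        one_mul, Nat.abs_cast]
      gcongr
    · filter_upwards with θ _
      exact summable_even_fact |x|
    · exact intervalIntegrable_const
    · filter_upwards with θ _
      exact Real.hasSum_cos (x * Real.cos θ)
  have e : ∀ n : ℕ, (∫ θ in (0:ℝ)..Real.pi, (-1)^n * (x * Real.cos θ)^(2*n) / (2*n).factorial)
      = Real.pi * ((-1)^n * x^(2*n) / (4^n * (n.factorial)^2)) := by
    intro n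
    have e2 : (fun θ => (-1:ℝ)^n * (x * Real.cos θ)^(2*n) / (2*n).factorial)
        = fun θ => ((-1:ℝ)^n * x^(2*n) / (2*n).factorial) * (Real.cos θ)^(2*n) := by
      funext θ; rw [mul_pow]; ring
    rw [e2, intervalIntegral.integral_const_mul, cos_pow_int]
    have f1 : ((2*n).factorial : ℝ) ≠ 0 := Nat.cast_ne_zero.2 (Nat.factorial_ne_zero _)
    have f2 : (n.factorial : ℝ) ≠ 0 := Nat.cast_ne_zero.2 (Nat.factorial_ne_zero _)
    field_simp
  rw [funext e] at key
  have := key.mul_left (1 / Real.pi)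
  rw [besselJ0]
  convert this using 2 with n
  · rfl
  · field_simp

lemma moment_odd (j n : ℕ) (hj : Odd j) :
    ∫ k in (-1:ℝ)..1, k^j * (1-k^2)^n = 0 := by
  have h := intervalIntegral.integral_comp_neg (a := (-1:ℝ)) (b := 1)
    (fun k : ℝ => k^j * (1-k^2)^n)
  simp only [neg_neg] at h
  have h2 : (∫ k in (-1:ℝ)..1, (-k)^j * (1-(-k)^2)^n) = ∫ k in (-1:ℝ)..1, -(k^j * (1-k^2)^n) := by
    congr 1; funext k
    rw [hj.neg_pow, neg_pow, Even.neg_pow (by norm_num)]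
    ring_nf
  rw [h2, intervalIntegral.integral_neg] at h
  linarith

lemma moment_even (n m : ℕ) :
    ∫ k in (-1:ℝ)..1, k^(2*m) * (1-k^2)^n
      = (2:ℝ) * ((2*m).factorial) * 4^n * (n.factorial) * ((m+n).factorial)
        / ((m.factorial) * ((2*(m+n)+1).factorial)) := by
  induction n generalizing m with
  | zero =>
    simp only [pow_zero, mul_one]
    rw [integral_pow]
    have : (-1:ℝ)^(2*m+1) = -1 := by
      rw [pow_succ, pow_mul]; norm_num
    rw [this]
    have e1 : ((2*(m+0)+1).factorial : ℝ) = (2*m+1) * (2*m).factorial := by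
      rw [show 2*(m+0)+1 = (2*m)+1 by ring, Nat.factorial_succ]; push_cast; ring
    rw [e1]
    have f1 : ((2*m).factorial : ℝ) ≠ 0 := Nat.cast_ne_zero.2 (Nat.factorial_ne_zero _)
    have f2 : (m.factorial : ℝ) ≠ 0 := Nat.cast_ne_zero.2 (Nat.factorial_ne_zero _)
    have f3 : ((2:ℝ)*m+1) ≠ 0 := by positivity
    field_simp
    push_cast; ring
  | succ n ih =>
    have split : (∫ k in (-1:ℝ)..1, k^(2*m) * (1-k^2)^(n+1))
        = (∫ k in (-1:ℝ)..1, k^(2*m) * (1-k^2)^n)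
          - ∫ k in (-1:ℝ)..1, k^(2*(m+1)) * (1-k^2)^n := by
      rw [← intervalIntegral.integral_sub (by apply Continuous.intervalIntegrable; fun_prop)
        (by apply Continuous.intervalIntegrable; fun_prop)]
      congr 1; funext k
      rw [show 2*(m+1) = 2*m+2 by ring, pow_succ, pow_add]
      ring
    rw [split, ih m, ih (m+1)]
    -- now pure factorial algebra
    have e1 : ((2*(m+1)).factorial : ℝ) = (2*m+2)*(2*m+1)*(2*m).factorial := by
      rw [show 2*(m+1) = ((2*m)+1)+1 by ring, Nat.factorial_succ, Nat.factorial_succ]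
      push_cast; ring
    have e2 : ((m+1).factorial : ℝ) = (m+1) * m.factorial := by
      rw [Nat.factorial_succ]; push_cast; ring
    have e3 : (((m+1)+n).factorial : ℝ) = (m+n+1) * (m+n).factorial := by
      rw [show (m+1)+n = (m+n)+1 by ring, Nat.factorial_succ]; push_cast; ring
    have e4 : ((m+(n+1)).factorial : ℝ) = (m+n+1) * (m+n).factorial := by
      rw [show m+(n+1) = (m+n)+1 by ring, Nat.factorial_succ]; push_cast; ring
    have e5 : ((2*((m+1)+n)+1).factorial : ℝ)
        = (2*(m+n)+3)*(2*(m+n)+2)*(2*(m+n)+1).factorial := by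
      rw [show 2*((m+1)+n)+1 = ((2*(m+n)+1)+1)+1 by ring, Nat.factorial_succ, Nat.factorial_succ]
      push_cast; ring
    have e6 : ((2*(m+(n+1))+1).factorial : ℝ)
        = (2*(m+n)+3)*(2*(m+n)+2)*(2*(m+n)+1).factorial := by
      rw [show 2*(m+(n+1))+1 = ((2*(m+n)+1)+1)+1 by ring, Nat.factorial_succ, Nat.factorial_succ]
      push_cast; ring
    have e7 : ((n+1).factorial : ℝ) = (n+1) * n.factorial := by
      rw [Nat.factorial_succ]; push_cast; ring
    rw [e1, e2, e3, e4, e5, e6, e7]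
    have f1 : ((2*m).factorial : ℝ) ≠ 0 := Nat.cast_ne_zero.2 (Nat.factorial_ne_zero _)
    have f2 : (m.factorial : ℝ) ≠ 0 := Nat.cast_ne_zero.2 (Nat.factorial_ne_zero _)
    have f3 : ((2*(m+n)+1).factorial : ℝ) ≠ 0 := Nat.cast_ne_zero.2 (Nat.factorial_ne_zero _)
    have f4 : ((m+n).factorial : ℝ) ≠ 0 := Nat.cast_ne_zero.2 (Nat.factorial_ne_zero _)
    have f5 : (n.factorial : ℝ) ≠ 0 := Nat.cast_ne_zero.2 (Nat.factorial_ne_zero _)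
    have f6 : ((m:ℝ)+1) ≠ 0 := by positivity
    have f7 : (2*((m:ℝ)+(n:ℝ))+3) ≠ 0 := by positivity
    have f8 : (2*((m:ℝ)+(n:ℝ))+2) ≠ 0 := by positivity
    push_cast
    field_simp
    ring


noncomputable def gTerm (z : ℂ) (b : ℝ) (p : ℕ × ℕ) : ℂ :=
  (-1)^(p.1+p.2) * z^(2*p.1) * (b:ℂ)^(2*p.2) * ((p.1+p.2).factorial : ℂ)
    / ((p.1.factorial : ℂ) * (p.2.factorial : ℂ) * ((2*(p.1+p.2)+1).factorial : ℂ))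

lemma gTerm_norm_le (z : ℂ) (b : ℝ) (p : ℕ × ℕ) :
    ‖gTerm z b p‖ ≤ (‖z‖^2)^p.1/(p.1.factorial) * ((b^2)^p.2/(p.2.factorial)) := by
  obtain ⟨m, n⟩ := p
  have h1 : ‖gTerm z b (m, n)‖
      = ‖z‖^(2*m) * |b|^(2*n) * ((m+n).factorial : ℝ)
        / ((m.factorial : ℝ) * (n.factorial : ℝ) * ((2*(m+n)+1).factorial : ℝ)) := by
    rw [gTerm]
    simp [norm_mul, norm_div, norm_pow, Complex.norm_natCast, Complex.norm_real,
      Real.norm_eq_abs, _root_.abs_pow]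
  rw [h1]
  have h2 : ((m+n).factorial : ℝ) ≤ ((2*(m+n)+1).factorial : ℝ) :=
    Nat.cast_le.2 (Nat.factorial_le (by omega))
  have f3 : (0:ℝ) < ((2*(m+n)+1).factorial : ℝ) := by positivity
  have f1 : (0:ℝ) < (m.factorial : ℝ) := by positivity
  have f2 : (0:ℝ) < (n.factorial : ℝ) := by positivity
  have e1 : (‖z‖^2)^m = ‖z‖^(2*m) := by rw [← pow_mul]
  have e2 : ((b^2):ℝ)^n = |b|^(2*n) := by rw [← _root_.sq_abs, ← pow_mul]
  rw [e1, e2]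
  have key : ‖z‖^(2*m) * |b|^(2*n) * ((m+n).factorial : ℝ)
        / ((m.factorial : ℝ) * (n.factorial : ℝ) * ((2*(m+n)+1).factorial : ℝ))
      = (‖z‖^(2*m)/(m.factorial) * (|b|^(2*n)/(n.factorial)))
        * (((m+n).factorial : ℝ) / ((2*(m+n)+1).factorial : ℝ)) := by
    field_simp
  rw [key]
  have : ((m+n).factorial : ℝ) / ((2*(m+n)+1).factorial : ℝ) ≤ 1 :=
    div_le_one_of_le₀ h2 f3.le
  calc _ ≤ (‖z‖^(2*m)/(m.factorial) * (|b|^(2*n)/(n.factorial))) * 1 := by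
        apply mul_le_mul_of_nonneg_left this (by positivity)
    _ = _ := by rw [mul_one]

lemma gTerm_summable (z : ℂ) (b : ℝ) : Summable (gTerm z b) := by
  have hs : Summable (fun p : ℕ × ℕ =>
      (‖z‖^2)^p.1/(p.1.factorial : ℝ) * ((b^2)^p.2/(p.2.factorial : ℝ))) :=
    Summable.mul_of_nonneg (Real.summable_pow_div_factorial (‖z‖^2))
      (Real.summable_pow_div_factorial (b^2))
      (fun m => by positivity) (fun n => by positivity)
  exact Summable.of_norm_bounded hs (gTerm_norm_le z b)

lemma antidiagonal_sum_eq (z : ℂ) (b : ℝ) (N : ℕ) :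
    ∑ p ∈ Finset.HasAntidiagonal.antidiagonal N, gTerm z b p
      = ((-1:ℂ)^N / ((2*N+1).factorial : ℂ)) * (z^2 + (b:ℂ)^2)^N := by
  rw [Finset.Nat.sum_antidiagonal_eq_sum_range_succ_mk, add_pow, Finset.mul_sum]
  apply Finset.sum_congr rfl
  intro m hm
  have hm' : m ≤ N := Nat.lt_succ_iff.mp (Finset.mem_range.mp hm)
  rw [gTerm]
  simp only
  rw [Nat.add_sub_cancel' hm', Nat.cast_choose ℂ hm']
  have e1 : z^(2*m) = (z^2)^m := by rw [pow_mul]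
  have e2 : ((b:ℂ))^(2*(N-m)) = ((b:ℂ)^2)^(N-m) := by rw [pow_mul]
  rw [e1, e2]
  have f1 : ((m.factorial : ℂ)) ≠ 0 := Nat.cast_ne_zero.2 (Nat.factorial_ne_zero _)
  have f2 : (((N-m).factorial : ℂ)) ≠ 0 := Nat.cast_ne_zero.2 (Nat.factorial_ne_zero _)
  have f3 : (((2*N+1).factorial : ℂ)) ≠ 0 := Nat.cast_ne_zero.2 (Nat.factorial_ne_zero _)
  field_simp

def eAnti : (Σ N : ℕ, {p : ℕ × ℕ // p ∈ Finset.HasAntidiagonal.antidiagonal N}) ≃ ℕ × ℕ where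
  toFun x := x.2.1
  invFun p := ⟨p.1 + p.2, p, by simp [Finset.HasAntidiagonal.mem_antidiagonal]⟩
  left_inv := by
    rintro ⟨N, p, hp⟩
    have : p.1 + p.2 = N := Finset.HasAntidiagonal.mem_antidiagonal.mp hp
    subst this
    rfl
  right_inv p := rfl

lemma lhs_eq_tsum (z : ℂ) (b : ℝ) :
    sincSqrt (z^2 + (b:ℂ)^2) = ∑' p : ℕ × ℕ, gTerm z b p := by
  have e := eAnti.tsum_eq (gTerm z b)
  rw [← e]
  have h₂ : Summable fun x : (Σ N : ℕ, {p : ℕ × ℕ // p ∈ Finset.HasAntidiagonal.antidiagonal N}) =>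
      gTerm z b (eAnti x) :=
    (Equiv.summable_iff _).2 (gTerm_summable z b)
  have h₁ : ∀ N : ℕ, Summable fun c : {p : ℕ × ℕ // p ∈ Finset.HasAntidiagonal.antidiagonal N} =>
      gTerm z b (eAnti ⟨N, c⟩) :=
    fun N => (hasSum_fintype _).summable
  rw [Summable.tsum_sigma' h₁ h₂, sincSqrt]
  congr 1
  funext N
  have : ∑' c : {p : ℕ × ℕ // p ∈ Finset.HasAntidiagonal.antidiagonal N}, gTerm z b (eAnti ⟨N, c⟩)
      = ∑ p ∈ Finset.HasAntidiagonal.antidiagonal N, gTerm z b p := by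
    rw [tsum_fintype]
    exact Finset.sum_coe_sort (Finset.HasAntidiagonal.antidiagonal N) (gTerm z b)
  rw [this, antidiagonal_sum_eq]

lemma bessel_bound_summable (b : ℝ) :
    Summable (fun n : ℕ => b^(2*n) / (4^n * ((n.factorial : ℝ))^2)) := by
  apply Summable.of_nonneg_of_le
    (fun n => by
      have : (0:ℝ) ≤ b^(2*n) := by rw [pow_mul]; positivity
      positivity)
    (fun n => ?_) (Real.summable_pow_div_factorial (b^2/4))
  have f2 : (0:ℝ) < (n.factorial : ℝ) := by positivity
  have h1 : b^(2*n) / (4^n * ((n.factorial : ℝ))^2)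
      = (b^2/4)^n / ((n.factorial : ℝ))^2 := by
    rw [pow_mul, div_pow, div_div, mul_comm ((4:ℝ)^n)]
  rw [h1]
  apply div_le_div_of_nonneg_left ?_ (by positivity) ?_
  · positivity
  · calc (n.factorial : ℝ) = (n.factorial : ℝ) * 1 := by ring
      _ ≤ (n.factorial : ℝ) * (n.factorial : ℝ) := by
          apply mul_le_mul_of_nonneg_left _ f2.le
          exact_mod_cast Nat.one_le_iff_ne_zero.2 (Nat.factorial_ne_zero n)
      _ = ((n.factorial : ℝ))^2 := by ring

lemma R_hasSum (b : ℝ) (j : ℕ) :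
    HasSum (fun n : ℕ => ((-1:ℝ)^n * b^(2*n) / (4^n * ((n.factorial : ℝ))^2))
        * ∫ k in (-1:ℝ)..1, k^j * (1-k^2)^n)
      (∫ k in (-1:ℝ)..1, k^j * besselJ0 (b * Real.sqrt (1-k^2))) := by
  have key : HasSum (fun n : ℕ => ∫ k in (-1:ℝ)..1,
        ((-1:ℝ)^n * b^(2*n) / (4^n * ((n.factorial : ℝ))^2)) * (k^j * (1-k^2)^n))
      (∫ k in (-1:ℝ)..1, k^j * besselJ0 (b * Real.sqrt (1-k^2))) := by
    apply intervalIntegral.hasSum_integral_of_dominated_convergence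
      (bound := fun n _ => b^(2*n) / (4^n * ((n.factorial : ℝ))^2))
    · intro n; exact Continuous.aestronglyMeasurable (by fun_prop)
    · intro n
      filter_upwards with k hk
      rw [Set.uIoc_of_le (by norm_num : (-1:ℝ) ≤ 1)] at hk
      have hk2 : k^2 ≤ 1 := by nlinarith [hk.1, hk.2]
      have hk2' : (0:ℝ) ≤ 1 - k^2 := by linarith
      have habs : |k| ≤ 1 := abs_le.2 ⟨hk.1.le, hk.2⟩
      have habs4 : |b|^(2*n) = b^(2*n) := by rw [pow_mul, _root_.sq_abs, ← pow_mul]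
      simp only [Real.norm_eq_abs, _root_.abs_mul, _root_.abs_div, _root_.abs_pow,
        _root_.abs_neg, _root_.abs_one, one_pow, one_mul, habs4,
        _root_.abs_of_nonneg (show (0:ℝ) ≤ 4 by norm_num), Nat.abs_cast]
      have hb2 : (0:ℝ) ≤ b^(2*n) := by rw [pow_mul]; positivity
      calc b^(2*n) / (4^n * ((n.factorial : ℝ))^2) * (|k|^j * |1-k^2|^n)
            ≤ b^(2*n) / (4^n * ((n.factorial : ℝ))^2) * (1 * 1) := by
              apply mul_le_mul_of_nonneg_left _ (div_nonneg hb2 (by positivity))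
              have h3 : |1-k^2| ≤ 1 := by rw [_root_.abs_of_nonneg hk2']; nlinarith [sq_nonneg k]
              exact mul_le_mul (pow_le_one₀ (abs_nonneg _) habs)
                (pow_le_one₀ (abs_nonneg _) h3) (by positivity) zero_le_one
        _ = b^(2*n) / (4^n * ((n.factorial : ℝ))^2) := by ring
    · filter_upwards with k _
      exact bessel_bound_summable b
    · exact intervalIntegrable_const
    · filter_upwards with k hk
      rw [Set.uIoc_of_le (by norm_num : (-1:ℝ) ≤ 1)] at hk
      have hk2' : (0:ℝ) ≤ 1 - k^2 := by nlinarith [hk.1, hk.2]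
      have H := (besselJ0_hasSum (b * Real.sqrt (1-k^2))).mul_left (k^j)
      have e : (fun n : ℕ => ((-1:ℝ)^n * b^(2*n) / (4^n * ((n.factorial : ℝ))^2))
            * (k^j * (1-k^2)^n))
          = fun n : ℕ => k^j * ((-1)^n * (b * Real.sqrt (1-k^2))^(2*n)
            / (4^n * ((n.factorial : ℝ))^2)) := by
        funext n
        rw [mul_pow, pow_mul (Real.sqrt (1-k^2)), Real.sq_sqrt hk2']
        ring
      rw [e]
      exact H
  have e2 : ∀ n : ℕ, (∫ k in (-1:ℝ)..1,
        ((-1:ℝ)^n * b^(2*n) / (4^n * ((n.factorial : ℝ))^2)) * (k^j * (1-k^2)^n))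
      = ((-1:ℝ)^n * b^(2*n) / (4^n * ((n.factorial : ℝ))^2))
        * ∫ k in (-1:ℝ)..1, k^j * (1-k^2)^n := fun n =>
    intervalIntegral.integral_const_mul _ _
  rw [funext e2] at key
  exact key

lemma R_odd (b : ℝ) (m : ℕ) :
    (∫ k in (-1:ℝ)..1, k^(2*m+1) * besselJ0 (b * Real.sqrt (1-k^2))) = 0 := by
  have h := R_hasSum b (2*m+1)
  have e : (fun n : ℕ => ((-1:ℝ)^n * b^(2*n) / (4^n * ((n.factorial : ℝ))^2))
      * ∫ k in (-1:ℝ)..1, k^(2*m+1) * (1-k^2)^n) = fun _ => (0:ℝ) := by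
    funext n
    rw [moment_odd (2*m+1) n ⟨m, by ring⟩, mul_zero]
  rw [e] at h
  exact h.unique hasSum_zero

lemma exp_hasSum (b : ℝ) (z : ℂ) :
    HasSum (fun j : ℕ => ((Complex.I*z)^j/((j.factorial : ℂ)))
        * ((∫ k in (-1:ℝ)..1, k^j * besselJ0 (b * Real.sqrt (1-k^2)) : ℝ) : ℂ))
      (∫ k in (-1:ℝ)..1, Complex.exp (Complex.I * (k:ℂ) * z)
        * (besselJ0 (b * Real.sqrt (1-k^2)) : ℂ)) := by
  have hJc : Continuous (fun k : ℝ => besselJ0 (b * Real.sqrt (1-k^2))) :=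
    besselJ0_continuous.comp (by fun_prop)
  have key : HasSum (fun j : ℕ => ∫ k in (-1:ℝ)..1,
        ((Complex.I*z)^j/((j.factorial : ℂ)))
          * ((k:ℂ)^j * (besselJ0 (b * Real.sqrt (1-k^2)) : ℂ)))
      (∫ k in (-1:ℝ)..1, Complex.exp (Complex.I * (k:ℂ) * z)
        * (besselJ0 (b * Real.sqrt (1-k^2)) : ℂ)) := by
    apply intervalIntegral.hasSum_integral_of_dominated_convergence
      (bound := fun j _ => ‖z‖^j / (j.factorial : ℝ))
    · intro j
      apply Continuous.aestronglyMeasurable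
      exact continuous_const.mul ((Complex.continuous_ofReal.pow j).mul
        (Complex.continuous_ofReal.comp hJc))
    · intro j
      filter_upwards with k hk
      rw [Set.uIoc_of_le (by norm_num : (-1:ℝ) ≤ 1)] at hk
      have habs : |k| ≤ 1 := abs_le.2 ⟨hk.1.le, hk.2⟩
      rw [norm_mul, norm_div, norm_pow, norm_mul, Complex.norm_I, one_mul,
        Complex.norm_natCast, norm_mul, norm_pow, Complex.norm_real, Complex.norm_real,
        Real.norm_eq_abs, Real.norm_eq_abs]
      calc ‖z‖^j / (j.factorial : ℝ) * (|k|^j * |besselJ0 (b * Real.sqrt (1-k^2))|)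
            ≤ ‖z‖^j / (j.factorial : ℝ) * (1 * 1) := by
              apply mul_le_mul_of_nonneg_left _ (by positivity)
              exact mul_le_mul (pow_le_one₀ (abs_nonneg _) habs)
                (besselJ0_abs_le_one _) (abs_nonneg _) zero_le_one
        _ = ‖z‖^j / (j.factorial : ℝ) := by ring
    · filter_upwards with k _
      exact Real.summable_pow_div_factorial ‖z‖
    · exact intervalIntegrable_const
    · filter_upwards with k _
      have H := (NormedSpace.expSeries_div_hasSum_exp (Complex.I * (k:ℂ) * z)).mul_right
        ((besselJ0 (b * Real.sqrt (1-k^2)) : ℂ))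
      rw [← Complex.exp_eq_exp_ℂ] at H
      have e : (fun j : ℕ => ((Complex.I*z)^j/((j.factorial : ℂ)))
            * ((k:ℂ)^j * (besselJ0 (b * Real.sqrt (1-k^2)) : ℂ)))
          = fun j : ℕ => (Complex.I * (k:ℂ) * z)^j / (j.factorial : ℂ)
            * (besselJ0 (b * Real.sqrt (1-k^2)) : ℂ) := by
        funext j
        rw [show Complex.I * (k:ℂ) * z = (Complex.I * z) * (k:ℂ) by ring, mul_pow]
        ring
      rw [e]
      exact H
  have e2 : ∀ j : ℕ, (∫ k in (-1:ℝ)..1, ((Complex.I*z)^j/((j.factorial : ℂ)))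
        * ((k:ℂ)^j * (besselJ0 (b * Real.sqrt (1-k^2)) : ℂ)))
      = ((Complex.I*z)^j/((j.factorial : ℂ)))
        * ((∫ k in (-1:ℝ)..1, k^j * besselJ0 (b * Real.sqrt (1-k^2)) : ℝ) : ℂ) := by
    intro j
    rw [intervalIntegral.integral_const_mul]
    congr 1
    have e3 : (fun k : ℝ => ((k:ℂ)^j * (besselJ0 (b * Real.sqrt (1-k^2)) : ℂ)))
        = fun k : ℝ => ((k^j * besselJ0 (b * Real.sqrt (1-k^2)) : ℝ) : ℂ) := by
      funext k; push_cast; ring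
    rw [e3, intervalIntegral.integral_ofReal]
  rw [funext e2] at key
  exact key

lemma u_even (b : ℝ) (z : ℂ) (m : ℕ) :
    ((Complex.I*z)^(2*m)/(((2*m).factorial : ℂ)))
        * ((∫ k in (-1:ℝ)..1, k^(2*m) * besselJ0 (b * Real.sqrt (1-k^2)) : ℝ) : ℂ)
      = 2 * ∑' n : ℕ, gTerm z b (m, n) := by
  have hR : (∫ k in (-1:ℝ)..1, k^(2*m) * besselJ0 (b * Real.sqrt (1-k^2)))
      = ∑' n : ℕ, ((-1:ℝ)^n * b^(2*n) / (4^n * ((n.factorial : ℝ))^2))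
        * ((2:ℝ) * ((2*m).factorial) * 4^n * (n.factorial) * ((m+n).factorial)
          / ((m.factorial) * ((2*(m+n)+1).factorial))) := by
    rw [← (R_hasSum b (2*m)).tsum_eq]
    exact tsum_congr fun n => by rw [moment_even n m]
  rw [hR, Complex.ofReal_tsum, ← tsum_mul_left, ← tsum_mul_left]
  apply tsum_congr
  intro n
  have hI : (Complex.I*z)^(2*m) = (-1:ℂ)^m * z^(2*m) := by
    rw [mul_pow, pow_mul, Complex.I_sq]
  rw [gTerm, hI]
  simp only
  push_cast
  have f1 : ((m.factorial : ℂ)) ≠ 0 := Nat.cast_ne_zero.2 (Nat.factorial_ne_zero _)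
  have f2 : ((n.factorial : ℂ)) ≠ 0 := Nat.cast_ne_zero.2 (Nat.factorial_ne_zero _)
  have f3 : (((2*m).factorial : ℂ)) ≠ 0 := Nat.cast_ne_zero.2 (Nat.factorial_ne_zero _)
  have f4 : (((m+n).factorial : ℂ)) ≠ 0 := Nat.cast_ne_zero.2 (Nat.factorial_ne_zero _)
  have f5 : (((2*(m+n)+1).factorial : ℂ)) ≠ 0 := Nat.cast_ne_zero.2 (Nat.factorial_ne_zero _)
  have f6 : ((4:ℂ))^n ≠ 0 := by norm_num
  rw [div_mul_div_comm, div_mul_div_comm, ← mul_div_assoc,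
    div_eq_div_iff
      (by exact mul_ne_zero f3 (mul_ne_zero (mul_ne_zero f6 (pow_ne_zero 2 f2))
        (mul_ne_zero f1 f5)))
      (mul_ne_zero (mul_ne_zero f1 f2) f5)]
  ring

/-- Lemma A.2 of the paper. For `b > 0` and every `z ∈ ℂ`,
`sinc(√(z² + b²)) = (1/2) ∫_{-1}^{1} e^{ikz} J₀(b √(1-k²)) dk`, where `sinc(√·)`
is understood via the even power series `Σ ((-1)^n/(2n+1)!) wⁿ`. -/
theorem statement19 (b : ℝ) (hb : 0 < b) (z : ℂ) :
    sincSqrt (z ^ 2 + (b : ℂ) ^ 2) =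
      (1 / 2 : ℂ) * ∫ k in (-1:ℝ)..1,
        Complex.exp (Complex.I * (k : ℂ) * z) * (besselJ0 (b * Real.sqrt (1 - k ^ 2)) : ℂ) := by
  rw [lhs_eq_tsum z b, ← (exp_hasSum b z).tsum_eq]
  set u : ℕ → ℂ := fun j => ((Complex.I*z)^j/((j.factorial : ℂ)))
    * ((∫ k in (-1:ℝ)..1, k^j * besselJ0 (b * Real.sqrt (1-k^2)) : ℝ) : ℂ) with hu
  have hodd : ∀ j : ℕ, Odd j → u j = 0 := by
    rintro j ⟨m, rfl⟩
    rw [hu]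
    simp only
    rw [R_odd b m]
    simp
  have hsupp : Function.support u ⊆ Set.range (fun m : ℕ => 2*m) := by
    intro j hj
    rcases Nat.even_or_odd j with ⟨m, hm⟩ | ho
    · exact ⟨m, by show 2*m = j; omega⟩
    · exact absurd (hodd j ho) hj
  have hinj : Function.Injective (fun m : ℕ => 2*m) := fun a c h => by
    simpa using h
  rw [← Function.Injective.tsum_eq hinj hsupp]
  have hx : ∀ m : ℕ, u (2*m) = 2 * ∑' n : ℕ, gTerm z b (m, n) := fun m => u_even b z m
  rw [tsum_congr hx, tsum_mul_left,
    ← Summable.tsum_prod' (gTerm_summable z b) (fun m => (gTerm_summable z b).prod_factor m)]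
  ring
end
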